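/- arXiv:1705.01269 — 5 statements merged into one kernel-verified Lean document; each statement's English description precedes it below -/
import Mathlib

section
/- For integers r ≥ 1 and s ≥ 2, ζ(r̄, s) = -(1/(Γ(r)Γ(s))) ∫₀^∞ ∫₀^∞ t^{s-1} u^{r-1} / ((e^t - 1)(e^{t+u} + 1)) du dt. -/
open Filter Finset Real

/-- `zeta k` : the Riemann zeta value `ζ(k) = Σ_{m≥1} 1/m^k`, with the convention `ζ(0) = -1/2`. -/
noncomputable def zeta (k : ℕ) : ℝ :=
  if k = 0 then -1/2 else limUnder atTop (fun N => ∑ m ∈ Finset.range N, 1/((m+1 : ℝ))^k)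

/-- `zetaA k` : the alternating zeta value `ζ(k̄) = Σ_{m≥1} (-1)^m/m^k`,
with the convention `ζ(0̄) = -1/2`. -/
noncomputable def zetaA (k : ℕ) : ℝ :=
  if k = 0 then -1/2 else
    limUnder atTop (fun N => ∑ m ∈ Finset.range N, (-1 : ℝ)^(m+1)/((m+1 : ℝ))^k)

/-- `dzeta r s = ζ(r,s) = Σ_{m≥2} (1/m^s) Σ_{j=1}^{m-1} 1/j^r`. -/
noncomputable def dzeta (r s : ℕ) : ℝ :=
  limUnder atTop (fun N => ∑ m ∈ Finset.range N,
    (1/((m+2 : ℝ))^s) * ∑ j ∈ Finset.range (m+1), 1/((j+1 : ℝ))^r)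

/-- `dzetaA1 r s = ζ(r̄,s) = Σ_{m≥2} (1/m^s) Σ_{j=1}^{m-1} (-1)^j/j^r`. -/
noncomputable def dzetaA1 (r s : ℕ) : ℝ :=
  limUnder atTop (fun N => ∑ m ∈ Finset.range N,
    (1/((m+2 : ℝ))^s) * ∑ j ∈ Finset.range (m+1), (-1 : ℝ)^(j+1)/((j+1 : ℝ))^r)

/-- `dzetaA2 r s = ζ(r,s̄) = Σ_{m≥2} ((-1)^m/m^s) Σ_{j=1}^{m-1} 1/j^r`. -/
noncomputable def dzetaA2 (r s : ℕ) : ℝ :=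
  limUnder atTop (fun N => ∑ m ∈ Finset.range N,
    ((-1 : ℝ)^(m+2)/((m+2 : ℝ))^s) * ∑ j ∈ Finset.range (m+1), 1/((j+1 : ℝ))^r)

/-- `dzetaA3 r s = ζ(r̄,s̄) = Σ_{m≥2} ((-1)^m/m^s) Σ_{j=1}^{m-1} (-1)^j/j^r`. -/
noncomputable def dzetaA3 (r s : ℕ) : ℝ :=
  limUnder atTop (fun N => ∑ m ∈ Finset.range N,
    ((-1 : ℝ)^(m+2)/((m+2 : ℝ))^s) * ∑ j ∈ Finset.range (m+1), (-1 : ℝ)^(j+1)/((j+1 : ℝ))^r)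

open MeasureTheory Set

lemma integrableOn_pow_mul_exp (n : ℕ) {a : ℝ} (ha : 0 < a) :
    IntegrableOn (fun t : ℝ => t ^ n * Real.exp (-(a * t))) (Ioi 0) := by
  have h := integrableOn_rpow_mul_exp_neg_mul_rpow (p := 1) (s := (n : ℝ)) (b := a)
    (by exact_mod_cast neg_one_lt_zero.trans_le (Nat.cast_nonneg n)) zero_lt_one ha
  refine h.congr_fun (fun x hx => ?_) measurableSet_Ioi
  beta_reduce; rw [Real.rpow_one, Real.rpow_natCast, neg_mul]

lemma integral_pow_mul_exp (n : ℕ) {a : ℝ} (ha : 0 < a) :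
    ∫ t in Ioi (0:ℝ), t ^ n * Real.exp (-(a * t)) = (n.factorial : ℝ) / a ^ (n + 1) := by
  have h := integral_rpow_mul_exp_neg_mul_Ioi (a := (n : ℝ) + 1) (r := a)
    (by positivity) ha
  rw [Real.Gamma_nat_eq_factorial,
    show ((n : ℝ) + 1) = ((n + 1 : ℕ) : ℝ) by push_cast; ring, Real.rpow_natCast] at h
  rw [show ∫ t in Ioi (0:ℝ), t ^ n * Real.exp (-(a * t))
      = ∫ t in Ioi (0:ℝ), t ^ (((n + 1 : ℕ) : ℝ) - 1) * Real.exp (-(a * t)) from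
    setIntegral_congr_fun measurableSet_Ioi (fun x hx => by
      rw [show ((n + 1 : ℕ) : ℝ) - 1 = (n : ℝ) by push_cast; ring, Real.rpow_natCast])]
  rw [h, div_pow, one_pow]
  field_simp

lemma exp_summable {t : ℝ} (ht : 0 < t) :
    Summable (fun i : ℕ => Real.exp (-(((i:ℝ) + 1) * t))) := by
  have h1 : ∀ i : ℕ, Real.exp (-(((i:ℝ) + 1) * t)) = Real.exp (-t) ^ i * Real.exp (-t) := by
    intro i
    rw [← Real.exp_nat_mul, ← Real.exp_add]
    ring_nf
  simp_rw [h1]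
  exact (summable_geometric_of_lt_one (Real.exp_nonneg _)
    (Real.exp_lt_one_iff.2 (by linarith))).mul_right _

lemma geom1 {t : ℝ} (ht : 0 < t) :
    ∑' i : ℕ, Real.exp (-(((i:ℝ) + 1) * t)) = 1 / (Real.exp t - 1) := by
  have h1 : ∀ i : ℕ, Real.exp (-(((i:ℝ) + 1) * t)) = Real.exp (-t) ^ i * Real.exp (-t) := by
    intro i
    rw [← Real.exp_nat_mul, ← Real.exp_add]
    ring_nf
  have hlt : Real.exp (-t) < 1 := Real.exp_lt_one_iff.2 (by linarith)
  have h2 : (1:ℝ) < Real.exp t := Real.one_lt_exp_iff.2 ht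
  simp_rw [h1]
  rw [tsum_mul_right, tsum_geometric_of_lt_one (Real.exp_nonneg _) hlt]
  rw [Real.exp_neg]
  have h3 : Real.exp t - 1 ≠ 0 := by linarith
  have h4 : (1 : ℝ) - (Real.exp t)⁻¹ ≠ 0 := by
    have : (Real.exp t)⁻¹ < 1 := by
      rw [← Real.exp_neg]; exact hlt
    linarith
  field_simp

lemma geom2_summable {y : ℝ} (hy : 0 < y) :
    Summable (fun j : ℕ => (-1:ℝ)^j * Real.exp (-(((j:ℝ) + 1) * y))) := by
  apply Summable.of_norm
  have : ∀ j : ℕ, ‖(-1:ℝ)^j * Real.exp (-(((j:ℝ) + 1) * y))‖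
      = Real.exp (-(((j:ℝ) + 1) * y)) := by
    intro j
    rw [norm_mul, norm_pow, norm_neg, norm_one, one_pow, one_mul,
      Real.norm_of_nonneg (Real.exp_nonneg _)]
  simp_rw [this]
  exact exp_summable hy

lemma geom2 {y : ℝ} (hy : 0 < y) :
    ∑' j : ℕ, (-1:ℝ)^j * Real.exp (-(((j:ℝ) + 1) * y)) = 1 / (Real.exp y + 1) := by
  have h1 : ∀ j : ℕ, (-1:ℝ)^j * Real.exp (-(((j:ℝ) + 1) * y))
      = (-Real.exp (-y)) ^ j * Real.exp (-y) := by
    intro j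
    rw [show (-Real.exp (-y))^j = (-1)^j * Real.exp (-y)^j by rw [← neg_one_mul, mul_pow],
      ← Real.exp_nat_mul, mul_assoc, ← Real.exp_add]
    ring_nf
  have hlt : ‖-Real.exp (-y)‖ < 1 := by
    rw [norm_neg, Real.norm_of_nonneg (Real.exp_nonneg _)]
    exact Real.exp_lt_one_iff.2 (by linarith)
  have h2 : (1:ℝ) < Real.exp y := Real.one_lt_exp_iff.2 hy
  simp_rw [h1]
  rw [tsum_mul_right, tsum_geometric_of_norm_lt_one hlt, Real.exp_neg]
  have h3 : Real.exp y + 1 ≠ 0 := by linarith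
  have h4 : (1 : ℝ) - -(Real.exp y)⁻¹ ≠ 0 := by
    have : (0:ℝ) < (Real.exp y)⁻¹ := by positivity
    rw [sub_neg_eq_add]; linarith
  rw [sub_neg_eq_add]
  field_simp

lemma alt_partial_bound (r : ℕ) (n : ℕ) :
    -1 ≤ (∑ j ∈ Finset.range n, (-1:ℝ)^(j+1)/((j+1 : ℝ))^r) ∧
    (∑ j ∈ Finset.range n, (-1:ℝ)^(j+1)/((j+1 : ℝ))^r) ≤ 0 := by
  set S : ℕ → ℝ := fun n => ∑ j ∈ Finset.range n, (-1:ℝ)^(j+1)/((j+1 : ℝ))^r with hS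
  set a : ℕ → ℝ := fun j => 1/((j+1 : ℝ))^r with ha
  have ha0 : ∀ j, 0 ≤ a j := fun j => by positivity
  have ha1 : ∀ j, a (j+1) ≤ a j := by
    intro j
    apply one_div_le_one_div_of_le (by positivity)
    apply pow_le_pow_left₀ (by positivity)
    push_cast; linarith
  have hstep : ∀ n, S (n+1) = S n + (-1:ℝ)^(n+1) * a n := by
    intro n
    simp only [hS, Finset.sum_range_succ, ha]
    ring
  have hodd : ∀ k : ℕ, (-1:ℝ)^(2*k+1) = -1 := fun k => Odd.neg_one_pow ⟨k, by ring⟩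
  have heven : ∀ k : ℕ, (-1:ℝ)^(2*k+2) = 1 := fun k => Even.neg_one_pow ⟨k+1, by ring⟩
  have key : ∀ k : ℕ, -1 ≤ S (2*k+1) ∧ S (2*k+1) ≤ S (2*k) ∧ S (2*k) ≤ 0 := by
    intro k
    induction k with
    | zero =>
      have h0 : S 0 = 0 := by simp [hS]
      have h1 : S 1 = -1 := by
        rw [show (1:ℕ) = 0 + 1 from rfl, hstep, h0]
        simp [ha]
      refine ⟨by rw [h1], by rw [h0, h1]; norm_num, by rw [h0]⟩
    | succ k ih =>
      obtain ⟨ih1, ih2, ih3⟩ := ih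
      have e1 : S (2*(k+1)) = S (2*k+1) + a (2*k+1) := by
        rw [show 2*(k+1) = (2*k+1) + 1 by ring, hstep, heven k]
        ring_nf
      have e2 : S (2*(k+1)+1) = S (2*(k+1)) - a (2*(k+1)) := by
        rw [hstep, show 2*(k+1)+1 = 2*(k+1)+1 from rfl]
        rw [show (-1:ℝ)^(2*(k+1)+1) = -1 from Odd.neg_one_pow ⟨k+1, by ring⟩]
        ring
      have hS2k1 : S (2*k+1) = S (2*k) - a (2*k) := by
        rw [hstep, hodd k]; ring
      have hb1 : S (2*(k+1)) ≤ 0 := by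
        rw [e1, hS2k1]
        have := ha1 (2*k)
        have : a (2*k+1) ≤ a (2*k) := ha1 (2*k)
        linarith
      have hb2 : S (2*(k+1)+1) ≤ S (2*(k+1)) := by
        rw [e2]; have := ha0 (2*(k+1)); linarith
      have hb3 : -1 ≤ S (2*(k+1)+1) := by
        rw [e2, e1]
        have h5 : a (2*(k+1)) ≤ a (2*k+1) := by
          have := ha1 (2*k+1)
          rwa [show 2*k+1+1 = 2*(k+1) by ring] at this
        linarith
      exact ⟨hb3, hb2, hb1⟩
  rcases Nat.even_or_odd n with ⟨k, hk⟩ | ⟨k, hk⟩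
  · have := key k
    rw [show n = 2*k by omega]
    exact ⟨le_trans this.1 this.2.1, this.2.2⟩
  · have := key k
    rw [show n = 2*k+1 by omega]
    exact ⟨this.1, le_trans this.2.1 this.2.2⟩

lemma tail_summable (c : ℕ) {s : ℕ} (hs : 2 ≤ s) :
    Summable (fun i : ℕ => 1/((i : ℝ) + (c : ℝ) + 2)^s) ∧
    ∑' i : ℕ, 1/((i : ℝ) + (c : ℝ) + 2)^s ≤ 1/((c : ℝ) + 1) := by
  have hterm : ∀ i : ℕ, 1/((i : ℝ) + (c : ℝ) + 2)^s
      ≤ 1/((i : ℝ) + (c : ℝ) + 1) - 1/(((i:ℕ)+1 : ℝ) + (c : ℝ) + 1) := by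
    intro i
    have hd : (0:ℝ) < (i : ℝ) + (c : ℝ) + 1 := by positivity
    have heq : 1/((i : ℝ) + (c : ℝ) + 1) - 1/(((i:ℕ)+1 : ℝ) + (c : ℝ) + 1)
        = 1/(((i : ℝ) + (c : ℝ) + 1) * ((i : ℝ) + (c : ℝ) + 2)) := by
      push_cast
      rw [div_sub_div _ _ (by positivity) (by positivity),
        div_eq_div_iff (by positivity) (by positivity)]
      ring
    rw [heq]
    have h2 : ((i : ℝ) + (c : ℝ) + 1) * ((i : ℝ) + (c : ℝ) + 2)
        ≤ ((i : ℝ) + (c : ℝ) + 2)^s := by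
      calc ((i : ℝ) + (c : ℝ) + 1) * ((i : ℝ) + (c : ℝ) + 2)
          ≤ ((i : ℝ) + (c : ℝ) + 2)^2 := by nlinarith
        _ ≤ ((i : ℝ) + (c : ℝ) + 2)^s := by
            apply pow_le_pow_right₀ (by linarith) hs
    exact one_div_le_one_div_of_le (by positivity) h2
  have hpsum : ∀ n : ℕ, ∑ i ∈ Finset.range n, 1/((i : ℝ) + (c : ℝ) + 2)^s
      ≤ 1/((c : ℝ) + 1) := by
    intro n
    calc ∑ i ∈ Finset.range n, 1/((i : ℝ) + (c : ℝ) + 2)^s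
        ≤ ∑ i ∈ Finset.range n,
            (1/((i : ℝ) + (c : ℝ) + 1) - 1/(((i:ℕ)+1 : ℝ) + (c : ℝ) + 1)) :=
          Finset.sum_le_sum (fun i _ => hterm i)
      _ = 1/(((0:ℕ):ℝ) + (c : ℝ) + 1) - 1/((n : ℝ) + (c : ℝ) + 1) := by
          rw [← Finset.sum_range_sub' (fun m : ℕ => 1/((m : ℝ) + (c : ℝ) + 1)) n]
          refine Finset.sum_congr rfl fun i _ => ?_
          push_cast; ring
      _ ≤ 1/((c : ℝ) + 1) := by
          have : (0:ℝ) ≤ 1/((n : ℝ) + (c : ℝ) + 1) := by positivity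
          rw [show (((0:ℕ):ℝ) + (c:ℝ) + 1) = (c:ℝ) + 1 by push_cast; ring]
          linarith
  have hnn : ∀ i : ℕ, (0:ℝ) ≤ 1/((i : ℝ) + (c : ℝ) + 2)^s := fun i => by positivity
  exact ⟨summable_of_sum_range_le hnn hpsum, Real.tsum_le_of_sum_range_le hnn hpsum⟩

lemma core_integral (r : ℕ) (hr : 1 ≤ r) {t a : ℝ} (ha : 0 < a) :
    ∫ u in Ioi (0:ℝ), Real.exp (-(a*(t+u))) * u^(r-1)
      = Real.exp (-(a * t)) * ((r-1).factorial / a^r) := by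
  have heq : ∀ u : ℝ, Real.exp (-(a*(t+u))) * u^(r-1)
      = Real.exp (-(a*t)) * (u^(r-1) * Real.exp (-(a*u))) := by
    intro u
    rw [show -(a*(t+u)) = (-(a*t)) + (-(a*u)) by ring, Real.exp_add]
    ring
  simp_rw [heq]
  rw [integral_const_mul, integral_pow_mul_exp (r-1) ha,
    Nat.sub_add_cancel hr]

lemma core_integrable (r : ℕ) {t a : ℝ} (ha : 0 < a) :
    IntegrableOn (fun u : ℝ => Real.exp (-(a*(t+u))) * u^(r-1)) (Ioi 0) := by
  have heq : ∀ u : ℝ, Real.exp (-(a*(t+u))) * u^(r-1)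
      = Real.exp (-(a*t)) * (u^(r-1) * Real.exp (-(a*u))) := by
    intro u
    rw [show -(a*(t+u)) = (-(a*t)) + (-(a*u)) by ring, Real.exp_add]
    ring
  simp_rw [heq]
  exact (integrableOn_pow_mul_exp (r-1) ha).const_mul _

lemma inner_integral (r : ℕ) (hr : 1 ≤ r) {t : ℝ} (ht : 0 < t) :
    ∫ u in Ioi (0:ℝ), u^(r-1) / (Real.exp (t+u) + 1)
      = ∑' j : ℕ, (-1:ℝ)^j * Real.exp (-(((j:ℝ)+1) * t)) * (((r-1).factorial : ℝ) / ((j:ℝ)+1)^r) := by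
  set F : ℕ → ℝ → ℝ :=
    fun j u => (-1:ℝ)^j * (Real.exp (-(((j:ℝ)+1)*(t+u))) * u^(r-1)) with hF
  have hj1 : ∀ j : ℕ, (0:ℝ) < (j:ℝ) + 1 := fun j => by positivity
  have hint : ∀ j : ℕ, Integrable (F j) (volume.restrict (Ioi 0)) :=
    fun j => (core_integrable r (hj1 j)).const_mul _
  have hnorm : ∀ j : ℕ, (∫ u in Ioi (0:ℝ), ‖F j u‖)
      = Real.exp (-(((j:ℝ)+1) * t)) * (((r-1).factorial : ℝ) / ((j:ℝ)+1)^r) := by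
    intro j
    have he : ∫ u in Ioi (0:ℝ), ‖F j u‖
        = ∫ u in Ioi (0:ℝ), Real.exp (-(((j:ℝ)+1)*(t+u))) * u^(r-1) := by
      apply setIntegral_congr_fun measurableSet_Ioi
      intro u hu
      simp only [hF, norm_mul, norm_pow, norm_neg, norm_one, one_pow, one_mul,
        Real.norm_of_nonneg (Real.exp_nonneg _),
        Real.norm_of_nonneg (le_of_lt (pow_pos (mem_Ioi.mp hu) (r-1)))]
    rw [he, core_integral r hr (hj1 j)]
  have hsum : Summable (fun j : ℕ => ∫ u in Ioi (0:ℝ), ‖F j u‖) := by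
    simp_rw [hnorm]
    apply Summable.of_nonneg_of_le (fun j => by positivity)
      (fun j => ?_) ((exp_summable ht).mul_right ((r-1).factorial : ℝ))
    have h1 : ((r-1).factorial : ℝ) / ((j:ℝ)+1)^r ≤ ((r-1).factorial : ℝ) := by
      apply div_le_self (by positivity)
      apply one_le_pow₀
      linarith [Nat.cast_nonneg (α := ℝ) j]
    have h2 : (0:ℝ) ≤ Real.exp (-(((j:ℝ)+1) * t)) := Real.exp_nonneg _
    exact mul_le_mul_of_nonneg_left h1 h2
  have hswap := MeasureTheory.integral_tsum_of_summable_integral_norm hint hsum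
  have hpt : ∀ u : ℝ, u ∈ Ioi (0:ℝ) →
      (∑' j : ℕ, F j u) = u^(r-1) / (Real.exp (t+u) + 1) := by
    intro u hu
    have htu : 0 < t + u := by
      have := mem_Ioi.mp hu; linarith
    have : ∀ j : ℕ, F j u
        = ((-1:ℝ)^j * Real.exp (-(((j:ℝ)+1)*(t+u)))) * u^(r-1) := by
      intro j; simp only [hF]; ring
    simp_rw [this]
    rw [tsum_mul_right, geom2 htu]
    ring
  calc ∫ u in Ioi (0:ℝ), u^(r-1) / (Real.exp (t+u) + 1)
      = ∫ u in Ioi (0:ℝ), (∑' j : ℕ, F j u) :=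
        (setIntegral_congr_fun measurableSet_Ioi hpt).symm
    _ = ∑' j : ℕ, ∫ u in Ioi (0:ℝ), F j u := hswap.symm
    _ = ∑' j : ℕ, (-1:ℝ)^j * Real.exp (-(((j:ℝ)+1) * t)) * (((r-1).factorial : ℝ) / ((j:ℝ)+1)^r) := by
        refine tsum_congr fun j => ?_
        simp only [hF]
        rw [integral_const_mul, core_integral r hr (hj1 j)]
        ring

lemma summable_one_div_succ_sq : Summable (fun j : ℕ => 1/((j:ℝ)+1)^2) := by
  have h := summable_one_div_nat_pow.mpr (le_refl 2)
  have h2 := h.comp_injective Nat.succ_injective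
  refine h2.congr fun j => ?_
  simp only [Function.comp, Nat.succ_eq_add_one]
  push_cast
  ring_nf

lemma babs_summable (r s : ℕ) (hr : 1 ≤ r) (hs : 2 ≤ s) :
    Summable (fun p : ℕ × ℕ =>
      1 / ((((p.1:ℝ) + (p.2:ℝ) + 2))^s * ((p.1:ℝ)+1)^r)) := by
  have hnn : (0 : ℕ × ℕ → ℝ) ≤ (fun p : ℕ × ℕ =>
      1 / ((((p.1:ℝ) + (p.2:ℝ) + 2))^s * ((p.1:ℝ)+1)^r)) := fun p => by positivity
  rw [summable_prod_of_nonneg hnn]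
  constructor
  · intro j
    have h := (tail_summable j hs).1
    refine (h.mul_right (1/((j:ℝ)+1)^r)).congr fun i => ?_
    simp only
    rw [div_mul_div_comm, one_mul, show ((j:ℝ) + (i:ℝ) + 2) = ((i:ℝ) + (j:ℝ) + 2) by ring]
  · apply Summable.of_nonneg_of_le (fun j => tsum_nonneg fun i => by positivity)
      (fun j => ?_) (summable_one_div_succ_sq)
    have hrow : ∀ i : ℕ, (fun i : ℕ => 1 / ((((j:ℝ) + (i:ℝ) + 2))^s * ((j:ℝ)+1)^r)) i
        = (1 / (((i:ℝ) + (j:ℝ) + 2))^s) * (1/((j:ℝ)+1)^r) := by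
      intro i
      simp only
      rw [div_mul_div_comm, one_mul, show ((i:ℝ) + (j:ℝ) + 2) = ((j:ℝ) + (i:ℝ) + 2) by ring]
    calc ∑' i : ℕ, 1 / ((((j:ℝ) + (i:ℝ) + 2))^s * ((j:ℝ)+1)^r)
        = (∑' i : ℕ, 1 / (((i:ℝ) + (j:ℝ) + 2))^s) * (1/((j:ℝ)+1)^r) := by
          rw [← tsum_mul_right]; exact tsum_congr hrow
      _ ≤ (1/((j:ℝ)+1)) * (1/((j:ℝ)+1)^r) := by
          apply mul_le_mul_of_nonneg_right (tail_summable j hs).2 (by positivity)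
      _ ≤ 1/((j:ℝ)+1)^2 := by
          rw [div_mul_div_comm, one_mul]
          apply one_div_le_one_div_of_le (by positivity)
          calc ((j:ℝ)+1)^2 = ((j:ℝ)+1) * ((j:ℝ)+1)^1 := by ring
            _ ≤ ((j:ℝ)+1) * ((j:ℝ)+1)^r := by
                apply mul_le_mul_of_nonneg_left _ (by positivity)
                apply pow_le_pow_right₀ (by linarith [Nat.cast_nonneg (α := ℝ) j]) hr

lemma series_side (r s : ℕ) (hr : 1 ≤ r) (hs : 2 ≤ s) :
    dzetaA1 r s = -∑' p : ℕ × ℕ,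
      (-1:ℝ)^p.1 / ((((p.1:ℝ) + (p.2:ℝ) + 2))^s * ((p.1:ℝ)+1)^r) := by
  set b : ℕ × ℕ → ℝ := fun p =>
    (-1:ℝ)^p.1 / ((((p.1:ℝ) + (p.2:ℝ) + 2))^s * ((p.1:ℝ)+1)^r) with hbdef
  set f : ℕ × ℕ → ℝ := fun q =>
    if q.2 ≤ q.1 then (-1:ℝ)^q.2 / ((((q.1:ℝ)+2))^s * ((q.2:ℝ)+1)^r) else 0 with hfdef
  set T : ℕ → ℝ := fun m =>
    (1/((m+2 : ℝ))^s) * ∑ j ∈ Finset.range (m+1), (-1 : ℝ)^(j+1)/((j+1 : ℝ))^r with hTdef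
  have hb_sum : Summable b := by
    apply Summable.of_norm
    refine (babs_summable r s hr hs).congr fun p => ?_
    rw [hbdef]
    simp only
    rw [Real.norm_eq_abs, abs_div, abs_pow, abs_neg, abs_one, one_pow,
      abs_of_pos (by positivity)]
  set ι : ℕ × ℕ → ℕ × ℕ := fun p => (p.2 + p.1, p.1) with hidef
  have hinj : Function.Injective ι := by
    intro p q h
    have h1 := congrArg Prod.fst h
    have h2 := congrArg Prod.snd h
    simp only [hidef] at h1 h2
    exact Prod.ext (by omega) (by omega)
  have hcomp : ∀ p : ℕ × ℕ, f (ι p) = b p := by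
    intro p
    simp only [hfdef, hidef, hbdef]
    rw [if_pos (Nat.le_add_left p.1 p.2)]
    push_cast
    ring_nf
  have hsupp : Function.support f ⊆ Set.range ι := by
    intro q hq
    by_cases hle : q.2 ≤ q.1
    · refine ⟨(q.2, q.1 - q.2), ?_⟩
      simp only [hidef]
      exact Prod.ext (by simp; omega) (by simp)
    · exact absurd (by simp [hfdef, if_neg hle]) hq
  have hfsum : Summable f := by
    rw [← hinj.summable_iff (fun x hx => Function.notMem_support.mp (fun h => hx (hsupp h)))]
    exact hb_sum.congr fun p => (hcomp p).symm
  have htsum_fb : ∑' q, f q = ∑' p, b p := by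
    rw [← hinj.tsum_eq hsupp]
    exact tsum_congr hcomp
  have hrowsum : ∀ m : ℕ, Summable (fun j => f (m, j)) := by
    intro m
    apply summable_of_ne_finset_zero (s := Finset.range (m+1))
    intro j hj
    simp only [hfdef]
    rw [if_neg (by simp at hj; omega)]
  have hrow : ∀ m : ℕ, ∑' j : ℕ, f (m, j)
      = ∑ j ∈ Finset.range (m+1), (-1:ℝ)^j / ((((m:ℝ)+2))^s * ((j:ℝ)+1)^r) := by
    intro m
    rw [tsum_eq_sum (s := Finset.range (m+1))
      (fun j hj => by simp only [hfdef]; rw [if_neg (by simp at hj; omega)])]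
    refine Finset.sum_congr rfl fun j hj => ?_
    simp only [hfdef]
    rw [if_pos (by simp at hj; omega)]
  have hterm : ∀ m : ℕ, T m = -∑' j : ℕ, f (m, j) := by
    intro m
    rw [hrow, hTdef]
    simp only
    rw [Finset.mul_sum, ← Finset.sum_neg_distrib]
    refine Finset.sum_congr rfl fun j hj => ?_
    rw [pow_succ]
    push_cast
    ring
  have hT_sum : Summable T := by
    apply Summable.of_norm_bounded (g := fun m : ℕ => 1/((m:ℝ)+2)^s)
    · have h := (tail_summable 0 hs).1
      refine h.congr fun m => ?_
      norm_num
    · intro m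
      rw [hTdef]
      simp only
      rw [norm_mul]
      have h1 : ‖(1:ℝ)/((m:ℝ)+2)^s‖ = 1/((m:ℝ)+2)^s := by
        rw [Real.norm_eq_abs, abs_of_pos (by positivity)]
      have h2 : ‖∑ j ∈ Finset.range (m+1), (-1 : ℝ)^(j+1)/((j+1 : ℝ))^r‖ ≤ 1 := by
        rw [Real.norm_eq_abs, abs_le]
        obtain ⟨hL, hU⟩ := alt_partial_bound r (m+1)
        exact ⟨hL, le_trans hU zero_le_one⟩
      calc ‖(1:ℝ)/((m:ℝ)+2)^s‖ * ‖∑ j ∈ Finset.range (m+1), (-1 : ℝ)^(j+1)/((j+1 : ℝ))^r‖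
          ≤ ‖(1:ℝ)/((m:ℝ)+2)^s‖ * 1 := by
            apply mul_le_mul_of_nonneg_left h2 (norm_nonneg _)
        _ = 1/((m:ℝ)+2)^s := by rw [mul_one, h1]
  have hlim : dzetaA1 r s = ∑' m : ℕ, T m := by
    rw [dzetaA1]
    exact (hT_sum.hasSum.tendsto_sum_nat).limUnder_eq
  rw [hlim, tsum_congr hterm, tsum_neg, ← htsum_fb,
    hfsum.tsum_prod' hrowsum]

lemma A_norm_summable (r : ℕ) {t : ℝ} (ht : 0 < t) :
    Summable (fun j : ℕ =>
      ‖(-1:ℝ)^j * Real.exp (-(((j:ℝ)+1) * t)) * (((r-1).factorial : ℝ) / ((j:ℝ)+1)^r)‖) := by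
  apply Summable.of_nonneg_of_le (fun j => norm_nonneg _)
    (fun j => ?_) ((exp_summable ht).mul_right ((r-1).factorial : ℝ))
  rw [norm_mul, norm_mul, norm_pow, norm_neg, norm_one, one_pow, one_mul,
    Real.norm_of_nonneg (Real.exp_nonneg _), Real.norm_of_nonneg (by positivity)]
  have h1 : ((r-1).factorial : ℝ) / ((j:ℝ)+1)^r ≤ ((r-1).factorial : ℝ) := by
    apply div_le_self (by positivity)
    apply one_le_pow₀
    linarith [Nat.cast_nonneg (α := ℝ) j]
  exact mul_le_mul_of_nonneg_left h1 (Real.exp_nonneg _)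

lemma inner_full (r s : ℕ) (hr : 1 ≤ r) {t : ℝ} (ht : 0 < t) :
    ∫ u in Ioi (0:ℝ), t^(s-1) * u^(r-1) / ((Real.exp t - 1) * (Real.exp (t+u) + 1))
      = ∑' p : ℕ × ℕ, ((-1:ℝ)^p.1 * (((r-1).factorial : ℝ) / ((p.1:ℝ)+1)^r)) *
          (t^(s-1) * Real.exp (-(((p.1:ℝ)+(p.2:ℝ)+2) * t))) := by
  set A : ℕ → ℝ := fun j =>
    (-1:ℝ)^j * Real.exp (-(((j:ℝ)+1) * t)) * (((r-1).factorial : ℝ) / ((j:ℝ)+1)^r) with hA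
  set B : ℕ → ℝ := fun i => Real.exp (-(((i:ℝ)+1) * t)) with hB
  have hBnorm : Summable (fun i => ‖B i‖) := by
    refine (exp_summable ht).congr fun i => ?_
    rw [hB]
    simp only
    rw [Real.norm_of_nonneg (Real.exp_nonneg _)]
  have step1 : ∫ u in Ioi (0:ℝ), t^(s-1) * u^(r-1) / ((Real.exp t - 1) * (Real.exp (t+u) + 1))
      = (t^(s-1) / (Real.exp t - 1)) * ∫ u in Ioi (0:ℝ), u^(r-1) / (Real.exp (t+u) + 1) := by
    rw [← integral_const_mul]
    apply setIntegral_congr_fun measurableSet_Ioi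
    intro u hu
    simp only
    rw [div_mul_div_comm]
  rw [step1, inner_integral r hr ht]
  have step2 : t^(s-1) / (Real.exp t - 1) = t^(s-1) * ∑' i : ℕ, B i := by
    rw [hB]
    simp only
    rw [geom1 ht]
    ring
  rw [step2]
  have step3 : (∑' j : ℕ, A j) * (∑' i : ℕ, B i)
      = ∑' p : ℕ × ℕ, A p.1 * B p.2 :=
    tsum_mul_tsum_of_summable_norm (A_norm_summable r ht) hBnorm
  calc t^(s-1) * (∑' i : ℕ, B i) * (∑' j : ℕ, A j)
      = t^(s-1) * ((∑' j : ℕ, A j) * (∑' i : ℕ, B i)) := by ring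
    _ = t^(s-1) * ∑' p : ℕ × ℕ, A p.1 * B p.2 := by rw [step3]
    _ = ∑' p : ℕ × ℕ, t^(s-1) * (A p.1 * B p.2) := tsum_mul_left.symm
    _ = ∑' p : ℕ × ℕ, ((-1:ℝ)^p.1 * (((r-1).factorial : ℝ) / ((p.1:ℝ)+1)^r)) *
          (t^(s-1) * Real.exp (-(((p.1:ℝ)+(p.2:ℝ)+2) * t))) := by
        refine tsum_congr fun p => ?_
        rw [hA, hB]
        simp only
        rw [show ((-1:ℝ)^p.1 * Real.exp (-(((p.1:ℝ)+1) * t)) * (((r-1).factorial : ℝ) / ((p.1:ℝ)+1)^r))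
            * Real.exp (-(((p.2:ℝ)+1) * t))
            = ((-1:ℝ)^p.1 * (((r-1).factorial : ℝ) / ((p.1:ℝ)+1)^r))
              * (Real.exp (-(((p.1:ℝ)+1) * t)) * Real.exp (-(((p.2:ℝ)+1) * t))) by ring,
          ← Real.exp_add,
          show (-(((p.1:ℝ)+1) * t)) + (-(((p.2:ℝ)+1) * t)) = -(((p.1:ℝ)+(p.2:ℝ)+2) * t) by ring]
        ring

lemma outer_integral (r s : ℕ) (hr : 1 ≤ r) (hs : 2 ≤ s) :
    ∫ t in Ioi (0:ℝ), (∑' p : ℕ × ℕ, ((-1:ℝ)^p.1 * (((r-1).factorial : ℝ) / ((p.1:ℝ)+1)^r)) *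
          (t^(s-1) * Real.exp (-(((p.1:ℝ)+(p.2:ℝ)+2) * t))))
      = ((r-1).factorial * (s-1).factorial : ℝ) *
        ∑' p : ℕ × ℕ, (-1:ℝ)^p.1 / ((((p.1:ℝ) + (p.2:ℝ) + 2))^s * ((p.1:ℝ)+1)^r) := by
  have hs1 : 1 ≤ s := le_trans (by norm_num) hs
  set cc : ℕ × ℕ → ℝ := fun p => (-1:ℝ)^p.1 * (((r-1).factorial : ℝ) / ((p.1:ℝ)+1)^r)
    with hcc
  set mr : ℕ × ℕ → ℝ := fun p => (p.1:ℝ) + (p.2:ℝ) + 2 with hmr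
  have hmrpos : ∀ p : ℕ × ℕ, 0 < mr p := fun p => by rw [hmr]; positivity
  set G : ℕ × ℕ → ℝ → ℝ := fun p t => cc p * (t^(s-1) * Real.exp (-(mr p * t))) with hG
  have hint : ∀ p : ℕ × ℕ, Integrable (G p) (volume.restrict (Ioi 0)) := by
    intro p
    exact ((integrableOn_pow_mul_exp (s-1) (hmrpos p)).const_mul _)
  have habs : ∀ p : ℕ × ℕ, |cc p| = ((r-1).factorial : ℝ) / ((p.1:ℝ)+1)^r := by
    intro p
    rw [hcc]
    simp only
    rw [abs_mul, abs_pow, abs_neg, abs_one, one_pow, one_mul, abs_of_pos (by positivity)]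
  have hGnorm : ∀ p : ℕ × ℕ, (∫ t in Ioi (0:ℝ), ‖G p t‖)
      = |cc p| * (((s-1).factorial : ℝ) / (mr p)^s) := by
    intro p
    have he : ∫ t in Ioi (0:ℝ), ‖G p t‖
        = ∫ t in Ioi (0:ℝ), |cc p| * (t^(s-1) * Real.exp (-(mr p * t))) := by
      apply setIntegral_congr_fun measurableSet_Ioi
      intro t htt
      simp only [hG]
      rw [norm_mul, Real.norm_eq_abs, Real.norm_of_nonneg
        (mul_nonneg (le_of_lt (pow_pos (mem_Ioi.mp htt) (s-1))) (Real.exp_nonneg _))]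
    rw [he, integral_const_mul, integral_pow_mul_exp (s-1) (hmrpos p),
      Nat.sub_add_cancel hs1]
  have hsum : Summable (fun p : ℕ × ℕ => ∫ t in Ioi (0:ℝ), ‖G p t‖) := by
    simp_rw [hGnorm]
    have := (babs_summable r s hr hs).mul_left
      (((r-1).factorial : ℝ) * ((s-1).factorial : ℝ))
    refine this.congr fun p => ?_
    rw [habs p, hmr]
    simp only
    field_simp
  have hswap := MeasureTheory.integral_tsum_of_summable_integral_norm hint hsum
  rw [← hswap]
  have hval : ∀ p : ℕ × ℕ, (∫ t in Ioi (0:ℝ), G p t)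
      = ((r-1).factorial * (s-1).factorial : ℝ) *
        ((-1:ℝ)^p.1 / ((((p.1:ℝ) + (p.2:ℝ) + 2))^s * ((p.1:ℝ)+1)^r)) := by
    intro p
    rw [hG]
    simp only
    rw [integral_const_mul, integral_pow_mul_exp (s-1) (hmrpos p), Nat.sub_add_cancel hs1,
      hcc, hmr]
    simp only
    field_simp
  rw [tsum_congr hval, tsum_mul_left]

theorem dzetaA1_integral (r s : ℕ) (hr : 1 ≤ r) (hs : 2 ≤ s) :
    dzetaA1 r s = -(1/(Real.Gamma r * Real.Gamma s)) *
      ∫ t in Set.Ioi (0 : ℝ), ∫ u in Set.Ioi (0 : ℝ),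
        t^(s-1) * u^(r-1) / ((Real.exp t - 1) * (Real.exp (t + u) + 1)) := by
  have hs1 : 1 ≤ s := le_trans (by norm_num) hs
  have houter : (∫ t in Set.Ioi (0:ℝ), ∫ u in Set.Ioi (0:ℝ),
      t^(s-1) * u^(r-1) / ((Real.exp t - 1) * (Real.exp (t+u) + 1)))
      = ((r-1).factorial * (s-1).factorial : ℝ) *
        ∑' p : ℕ × ℕ, (-1:ℝ)^p.1 / ((((p.1:ℝ) + (p.2:ℝ) + 2))^s * ((p.1:ℝ)+1)^r) := by
    rw [← outer_integral r s hr hs]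
    apply setIntegral_congr_fun measurableSet_Ioi
    intro t htt
    exact inner_full r s hr (mem_Ioi.mp htt)
  rw [houter, series_side r s hr hs]
  have hGr : Real.Gamma (r:ℝ) = ((r-1).factorial : ℝ) := by
    rw [show (r:ℝ) = ((r-1:ℕ):ℝ) + 1 by rw [Nat.cast_sub hr]; push_cast; ring]
    exact Real.Gamma_nat_eq_factorial (r-1)
  have hGs : Real.Gamma (s:ℝ) = ((s-1).factorial : ℝ) := by
    rw [show (s:ℝ) = ((s-1:ℕ):ℝ) + 1 by rw [Nat.cast_sub hs1]; push_cast; ring]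
    exact Real.Gamma_nat_eq_factorial (s-1)
  rw [hGr, hGs]
  have h1 : ((r-1).factorial : ℝ) ≠ 0 := Nat.cast_ne_zero.mpr (Nat.factorial_ne_zero _)
  have h2 : ((s-1).factorial : ℝ) ≠ 0 := Nat.cast_ne_zero.mpr (Nat.factorial_ne_zero _)
  field_simp
end

section
/- For integers r ≥ 1 and s ≥ 1, ζ(r, s̄) = (1/(Γ(r)Γ(s))) ∫₀^∞ ∫₀^∞ t^{s-1} u^{r-1} / ((e^t + 1)(e^{t+u} + 1)) du dt. -/
open Filter Finset Real

open MeasureTheory Set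



private lemma altgeom (x : ℝ) (N : ℕ) :
    (1+x) * ∑ n ∈ Finset.range N, (-1:ℝ)^n * x^(n+1) = x - (-1)^N * x^(N+1) := by
  induction N with
  | zero => simp
  | succ n ih => rw [Finset.sum_range_succ, mul_add, ih]; ring

private lemma AN_eq {x : ℝ} (hx : 0 < x) (N : ℕ) :
    ∑ n ∈ Finset.range N, (-1:ℝ)^n * x^(n+1) = (x - (-1)^N * x^(N+1))/(1+x) := by
  rw [eq_div_iff (by positivity), mul_comm, altgeom]

private lemma sign_pow_abs {x : ℝ} (hx : 0 < x) (N : ℕ) :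
    |(-1:ℝ)^N * x^(N+1)| = x^(N+1) := by
  rw [abs_mul, abs_pow, abs_neg, abs_one, one_pow, one_mul, abs_pow, abs_of_pos hx]

private lemma AN_nonneg {x : ℝ} (hx0 : 0 < x) (hx1 : x ≤ 1) (N : ℕ) :
    0 ≤ ∑ n ∈ Finset.range N, (-1:ℝ)^n * x^(n+1) := by
  rw [AN_eq hx0]
  have h1 : x^(N+1) ≤ x := by
    calc x^(N+1) ≤ x^1 := pow_le_pow_of_le_one hx0.le hx1 (by omega)
    _ = x := pow_one x
  have h2 := abs_le.mp (le_of_eq (sign_pow_abs hx0 N))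
  apply div_nonneg (by linarith) (by linarith)

private lemma AN_le {x : ℝ} (hx0 : 0 < x) (hx1 : x ≤ 1) (N : ℕ) :
    ∑ n ∈ Finset.range N, (-1:ℝ)^n * x^(n+1) ≤ x := by
  rw [AN_eq hx0, div_le_iff₀ (by linarith)]
  rcases N with _ | M
  · simp; nlinarith
  · have h1 : x^(M+1+1) ≤ x^2 := pow_le_pow_of_le_one hx0.le hx1 (by omega)
    have h2 := abs_le.mp (le_of_eq (sign_pow_abs hx0 (M+1)))
    nlinarith

private lemma AN_err {x : ℝ} (hx0 : 0 < x) (N : ℕ) :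
    |x/(1+x) - ∑ n ∈ Finset.range N, (-1:ℝ)^n * x^(n+1)| ≤ x^(N+1) := by
  rw [AN_eq hx0]
  have hd : (0:ℝ) < 1 + x := by linarith
  rw [div_sub_div_same, show x - (x - (-1:ℝ)^N * x^(N+1)) = (-1:ℝ)^N * x^(N+1) by ring,
    abs_div, abs_of_pos hd, sign_pow_abs hx0]
  rw [div_le_iff₀ hd]
  nlinarith [pow_pos hx0 (N+1)]

private lemma Gval (k : ℕ) {a : ℝ} (ha : 0 < a) :
    ∫ t in Ioi (0:ℝ), t^k * Real.exp (-(a*t)) = (Nat.factorial k : ℝ) / a^(k+1) := by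
  have h1 : ∫ t in Ioi (0:ℝ), t^k * Real.exp (-(a*t))
      = ∫ t in Ioi (0:ℝ), t ^ (((k:ℝ)+1)-1) * Real.exp (-(a*t)) := by
    refine setIntegral_congr_fun measurableSet_Ioi (fun t ht => ?_)
    rw [show ((k:ℝ)+1)-1 = (k:ℝ) by ring, Real.rpow_natCast]
  rw [h1, Real.integral_rpow_mul_exp_neg_mul_Ioi (by positivity) ha,
    show ((k:ℝ)+1) = ((k+1:ℕ):ℝ) by push_cast; ring, Real.rpow_natCast,
    show ((k+1:ℕ):ℝ) = (k:ℝ)+1 by push_cast; ring, Real.Gamma_nat_eq_factorial]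
  rw [div_pow, one_pow]
  ring

private lemma Gint (k : ℕ) {a : ℝ} (ha : 0 < a) :
    IntegrableOn (fun t => t^k * Real.exp (-(a*t))) (Set.Ioi (0:ℝ)) := by
  have h := integrableOn_rpow_mul_exp_neg_mul_rpow (s := (k:ℝ)) (p := 1) (b := a)
    (by exact_mod_cast neg_one_lt_zero.trans_le (Nat.cast_nonneg k)) zero_lt_one ha
  refine h.congr_fun (fun x hx => ?_) measurableSet_Ioi
  beta_reduce
  rw [Real.rpow_one, Real.rpow_natCast, neg_mul]

private noncomputable def PP (N : ℕ) (t : ℝ) : ℝ :=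
  ∑ n ∈ Finset.range N, (-1:ℝ)^n * Real.exp (-(((n:ℝ)+1) * t))

private lemma exp_pow_form (t : ℝ) (n : ℕ) :
    Real.exp (-(((n:ℝ)+1) * t)) = (Real.exp (-t))^(n+1) := by
  rw [← Real.exp_nat_mul]
  congr 1
  push_cast; ring

private lemma PP_eq (N : ℕ) (t : ℝ) :
    PP N t = ∑ n ∈ Finset.range N, (-1:ℝ)^n * (Real.exp (-t))^(n+1) := by
  refine Finset.sum_congr rfl fun n _ => ?_
  rw [exp_pow_form]

private lemma inv_exp_form (t : ℝ) :
    1/(Real.exp t + 1) = Real.exp (-t)/(1 + Real.exp (-t)) := by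
  rw [Real.exp_neg]
  have h := Real.exp_pos t
  field_simp

private lemma PP_nonneg (N : ℕ) {t : ℝ} (ht : 0 < t) : 0 ≤ PP N t := by
  rw [PP_eq]
  exact AN_nonneg (Real.exp_pos _) (Real.exp_le_one_iff.mpr (by linarith)) N

private lemma PP_le (N : ℕ) {t : ℝ} (ht : 0 < t) : PP N t ≤ Real.exp (-t) := by
  rw [PP_eq]
  exact AN_le (Real.exp_pos _) (Real.exp_le_one_iff.mpr (by linarith)) N

private lemma PP_err (N : ℕ) {t : ℝ} (ht : 0 < t) :
    |1/(Real.exp t + 1) - PP N t| ≤ Real.exp (-(((N:ℝ)+1) * t)) := by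
  rw [inv_exp_form, PP_eq, exp_pow_form]
  exact AN_err (Real.exp_pos _) N

private lemma prod_err {a b pa pb x y xN yN : ℝ} (ha0 : 0 ≤ a) (hax : a ≤ x)
    (hpb0 : 0 ≤ pb) (hpby : pb ≤ y) (hae : |a - pa| ≤ xN) (hbe : |b - pb| ≤ yN)
    (hx0 : 0 ≤ x) (hy0 : 0 ≤ y) :
    |a*b - pa*pb| ≤ x*yN + y*xN := by
  have h : a*b - pa*pb = a*(b-pb) + pb*(a-pa) := by ring
  rw [h]
  calc |a*(b-pb) + pb*(a-pa)| ≤ |a*(b-pb)| + |pb*(a-pa)| := abs_add_le _ _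
    _ = a*|b-pb| + pb*|a-pa| := by
        rw [abs_mul, abs_mul, abs_of_nonneg ha0, abs_of_nonneg hpb0]
    _ ≤ x*yN + y*xN :=
        add_le_add (mul_le_mul hax hbe (abs_nonneg _) hx0)
          (mul_le_mul hpby hae (abs_nonneg _) hy0)

private noncomputable def Fi (S R : ℕ) (t u : ℝ) : ℝ :=
  t^S * u^R / ((Real.exp t + 1) * (Real.exp (t+u) + 1))

private noncomputable def Hi (S R N : ℕ) (t u : ℝ) : ℝ :=
  t^S * u^R * (PP N t * PP N (t+u))

private lemma Fi_err (S R N : ℕ) {t u : ℝ} (ht : 0 < t) (hu : 0 < u) :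
    |Fi S R t u - Hi S R N t u| ≤
      2 * (t^S * Real.exp (-(((N:ℝ)+1)*t))) * (u^R * Real.exp (-u)) := by
  have htu : 0 < t + u := by linarith
  set a := 1/(Real.exp t + 1) with ha_def
  set b := 1/(Real.exp (t+u) + 1) with hb_def
  have hFi : Fi S R t u = t^S * u^R * (a * b) := by
    rw [Fi, ha_def, hb_def]
    rw [div_eq_mul_inv, mul_inv, one_div, one_div]
  have ha0 : 0 ≤ a := by positivity
  have hb0 : 0 ≤ b := by positivity
  have hax : a ≤ Real.exp (-t) := by
    rw [ha_def, inv_exp_form]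
    have := Real.exp_pos (-t)
    rw [div_le_iff₀ (by linarith)]
    nlinarith
  have hpb0 : 0 ≤ PP N (t+u) := PP_nonneg N htu
  have hpby : PP N (t+u) ≤ Real.exp (-(t+u)) := PP_le N htu
  have hae := PP_err N ht
  have hbe := PP_err N htu
  have key : |a * b - PP N t * PP N (t+u)| ≤
      Real.exp (-t) * Real.exp (-(((N:ℝ)+1)*(t+u)))
        + Real.exp (-(t+u)) * Real.exp (-(((N:ℝ)+1)*t)) := by
    have h1 : |a - PP N t| ≤ Real.exp (-(((N:ℝ)+1)*t)) := hae
    have h2 : |b - PP N (t+u)| ≤ Real.exp (-(((N:ℝ)+1)*(t+u))) := hbe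
    have := prod_err (b := b) (pa := PP N t) ha0 hax hpb0 hpby h1 h2
      (Real.exp_pos (-t)).le (Real.exp_pos (-(t+u))).le
    linarith [this]
  have hb1 : Real.exp (-t) * Real.exp (-(((N:ℝ)+1)*(t+u))) ≤
      Real.exp (-(((N:ℝ)+1)*t)) * Real.exp (-u) := by
    rw [← Real.exp_add, ← Real.exp_add]
    apply Real.exp_le_exp.mpr
    have hN : (0:ℝ) ≤ (N:ℝ) := Nat.cast_nonneg N
    nlinarith
  have hb2 : Real.exp (-(t+u)) * Real.exp (-(((N:ℝ)+1)*t)) ≤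
      Real.exp (-(((N:ℝ)+1)*t)) * Real.exp (-u) := by
    rw [← Real.exp_add, ← Real.exp_add]
    apply Real.exp_le_exp.mpr
    nlinarith [Nat.cast_nonneg (α := ℝ) N]
  have hHi : Hi S R N t u = t^S * u^R * (PP N t * PP N (t+u)) := rfl
  have habs : |Fi S R t u - Hi S R N t u|
      = t^S * u^R * |a * b - PP N t * PP N (t+u)| := by
    rw [hFi, hHi, ← mul_sub, abs_mul, abs_of_nonneg (by positivity : (0:ℝ) ≤ t^S * u^R)]
  rw [habs]
  calc t^S * u^R * |a * b - PP N t * PP N (t+u)|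
      ≤ t^S * u^R * (Real.exp (-(((N:ℝ)+1)*t)) * Real.exp (-u)
          + Real.exp (-(((N:ℝ)+1)*t)) * Real.exp (-u)) := by
        apply mul_le_mul_of_nonneg_left _ (by positivity : (0:ℝ) ≤ t^S * u^R)
        calc |a * b - PP N t * PP N (t+u)| ≤ _ := key
          _ ≤ _ := add_le_add hb1 hb2
    _ = 2 * (t^S * Real.exp (-(((N:ℝ)+1)*t))) * (u^R * Real.exp (-u)) := by ring

private lemma Fi_cont (S R : ℕ) : Continuous (fun z : ℝ×ℝ => Fi S R z.1 z.2) := by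
  unfold Fi
  apply Continuous.div (by fun_prop) (by fun_prop)
  intro z
  positivity

private lemma Fi_nonneg (S R : ℕ) {t u : ℝ} (ht : 0 < t) (hu : 0 < u) :
    0 ≤ Fi S R t u := by
  unfold Fi; positivity

private lemma Fi_le (S R : ℕ) {t u : ℝ} (ht : 0 < t) (hu : 0 < u) :
    Fi S R t u ≤ (t^S * Real.exp (-t)) * (u^R * Real.exp (-u)) := by
  have h1 : Real.exp t * Real.exp u ≤ (Real.exp t + 1) * (Real.exp (t+u) + 1) := by
    have e1 : (1:ℝ) ≤ Real.exp t := Real.one_le_exp ht.le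
    have e2 : Real.exp (t+u) = Real.exp t * Real.exp u := Real.exp_add t u
    nlinarith [Real.exp_pos t, Real.exp_pos u, Real.exp_pos (t+u)]
  have h2 : Fi S R t u ≤ t^S * u^R / (Real.exp t * Real.exp u) := by
    unfold Fi
    exact div_le_div_of_nonneg_left (by positivity) (by positivity) h1
  calc Fi S R t u ≤ t^S * u^R / (Real.exp t * Real.exp u) := h2
    _ = (t^S * Real.exp (-t)) * (u^R * Real.exp (-u)) := by
        rw [Real.exp_neg, Real.exp_neg]; ring

private lemma FiInt_u (S R : ℕ) {t : ℝ} (ht : 0 < t) :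
    IntegrableOn (fun u => Fi S R t u) (Ioi (0:ℝ)) := by
  apply Integrable.mono' ((Gint R one_pos).const_mul (t^S))
  · exact ((Fi_cont S R).comp (Continuous.prodMk_right t)).aestronglyMeasurable
  · filter_upwards [ae_restrict_mem measurableSet_Ioi] with u hu
    rw [Real.norm_eq_abs, abs_of_nonneg (Fi_nonneg S R ht hu)]
    have := Fi_le S R ht hu
    have het : Real.exp (-t) ≤ 1 := Real.exp_le_one_iff.mpr (by linarith)
    have h0 : (0:ℝ) ≤ u^R * Real.exp (-u) :=
      mul_nonneg (pow_nonneg (le_of_lt hu) R) (Real.exp_pos _).le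
    have h0' : (0:ℝ) ≤ t^S := pow_nonneg ht.le S
    calc Fi S R t u ≤ (t^S * Real.exp (-t)) * (u^R * Real.exp (-u)) := this
      _ ≤ t^S * (u^R * Real.exp (-(1*u))) := by
          rw [one_mul]
          exact mul_le_mul_of_nonneg_right (mul_le_of_le_one_right h0' het) h0

private lemma FiIntProd (S R : ℕ) :
    Integrable (fun z : ℝ×ℝ => Fi S R z.1 z.2)
      ((volume.restrict (Ioi (0:ℝ))).prod (volume.restrict (Ioi (0:ℝ)))) := by
  have hG : Integrable (fun z : ℝ×ℝ =>
      (z.1^S * Real.exp (-(1*z.1))) * (z.2^R * Real.exp (-(1*z.2))))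
      ((volume.restrict (Ioi (0:ℝ))).prod (volume.restrict (Ioi (0:ℝ)))) :=
    (Gint S one_pos).mul_prod (Gint R one_pos)
  have hmem : ∀ᵐ z ∂((volume.restrict (Ioi (0:ℝ))).prod (volume.restrict (Ioi (0:ℝ)))),
      z ∈ (Ioi (0:ℝ)) ×ˢ (Ioi (0:ℝ)) := by
    rw [Measure.prod_restrict]
    exact ae_restrict_mem (measurableSet_Ioi.prod measurableSet_Ioi)
  apply Integrable.mono' hG (Fi_cont S R).aestronglyMeasurable
  filter_upwards [hmem] with z hz
  obtain ⟨hz1, hz2⟩ := hz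
  rw [Real.norm_eq_abs, abs_of_nonneg (Fi_nonneg S R hz1 hz2)]
  simpa [one_mul] using Fi_le S R hz1 hz2

private lemma innerF_int (S R : ℕ) :
    IntegrableOn (fun t => ∫ u in Ioi (0:ℝ), Fi S R t u) (Ioi (0:ℝ)) :=
  (FiIntProd S R).integral_prod_left

private lemma Hi_sum (S R N : ℕ) (t u : ℝ) :
    Hi S R N t u = ∑ m ∈ Finset.range N,
      (t^S * PP N t * ((-1:ℝ)^m * Real.exp (-(((m:ℝ)+1)*t))))
        * (u^R * Real.exp (-(((m:ℝ)+1)*u))) := by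
  have h : PP N (t+u) = ∑ m ∈ Finset.range N,
      (-1:ℝ)^m * (Real.exp (-(((m:ℝ)+1)*t)) * Real.exp (-(((m:ℝ)+1)*u))) := by
    unfold PP
    refine Finset.sum_congr rfl fun m _ => ?_
    rw [← Real.exp_add]
    congr 2
    ring
  unfold Hi
  rw [h]
  simp only [Finset.mul_sum]
  exact Finset.sum_congr rfl fun m _ => by ring

private lemma HiInt_u (S R N : ℕ) (t : ℝ) :
    IntegrableOn (fun u => Hi S R N t u) (Ioi (0:ℝ)) := by
  have : (fun u => Hi S R N t u) = fun u => ∑ m ∈ Finset.range N,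
      (t^S * PP N t * ((-1:ℝ)^m * Real.exp (-(((m:ℝ)+1)*t))))
        * (u^R * Real.exp (-(((m:ℝ)+1)*u))) := funext fun u => Hi_sum S R N t u
  rw [this]
  exact integrable_finset_sum _ fun m _ =>
    (Gint R (Nat.cast_add_one_pos m)).const_mul _

private noncomputable def Q2 (S R N : ℕ) (t : ℝ) : ℝ :=
  ∑ p ∈ Finset.range N ×ˢ Finset.range N,
    ((-1:ℝ)^(p.1+p.2) * ((Nat.factorial R : ℝ)/((p.2:ℝ)+1)^(R+1)))
      * (t^S * Real.exp (-(((p.1:ℝ)+(p.2:ℝ)+2)*t)))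

private lemma Hi_int_u_val (S R N : ℕ) (t : ℝ) :
    ∫ u in Ioi (0:ℝ), Hi S R N t u = Q2 S R N t := by
  have h1 : ∫ u in Ioi (0:ℝ), Hi S R N t u = ∑ m ∈ Finset.range N,
      (t^S * PP N t * ((-1:ℝ)^m * Real.exp (-(((m:ℝ)+1)*t))))
        * ((Nat.factorial R : ℝ)/((m:ℝ)+1)^(R+1)) := by
    simp only [Hi_sum S R N t]
    rw [integral_finset_sum (μ := volume.restrict (Ioi (0:ℝ))) (Finset.range N)
      (f := fun m u => (t^S * PP N t * ((-1:ℝ)^m * Real.exp (-(((m:ℝ)+1)*t))))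
        * (u^R * Real.exp (-(((m:ℝ)+1)*u))))
      (fun m _ => (Gint R (Nat.cast_add_one_pos m)).const_mul _)]
    refine Finset.sum_congr rfl fun m _ => ?_
    rw [MeasureTheory.integral_const_mul, Gval R (Nat.cast_add_one_pos m)]
  rw [h1]
  unfold Q2
  rw [Finset.sum_product]
  rw [Finset.sum_comm]
  refine Finset.sum_congr rfl fun m _ => ?_
  unfold PP
  simp only [Finset.mul_sum, Finset.sum_mul]
  refine Finset.sum_congr rfl fun n _ => ?_
  rw [show (-(((n:ℝ)+(m:ℝ)+2)*t)) = (-(((n:ℝ)+1)*t)) + (-(((m:ℝ)+1)*t)) by ring,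
    Real.exp_add, pow_add]
  ring

private lemma Q2_intble (S R N : ℕ) : IntegrableOn (Q2 S R N) (Ioi (0:ℝ)) := by
  unfold Q2
  apply integrable_finset_sum
  intro p _
  exact (Gint S (by positivity : (0:ℝ) < (p.1:ℝ)+(p.2:ℝ)+2)).const_mul _

private noncomputable def SN (S R N : ℕ) : ℝ :=
  ∑ p ∈ Finset.range N ×ˢ Finset.range N,
    (-1:ℝ)^(p.1+p.2) * (1/((p.2:ℝ)+1)^(R+1)) * (1/((p.1:ℝ)+(p.2:ℝ)+2)^(S+1))

private lemma Q2_int_val (S R N : ℕ) :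
    ∫ t in Ioi (0:ℝ), Q2 S R N t
      = (Nat.factorial R : ℝ) * (Nat.factorial S : ℝ) * SN S R N := by
  unfold Q2
  rw [integral_finset_sum (μ := volume.restrict (Ioi (0:ℝ))) (Finset.range N ×ˢ Finset.range N)
    (f := fun p t => ((-1:ℝ)^(p.1+p.2) * ((Nat.factorial R : ℝ)/((p.2:ℝ)+1)^(R+1)))
      * (t^S * Real.exp (-(((p.1:ℝ)+(p.2:ℝ)+2)*t))))
    (fun p _ => (Gint S (by positivity : (0:ℝ) < (p.1:ℝ)+(p.2:ℝ)+2)).const_mul _)]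
  unfold SN
  rw [Finset.mul_sum]
  refine Finset.sum_congr rfl fun p _ => ?_
  rw [MeasureTheory.integral_const_mul, Gval S (by positivity : (0:ℝ) < (p.1:ℝ)+(p.2:ℝ)+2)]
  ring

private lemma step7 (S R N : ℕ) {t : ℝ} (ht : 0 < t) :
    |(∫ u in Ioi (0:ℝ), Fi S R t u) - Q2 S R N t| ≤
      2 * (Nat.factorial R : ℝ) * (t^S * Real.exp (-(((N:ℝ)+1)*t))) := by
  rw [← Hi_int_u_val S R N t,
    ← integral_sub (FiInt_u S R ht) (HiInt_u S R N t)]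
  have hInt : Integrable (fun u => (2 * (t^S * Real.exp (-(((N:ℝ)+1)*t))))
      * (u^R * Real.exp (-(1*u)))) (volume.restrict (Ioi (0:ℝ))) :=
    (Gint R one_pos).const_mul _
  have hae : ∀ᵐ u ∂(volume.restrict (Ioi (0:ℝ))),
      ‖Fi S R t u - Hi S R N t u‖ ≤ (2 * (t^S * Real.exp (-(((N:ℝ)+1)*t))))
        * (u^R * Real.exp (-(1*u))) := by
    filter_upwards [ae_restrict_mem measurableSet_Ioi] with u hu
    rw [Real.norm_eq_abs]
    calc |Fi S R t u - Hi S R N t u|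
        ≤ 2 * (t^S * Real.exp (-(((N:ℝ)+1)*t))) * (u^R * Real.exp (-u)) :=
          Fi_err S R N ht hu
      _ = (2 * (t^S * Real.exp (-(((N:ℝ)+1)*t)))) * (u^R * Real.exp (-(1*u))) := by
          rw [one_mul]
  have h := norm_integral_le_of_norm_le hInt hae
  rw [Real.norm_eq_abs] at h
  calc |∫ u in Ioi (0:ℝ), (Fi S R t u - Hi S R N t u)| ≤ _ := h
    _ = 2 * (Nat.factorial R : ℝ) * (t^S * Real.exp (-(((N:ℝ)+1)*t))) := by
        rw [MeasureTheory.integral_const_mul, Gval R one_pos, one_pow, div_one]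
        ring

private lemma step8 (S R N : ℕ) :
    |(∫ t in Ioi (0:ℝ), ∫ u in Ioi (0:ℝ), Fi S R t u)
        - (Nat.factorial R : ℝ) * (Nat.factorial S : ℝ) * SN S R N| ≤
      2 * (Nat.factorial R : ℝ) * ((Nat.factorial S : ℝ)/((N:ℝ)+1)^(S+1)) := by
  rw [← Q2_int_val S R N,
    ← integral_sub (innerF_int S R) (Q2_intble S R N)]
  have hNpos : (0:ℝ) < (N:ℝ)+1 := by positivity
  have hInt : Integrable (fun t => (2 * (Nat.factorial R : ℝ))
      * (t^S * Real.exp (-(((N:ℝ)+1)*t)))) (volume.restrict (Ioi (0:ℝ))) :=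
    (Gint S hNpos).const_mul _
  have hae : ∀ᵐ t ∂(volume.restrict (Ioi (0:ℝ))),
      ‖(∫ u in Ioi (0:ℝ), Fi S R t u) - Q2 S R N t‖ ≤
        (2 * (Nat.factorial R : ℝ)) * (t^S * Real.exp (-(((N:ℝ)+1)*t))) := by
    filter_upwards [ae_restrict_mem measurableSet_Ioi] with t ht
    rw [Real.norm_eq_abs]
    calc |(∫ u in Ioi (0:ℝ), Fi S R t u) - Q2 S R N t|
        ≤ 2 * (Nat.factorial R : ℝ) * (t^S * Real.exp (-(((N:ℝ)+1)*t))) := step7 S R N ht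
      _ = (2 * (Nat.factorial R : ℝ)) * (t^S * Real.exp (-(((N:ℝ)+1)*t))) := by ring
  have h := norm_integral_le_of_norm_le hInt hae
  rw [Real.norm_eq_abs] at h
  calc |∫ t in Ioi (0:ℝ), ((∫ u in Ioi (0:ℝ), Fi S R t u) - Q2 S R N t)| ≤ _ := h
    _ = 2 * (Nat.factorial R : ℝ) * ((Nat.factorial S : ℝ)/((N:ℝ)+1)^(S+1)) := by
        rw [MeasureTheory.integral_const_mul, Gval S hNpos]

private lemma alt_bound : ∀ (n : ℕ) (c : ℕ → ℝ), (∀ k, 0 ≤ c k) → (∀ k, c (k+1) ≤ c k) →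
    0 ≤ ∑ i ∈ Finset.range n, (-1:ℝ)^i * c i ∧
      ∑ i ∈ Finset.range n, (-1:ℝ)^i * c i ≤ c 0 := by
  intro n
  induction n with
  | zero => intro c h0 _; simp [h0 0]
  | succ n ih =>
    intro c h0 hm
    have h := ih (fun i => c (i+1)) (fun k => h0 _) (fun k => hm _)
    rw [Finset.sum_range_succ']
    have key : ∑ i ∈ Finset.range n, (-1:ℝ)^(i+1) * c (i+1)
        = -(∑ i ∈ Finset.range n, (-1:ℝ)^i * c (i+1)) := by
      rw [← Finset.sum_neg_distrib]
      exact Finset.sum_congr rfl fun i _ => by ring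
    rw [key, pow_zero, one_mul]
    constructor
    · have := h.2
      have := hm 0
      linarith [h.2, hm 0]
    · linarith [h.1]

private noncomputable def TN (S R N : ℕ) : ℝ :=
  ∑ m ∈ Finset.range N,
    ((-1 : ℝ)^(m+2)/((m+2 : ℝ))^(S+1)) * ∑ j ∈ Finset.range (m+1), 1/((j+1 : ℝ))^(R+1)

private noncomputable def EN (S R N : ℕ) : ℝ :=
  ∑ k ∈ Finset.range (N-1), (-1:ℝ)^(k+N) *
    ((1/((k:ℝ)+(N:ℝ)+2)^(S+1)) * ∑ m ∈ Finset.Ico (k+1) N, 1/((m:ℝ)+1)^(R+1))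

private lemma SN_split (S R N : ℕ) : SN S R N = TN S R N + EN S R N := by
  unfold SN
  rw [← Finset.sum_filter_add_sum_filter_not (Finset.range N ×ˢ Finset.range N)
    (fun p => p.1 + p.2 < N)]
  congr 1
  · -- triangle part = TN
    unfold TN
    simp only [Finset.mul_sum]
    rw [Finset.sum_sigma' (Finset.range N) (fun m => Finset.range (m+1))]
    refine Finset.sum_nbij' (fun p => ⟨p.1+p.2, p.2⟩) (fun q => (q.1 - q.2, q.2))
      ?_ ?_ ?_ ?_ ?_
    · intro p hp
      simp only [Finset.mem_filter, Finset.mem_product, Finset.mem_range] at hp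
      simp only [Finset.mem_sigma, Finset.mem_range]
      omega
    · intro q hq
      simp only [Finset.mem_sigma, Finset.mem_range] at hq
      simp only [Finset.mem_filter, Finset.mem_product, Finset.mem_range]
      omega
    · intro p hp
      simp only [Finset.mem_filter, Finset.mem_product, Finset.mem_range] at hp
      simp only [Nat.add_sub_cancel]
    · intro q hq
      simp only [Finset.mem_sigma, Finset.mem_range] at hq
      have h : q.fst - q.snd + q.snd = q.fst := by omega
      dsimp only
      rw [h]
    · intro p hp
      simp only
      push_cast
      simp only [pow_add, pow_one, neg_one_sq]
      ring
  · -- corner part = EN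
    unfold EN
    simp only [Finset.mul_sum]
    rw [Finset.sum_sigma' (Finset.range (N-1)) (fun k => Finset.Ico (k+1) N)]
    refine Finset.sum_nbij' (fun p => ⟨p.1+p.2-N, p.2⟩) (fun q => (q.1+N-q.2, q.2))
      ?_ ?_ ?_ ?_ ?_
    · intro p hp
      simp only [Finset.mem_filter, Finset.mem_product, Finset.mem_range, not_lt] at hp
      simp only [Finset.mem_sigma, Finset.mem_range, Finset.mem_Ico]
      omega
    · intro q hq
      simp only [Finset.mem_sigma, Finset.mem_range, Finset.mem_Ico] at hq
      simp only [Finset.mem_filter, Finset.mem_product, Finset.mem_range, not_lt]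
      omega
    · intro p hp
      simp only [Finset.mem_filter, Finset.mem_product, Finset.mem_range, not_lt] at hp
      have h : p.1 + p.2 - N + N - p.2 = p.1 := by omega
      dsimp only
      simp only [Prod.ext_iff]
      exact ⟨h, trivial⟩
    · intro q hq
      simp only [Finset.mem_sigma, Finset.mem_range, Finset.mem_Ico] at hq
      have h : q.fst + N - q.snd + q.snd - N = q.fst := by omega
      dsimp only
      rw [h]
    · intro p hp
      simp only [Finset.mem_filter, Finset.mem_product, Finset.mem_range, not_lt] at hp
      simp only
      have hN : N ≤ p.1 + p.2 := hp.2
      have h1 : p.1 + p.2 - N + N = p.1 + p.2 := by omega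
      have h2 : ((p.1 + p.2 - N : ℕ) : ℝ) = (p.1:ℝ) + (p.2:ℝ) - (N:ℝ) := by
        rw [Nat.cast_sub hN]
        push_cast
        ring
      rw [h1, h2]
      ring

private lemma EN_bound (S R N : ℕ) :
    |EN S R N| ≤ (1 + Real.log N) * (1/((N:ℝ)+2)) := by
  set c : ℕ → ℝ := fun k =>
    (1/((k:ℝ)+(N:ℝ)+2)^(S+1)) * ∑ m ∈ Finset.Ico (k+1) N, 1/((m:ℝ)+1)^(R+1) with hc
  have hc0 : ∀ k, 0 ≤ c k := fun k =>
    mul_nonneg (by positivity) (Finset.sum_nonneg fun m _ => by positivity)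
  have hcm : ∀ k, c (k+1) ≤ c k := by
    intro k
    refine mul_le_mul ?_ ?_ (Finset.sum_nonneg fun m _ => by positivity) (by positivity)
    · refine one_div_le_one_div_of_le (by positivity) ?_
      refine pow_le_pow_left₀ (by positivity) ?_ _
      push_cast; linarith
    · exact Finset.sum_le_sum_of_subset_of_nonneg
        (Finset.Ico_subset_Ico (by omega) le_rfl) (fun m _ _ => by positivity)
  have hEN : EN S R N = (-1:ℝ)^N * ∑ k ∈ Finset.range (N-1), (-1:ℝ)^k * c k := by
    unfold EN
    rw [Finset.mul_sum]
    refine Finset.sum_congr rfl fun k _ => ?_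
    rw [hc]
    dsimp only
    rw [pow_add]
    ring
  rw [hEN, abs_mul, abs_pow, abs_neg, abs_one, one_pow, one_mul]
  have hb := alt_bound (N-1) c hc0 hcm
  have habs : |∑ k ∈ Finset.range (N-1), (-1:ℝ)^k * c k| ≤ c 0 :=
    abs_le.mpr ⟨by linarith [hb.1, hc0 0], hb.2⟩
  refine le_trans habs ?_
  have hc0eq : c 0 = (1/((N:ℝ)+2)^(S+1)) * ∑ m ∈ Finset.Ico 1 N, 1/((m:ℝ)+1)^(R+1) := by
    rw [hc]; norm_num
  rw [hc0eq]
  have hNc : (0:ℝ) ≤ (N:ℝ) := Nat.cast_nonneg N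
  have bound1 : 1/((N:ℝ)+2)^(S+1) ≤ 1/((N:ℝ)+2) :=
    one_div_le_one_div_of_le (by linarith)
      (le_self_pow₀ (by linarith) (Nat.succ_ne_zero S))
  have bound2 : ∑ m ∈ Finset.Ico 1 N, 1/((m:ℝ)+1)^(R+1) ≤ 1 + Real.log N := by
    calc ∑ m ∈ Finset.Ico 1 N, 1/((m:ℝ)+1)^(R+1)
        ≤ ∑ m ∈ Finset.Ico 1 N, 1/((m:ℝ)+1) := by
          refine Finset.sum_le_sum fun m _ => ?_
          refine one_div_le_one_div_of_le (by positivity)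
            (le_self_pow₀ (by push_cast; linarith [Nat.cast_nonneg (α := ℝ) m])
              (Nat.succ_ne_zero R))
      _ ≤ ∑ m ∈ Finset.range N, 1/((m:ℝ)+1) := by
          refine Finset.sum_le_sum_of_subset_of_nonneg ?_ (fun m _ _ => by positivity)
          rw [Finset.range_eq_Ico]
          exact Finset.Ico_subset_Ico (Nat.zero_le 1) le_rfl
      _ = ((harmonic N : ℚ) : ℝ) := by
          rw [harmonic]
          push_cast
          refine (Finset.sum_congr rfl fun m _ => ?_).symm
          rw [one_div]
      _ ≤ 1 + Real.log N := harmonic_le_one_add_log N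
  calc (1/((N:ℝ)+2)^(S+1)) * ∑ m ∈ Finset.Ico 1 N, 1/((m:ℝ)+1)^(R+1)
      ≤ (1/((N:ℝ)+2)) * (1 + Real.log N) := by
        refine mul_le_mul bound1 bound2
          (Finset.sum_nonneg fun m _ => by positivity) (by positivity)
    _ = (1 + Real.log N) * (1/((N:ℝ)+2)) := mul_comm _ _

theorem dzetaA2_integral (r s : ℕ) (hr : 1 ≤ r) (hs : 1 ≤ s) :
    dzetaA2 r s = (1/(Real.Gamma r * Real.Gamma s)) *
      ∫ t in Set.Ioi (0 : ℝ), ∫ u in Set.Ioi (0 : ℝ),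
        t^(s-1) * u^(r-1) / ((Real.exp t + 1) * (Real.exp (t + u) + 1)) := by
  obtain ⟨R, rfl⟩ : ∃ R, r = R + 1 := ⟨r - 1, by omega⟩
  obtain ⟨S, rfl⟩ : ∃ S, s = S + 1 := ⟨s - 1, by omega⟩
  simp only [Nat.add_sub_cancel]
  have hGR : Real.Gamma ((R+1 : ℕ) : ℝ) = (Nat.factorial R : ℝ) := by
    push_cast
    exact Real.Gamma_nat_eq_factorial R
  have hGS : Real.Gamma ((S+1 : ℕ) : ℝ) = (Nat.factorial S : ℝ) := by
    push_cast
    exact Real.Gamma_nat_eq_factorial S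
  rw [hGR, hGS]
  have hIeq : (∫ t in Set.Ioi (0 : ℝ), ∫ u in Set.Ioi (0 : ℝ),
      t^S * u^R / ((Real.exp t + 1) * (Real.exp (t + u) + 1)))
      = ∫ t in Ioi (0:ℝ), ∫ u in Ioi (0:ℝ), Fi S R t u := rfl
  rw [hIeq]
  set I : ℝ := ∫ t in Ioi (0:ℝ), ∫ u in Ioi (0:ℝ), Fi S R t u with hI
  set L : ℝ := 1/((Nat.factorial R : ℝ) * (Nat.factorial S : ℝ)) * I with hL
  have hC : (0:ℝ) < (Nat.factorial R : ℝ) * (Nat.factorial S : ℝ) := by positivity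
  -- SN is close to L
  have hSNc : ∀ N : ℕ, |SN S R N - L| ≤ 2/((N:ℝ)+1) := by
    intro N
    have hNp : (0:ℝ) < (N:ℝ)+1 := by positivity
    have hpow : ((N:ℝ)+1) ≤ ((N:ℝ)+1)^(S+1) :=
      le_self_pow₀ (by linarith [Nat.cast_nonneg (α := ℝ) N]) (Nat.succ_ne_zero S)
    have h8' : |I - (Nat.factorial R : ℝ) * (Nat.factorial S : ℝ) * SN S R N|
        ≤ 2 * (Nat.factorial R : ℝ) * (Nat.factorial S : ℝ) / ((N:ℝ)+1) := by
      refine (step8 S R N).trans ?_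
      have hd : (Nat.factorial S : ℝ)/((N:ℝ)+1)^(S+1) ≤ (Nat.factorial S : ℝ)/((N:ℝ)+1) :=
        div_le_div_of_nonneg_left (by positivity) hNp hpow
      calc 2 * (Nat.factorial R : ℝ) * ((Nat.factorial S : ℝ)/((N:ℝ)+1)^(S+1))
          ≤ 2 * (Nat.factorial R : ℝ) * ((Nat.factorial S : ℝ)/((N:ℝ)+1)) :=
            mul_le_mul_of_nonneg_left hd (by positivity)
        _ = 2 * (Nat.factorial R : ℝ) * (Nat.factorial S : ℝ) / ((N:ℝ)+1) := by ring
    have h9 : |SN S R N - L| * ((Nat.factorial R : ℝ) * (Nat.factorial S : ℝ))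
        ≤ 2 * (Nat.factorial R : ℝ) * (Nat.factorial S : ℝ) / ((N:ℝ)+1) := by
      rw [← abs_of_pos hC, ← abs_mul]
      rw [show (SN S R N - L) * ((Nat.factorial R : ℝ) * (Nat.factorial S : ℝ))
          = -(I - (Nat.factorial R : ℝ) * (Nat.factorial S : ℝ) * SN S R N) by
        rw [hL]; field_simp; ring]
      rw [abs_neg]
      exact h8'
    have h10 := (le_div_iff₀ hC).mpr h9
    refine h10.trans (le_of_eq ?_)
    field_simp
  -- TN is close to L
  have hTb : ∀ N : ℕ, |TN S R N - L| ≤ 2/((N:ℝ)+1) + (1 + Real.log N) * (1/((N:ℝ)+2)) := by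
    intro N
    have hsplit : TN S R N = SN S R N - EN S R N := by
      have := SN_split S R N
      linarith
    rw [show TN S R N - L = (SN S R N - L) + (-(EN S R N)) by rw [hsplit]; ring]
    refine (abs_add_le _ _).trans ?_
    rw [abs_neg]
    exact add_le_add (hSNc N) (EN_bound S R N)
  -- the bound tends to zero
  have hB : Tendsto (fun N : ℕ => 2/((N:ℝ)+1) + (1 + Real.log N) * (1/((N:ℝ)+2)))
      atTop (nhds 0) := by
    have hcast : Tendsto (fun N : ℕ => (N:ℝ)) atTop atTop := tendsto_natCast_atTop_atTop
    have h1 : Tendsto (fun N : ℕ => 2/((N:ℝ)+1)) atTop (nhds 0) :=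
      Tendsto.div_atTop tendsto_const_nhds
        (tendsto_atTop_add_const_right atTop 1 hcast)
    have h2a : Tendsto (fun N : ℕ => 1/((N:ℝ)+2)) atTop (nhds 0) :=
      Tendsto.div_atTop tendsto_const_nhds
        (tendsto_atTop_add_const_right atTop 2 hcast)
    have h2b : Tendsto (fun N : ℕ => Real.log N / ((N:ℝ)+2)) atTop (nhds 0) := by
      have hx : Tendsto (fun x : ℝ => Real.log x ^ 1 / (1*x + 2)) atTop (nhds 0) :=
        Real.tendsto_pow_log_div_mul_add_atTop 1 2 1 one_ne_zero
      have := hx.comp hcast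
      simpa [one_mul, Function.comp_def] using this
    have h2 : Tendsto (fun N : ℕ => (1 + Real.log N) * (1/((N:ℝ)+2))) atTop (nhds 0) := by
      have := h2a.add h2b
      rw [add_zero] at this
      refine Tendsto.congr (fun N => ?_) this
      field_simp
    have := h1.add h2
    rwa [add_zero] at this
  have habs : Tendsto (fun N => |TN S R N - L|) atTop (nhds 0) :=
    squeeze_zero (fun N => abs_nonneg _) hTb hB
  have hfin : Tendsto (fun N => TN S R N) atTop (nhds L) := by
    rw [tendsto_iff_dist_tendsto_zero]
    simpa [Real.dist_eq] using habs
  unfold dzetaA2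
  exact hfin.limUnder_eq
end

section
/- For integers r ≥ 1, s ≥ 2 with r + s = k, the shuffle relation ζ(r̄)ζ(s) = Σ_{j=1}^{k-1} C(j-1, r-1) ζ(overline{k-j}, j̄) + Σ_{j=1}^{k-1} C(j-1, s-1) ζ(overline{k-j}, j) holds, where C denotes binomial coefficients. -/
open Filter Finset Real

lemma alt_bounds (f : ℕ → ℝ) (hf : ∀ i, f (i+1) ≤ f i) (h0 : ∀ i, 0 ≤ f i) :
    ∀ n, 0 ≤ ∑ i ∈ range n, (-1:ℝ)^i * f i ∧ ∑ i ∈ range n, (-1:ℝ)^i * f i ≤ f 0 := by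
  intro n
  induction n using Nat.strong_induction_on with
  | _ n ih =>
    match n with
    | 0 => simpa using h0 0
    | 1 => constructor <;> simp [h0 0]
    | (n+2) =>
      obtain ⟨h1l, h1r⟩ := ih n (by omega)
      obtain ⟨h2l, h2r⟩ := ih (n+1) (by omega)
      have e1 : ∑ i ∈ range (n+1), (-1:ℝ)^i * f i
          = (∑ i ∈ range n, (-1:ℝ)^i * f i) + (-1:ℝ)^n * f n := sum_range_succ _ n
      have e2 : ∑ i ∈ range (n+2), (-1:ℝ)^i * f i
          = (∑ i ∈ range (n+1), (-1:ℝ)^i * f i) + (-1:ℝ)^(n+1) * f (n+1) := sum_range_succ _ (n+1)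
      rcases Nat.even_or_odd n with he | ho
      · have hp : (-1:ℝ)^n = 1 := he.neg_one_pow
        have hq : (-1:ℝ)^(n+1) = -1 := by
          rw [pow_succ, hp]; ring
        constructor
        · have := hf n
          rw [e2, e1, hp, hq]; nlinarith
        · rw [e2, hq]; nlinarith [h0 (n+1)]
      · have hp : (-1:ℝ)^n = -1 := ho.neg_one_pow
        have hq : (-1:ℝ)^(n+1) = 1 := by rw [pow_succ, hp]; ring
        constructor
        · rw [e2, hq]; nlinarith [h0 (n+1)]
        · have := hf n
          rw [e2, e1, hp, hq]; nlinarith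

lemma alt_abs_le (f : ℕ → ℝ) (hf : ∀ i, f (i+1) ≤ f i) (h0 : ∀ i, 0 ≤ f i) (n : ℕ) :
    |∑ i ∈ range n, (-1:ℝ)^i * f i| ≤ f 0 := by
  obtain ⟨h1, h2⟩ := alt_bounds f hf h0 n
  rw [abs_of_nonneg h1]; exact h2

lemma alt_diff (f : ℕ → ℝ) (hf : ∀ i, f (i+1) ≤ f i) (h0 : ∀ i, 0 ≤ f i) {m n : ℕ} (h : m ≤ n) :
    |(∑ i ∈ range n, (-1:ℝ)^i * f i) - ∑ i ∈ range m, (-1:ℝ)^i * f i| ≤ f m := by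
  have e : (∑ i ∈ range n, (-1:ℝ)^i * f i) - ∑ i ∈ range m, (-1:ℝ)^i * f i
      = ∑ i ∈ Ico m n, (-1:ℝ)^i * f i := (sum_Ico_eq_sub _ h).symm
  rw [e, sum_Ico_eq_sum_range]
  have : ∀ i, (-1:ℝ)^(m+i) * f (m+i) = (-1:ℝ)^m * ((-1:ℝ)^i * f (m+i)) := by
    intro i; rw [pow_add]; ring
  rw [sum_congr rfl (fun i _ => this i), ← mul_sum, abs_mul, abs_pow, abs_neg, abs_one, one_pow,
    one_mul]
  exact alt_abs_le (fun i => f (m+i)) (fun i => by have := hf (m+i); simpa [← Nat.add_assoc] using this)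
    (fun i => h0 (m+i)) _

lemma alt_conv (f : ℕ → ℝ) (hf : ∀ i, f (i+1) ≤ f i) (h0 : ∀ i, 0 ≤ f i)
    (hlim : Tendsto f atTop (nhds 0)) :
    ∃ L, Tendsto (fun n => ∑ i ∈ range n, (-1:ℝ)^i * f i) atTop (nhds L) ∧
      ∀ m, |L - ∑ i ∈ range m, (-1:ℝ)^i * f i| ≤ f m := by
  have hanti : Antitone f := antitone_nat_of_succ_le hf
  obtain ⟨L, hL⟩ := hanti.tendsto_alternating_series_of_tendsto_zero hlim
  refine ⟨L, hL, fun m => ?_⟩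
  have h1 : Tendsto (fun n => |(∑ i ∈ range n, (-1:ℝ)^i * f i) - ∑ i ∈ range m, (-1:ℝ)^i * f i|)
      atTop (nhds (|L - ∑ i ∈ range m, (-1:ℝ)^i * f i|)) := ((hL.sub tendsto_const_nhds).abs)
  refine le_of_tendsto h1 ?_
  filter_upwards [eventually_ge_atTop m] with n hn
  exact alt_diff f hf h0 hn

lemma pfrac (k : ℕ) : ∀ r s : ℕ, r + s = k → 1 ≤ r → 1 ≤ s → ∀ x y : ℝ, 0 < x → 0 < y →
    1/(x^r * y^s) = ∑ i ∈ range (k-1),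
      (((i.choose (r-1)) : ℝ)/((x+y)^(i+1) * y^(k-1-i))
        + ((i.choose (s-1)) : ℝ)/((x+y)^(i+1) * x^(k-1-i))) := by
  induction k using Nat.strong_induction_on with
  | _ k ih =>
  intro r s hk hr hs x y hx hy
  have hxy : (0:ℝ) < x + y := by linarith
  have hx0 : x ≠ 0 := ne_of_gt hx
  have hy0 : y ≠ 0 := ne_of_gt hy
  have hxy0 : x + y ≠ 0 := ne_of_gt hxy
  have hk2 : k - 1 = (k-2)+1 := by omega
  rcases Nat.lt_or_ge r 2 with hr1 | hr2
  · -- r = 1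
    have hr' : r = 1 := by omega
    subst hr'
    rcases Nat.lt_or_ge s 2 with hs1 | hs2
    · have hs' : s = 1 := by omega
      subst hs'
      have hk' : k = 2 := by omega
      subst hk'
      norm_num
      field_simp
    · -- r = 1, s ≥ 2
      have hIH := ih (k-1) (by omega) 1 (s-1) (by omega) le_rfl (by omega) x y hx hy
      rw [show k-1-1 = k-2 from by omega] at hIH
      have hsplit : 1/(x^1 * y^s) = 1/((x+y) * y^(k-1)) + (1/(x+y)) * (1/(x^1 * y^(s-1))) := by
        have e2 : y^s = y^(s-1) * y := by rw [← pow_succ]; congr 1; omega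
        have hks : k - 1 = s := by omega
        rw [hks, e2]; field_simp
      rw [hsplit, hIH, mul_sum]
      conv_rhs => rw [hk2, sum_range_succ']
      rw [← hk2]
      have hterm : ∀ i ∈ range (k-2),
          1/(x+y) * (((i.choose (1-1)) : ℝ)/((x+y)^(i+1) * y^(k-2-i))
            + ((i.choose (s-1-1)) : ℝ)/((x+y)^(i+1) * x^(k-2-i)))
          = (((i+1).choose (1-1) : ℝ)/((x+y)^(i+1+1) * y^(k-1-(i+1)))
            + (((i+1).choose (s-1)) : ℝ)/((x+y)^(i+1+1) * x^(k-1-(i+1)))) := by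
        intro i hi
        rw [mem_range] at hi
        have e1 : k-2-i = k-1-(i+1) := by omega
        have e2 : s - 1 = (s-2) + 1 := by omega
        have e3 : ((i+1).choose (s-1) : ℝ) = (i.choose (s-2) : ℝ) + (i.choose (s-1) : ℝ) := by
          rw [e2, Nat.choose_succ_succ, Nat.succ_eq_add_one, ← e2]; push_cast; ring
        have e4 : (i.choose (s-1) : ℝ) = 0 := by
          rw [Nat.choose_eq_zero_of_lt (by omega)]; norm_num
        rw [e1, e3, e4, Nat.choose_zero_right, Nat.choose_zero_right,
          show s-1-1 = s-2 from by omega, add_zero]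
        have hp1 : (x+y)^(i+1) ≠ 0 := pow_ne_zero _ hxy0
        have hp2 : (y:ℝ)^(k-1-(i+1)) ≠ 0 := pow_ne_zero _ hy0
        have hp3 : (x:ℝ)^(k-1-(i+1)) ≠ 0 := pow_ne_zero _ hx0
        rw [pow_succ]
        push_cast
        field_simp
        ring
      rw [sum_congr rfl hterm]
      simp only [Nat.choose_zero_right, Nat.choose_self,
        Nat.choose_eq_zero_of_lt (show 0 < s-1 by omega)]
      norm_num
      ring
  · -- r ≥ 2
    rcases Nat.lt_or_ge s 2 with hs1 | hs2
    · -- s = 1, r ≥ 2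
      have hs' : s = 1 := by omega
      subst hs'
      have hIH := ih (k-1) (by omega) (r-1) 1 (by omega) (by omega) le_rfl x y hx hy
      rw [show k-1-1 = k-2 from by omega] at hIH
      have hsplit : 1/(x^r * y^1) = 1/((x+y) * x^(k-1)) + (1/(x+y)) * (1/(x^(r-1) * y^1)) := by
        have e2 : x^r = x^(r-1) * x := by rw [← pow_succ]; congr 1; omega
        have hks : k - 1 = r := by omega
        rw [hks, e2]; field_simp; ring
      rw [hsplit, hIH, mul_sum]
      conv_rhs => rw [hk2, sum_range_succ']
      rw [← hk2]
      have hterm : ∀ i ∈ range (k-2),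
          1/(x+y) * (((i.choose (r-1-1)) : ℝ)/((x+y)^(i+1) * y^(k-2-i))
            + ((i.choose (1-1)) : ℝ)/((x+y)^(i+1) * x^(k-2-i)))
          = ((((i+1).choose (r-1)) : ℝ)/((x+y)^(i+1+1) * y^(k-1-(i+1)))
            + (((i+1).choose (1-1)) : ℝ)/((x+y)^(i+1+1) * x^(k-1-(i+1)))) := by
        intro i hi
        rw [mem_range] at hi
        have e1 : k-2-i = k-1-(i+1) := by omega
        have e2 : r - 1 = (r-2) + 1 := by omega
        have e3 : ((i+1).choose (r-1) : ℝ) = (i.choose (r-2) : ℝ) + (i.choose (r-1) : ℝ) := by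
          rw [e2, Nat.choose_succ_succ, Nat.succ_eq_add_one, ← e2]; push_cast; ring
        have e4 : (i.choose (r-1) : ℝ) = 0 := by
          rw [Nat.choose_eq_zero_of_lt (by omega)]; norm_num
        rw [e1, e3, e4, Nat.choose_zero_right, Nat.choose_zero_right,
          show r-1-1 = r-2 from by omega, add_zero]
        have hp1 : (x+y)^(i+1) ≠ 0 := pow_ne_zero _ hxy0
        have hp2 : (y:ℝ)^(k-1-(i+1)) ≠ 0 := pow_ne_zero _ hy0
        have hp3 : (x:ℝ)^(k-1-(i+1)) ≠ 0 := pow_ne_zero _ hx0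
        rw [pow_succ]
        push_cast
        field_simp
        ring
      rw [sum_congr rfl hterm]
      simp only [Nat.choose_zero_right, Nat.choose_self,
        Nat.choose_eq_zero_of_lt (show 0 < r-1 by omega)]
      norm_num
      ring
    · -- r ≥ 2, s ≥ 2
      have hIH1 := ih (k-1) (by omega) (r-1) s (by omega) (by omega) hs x y hx hy
      have hIH2 := ih (k-1) (by omega) r (s-1) (by omega) hr (by omega) x y hx hy
      rw [show k-1-1 = k-2 from by omega] at hIH1 hIH2
      have hsplit : 1/(x^r * y^s)
          = (1/(x+y)) * (1/(x^(r-1) * y^s)) + (1/(x+y)) * (1/(x^r * y^(s-1))) := by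
        have e1 : x^r = x^(r-1) * x := by rw [← pow_succ]; congr 1; omega
        have e2 : y^s = y^(s-1) * y := by rw [← pow_succ]; congr 1; omega
        rw [e1, e2]; field_simp
      rw [hsplit, hIH1, hIH2, mul_sum, mul_sum, ← sum_add_distrib]
      conv_rhs => rw [hk2, sum_range_succ']
      rw [← hk2]
      have hterm : ∀ i ∈ range (k-2),
          (1/(x+y) * (((i.choose (r-1-1)) : ℝ)/((x+y)^(i+1) * y^(k-2-i))
            + ((i.choose (s-1)) : ℝ)/((x+y)^(i+1) * x^(k-2-i)))
          + 1/(x+y) * (((i.choose (r-1)) : ℝ)/((x+y)^(i+1) * y^(k-2-i))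
            + ((i.choose (s-1-1)) : ℝ)/((x+y)^(i+1) * x^(k-2-i))))
          = ((((i+1).choose (r-1)) : ℝ)/((x+y)^(i+1+1) * y^(k-1-(i+1)))
            + (((i+1).choose (s-1)) : ℝ)/((x+y)^(i+1+1) * x^(k-1-(i+1)))) := by
        intro i hi
        rw [mem_range] at hi
        have e1 : k-2-i = k-1-(i+1) := by omega
        have e2 : r - 1 = (r-2) + 1 := by omega
        have e2' : s - 1 = (s-2) + 1 := by omega
        have e3 : ((i+1).choose (r-1) : ℝ) = (i.choose (r-2) : ℝ) + (i.choose (r-1) : ℝ) := by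
          rw [e2, Nat.choose_succ_succ, Nat.succ_eq_add_one, ← e2]; push_cast; ring
        have e3' : ((i+1).choose (s-1) : ℝ) = (i.choose (s-2) : ℝ) + (i.choose (s-1) : ℝ) := by
          rw [e2', Nat.choose_succ_succ, Nat.succ_eq_add_one, ← e2']; push_cast; ring
        rw [e1, e3, e3', show r-1-1 = r-2 from by omega, show s-1-1 = s-2 from by omega]
        have hp1 : (x+y)^(i+1) ≠ 0 := pow_ne_zero _ hxy0
        have hp2 : (y:ℝ)^(k-1-(i+1)) ≠ 0 := pow_ne_zero _ hy0
        have hp3 : (x:ℝ)^(k-1-(i+1)) ≠ 0 := pow_ne_zero _ hx0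
        rw [pow_succ]
        push_cast
        field_simp
        ring
      rw [sum_congr rfl hterm]
      simp only [Nat.choose_eq_zero_of_lt (show 0 < r-1 by omega),
        Nat.choose_eq_zero_of_lt (show 0 < s-1 by omega)]
      norm_num

noncomputable def auxG3 (p q : ℕ) (x : ℕ × ℕ) : ℝ :=
  (-1:ℝ)^(x.1+1) / (((x.1:ℝ)+(x.2:ℝ)+2)^q * ((x.2:ℝ)+1)^p)

noncomputable def auxG1 (p q : ℕ) (x : ℕ × ℕ) : ℝ :=
  (-1:ℝ)^(x.1+1) / (((x.1:ℝ)+(x.2:ℝ)+2)^q * ((x.1:ℝ)+1)^p)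

lemma tri3 (p q N : ℕ) :
    (∑ m ∈ range N, ((-1:ℝ)^(m+2)/((m+2:ℝ))^q) * ∑ i ∈ range (m+1), (-1:ℝ)^(i+1)/((i+1:ℝ))^p)
    = ∑ x ∈ (range N ×ˢ range N).filter (fun x => x.1 + x.2 < N), auxG3 p q x := by
  simp_rw [mul_sum]
  rw [sum_sigma']
  refine sum_nbij' (fun x => (x.1 - x.2, x.2)) (fun y => ⟨y.1 + y.2, y.2⟩) ?_ ?_ ?_ ?_ ?_
  · rintro ⟨m, i⟩ hx
    simp only [mem_sigma, mem_range] at hx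
    simp only [mem_filter, mem_product, mem_range]
    omega
  · rintro ⟨a, b⟩ hy
    simp only [mem_filter, mem_product, mem_range] at hy
    simp only [mem_sigma, mem_range]
    omega
  · rintro ⟨m, i⟩ hx
    simp only [mem_sigma, mem_range] at hx
    have : m - i + i = m := by omega
    simp [this]
  · rintro ⟨a, b⟩ _
    simp
  · rintro ⟨m, i⟩ hx
    simp only [mem_sigma, mem_range] at hx
    simp only [auxG3]
    rw [div_mul_div_comm]
    have hsign : (-1:ℝ)^(m+2) * (-1:ℝ)^(i+1) = (-1:ℝ)^((m-i)+1) := by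
      rw [← pow_add, show (m+2)+(i+1) = ((m-i)+1) + 2*(i+1) from by omega, pow_add, pow_mul]
      norm_num
    have hden : (((m - i:ℕ)):ℝ) + (i:ℝ) + 2 = (m:ℝ) + 2 := by
      rw [Nat.cast_sub (by omega : i ≤ m)]; ring
    rw [hsign, hden]

lemma tri1 (p q N : ℕ) :
    (∑ m ∈ range N, (1/((m+2:ℝ))^q) * ∑ i ∈ range (m+1), (-1:ℝ)^(i+1)/((i+1:ℝ))^p)
    = ∑ x ∈ (range N ×ˢ range N).filter (fun x => x.1 + x.2 < N), auxG1 p q x := by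
  simp_rw [mul_sum]
  rw [sum_sigma']
  refine sum_nbij' (fun x => (x.2, x.1 - x.2)) (fun y => ⟨y.1 + y.2, y.1⟩) ?_ ?_ ?_ ?_ ?_
  · rintro ⟨m, i⟩ hx
    simp only [mem_sigma, mem_range] at hx
    simp only [mem_filter, mem_product, mem_range]
    omega
  · rintro ⟨a, b⟩ hy
    simp only [mem_filter, mem_product, mem_range] at hy
    simp only [mem_sigma, mem_range]
    omega
  · rintro ⟨m, i⟩ hx
    simp only [mem_sigma, mem_range] at hx
    have : i + (m - i) = m := by omega
    simp [this]
  · rintro ⟨a, b⟩ _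
    simp
  · rintro ⟨m, i⟩ hx
    simp only [mem_sigma, mem_range] at hx
    simp only [auxG1]
    rw [div_mul_div_comm, one_mul]
    have hden : ((i:ℝ)) + (((m - i:ℕ)):ℝ) + 2 = (m:ℝ) + 2 := by
      rw [Nat.cast_sub (by omega : i ≤ m)]; ring
    rw [hden]

lemma harmonic_sqrt : ∀ N : ℕ, ∑ a ∈ range N, 1/((a:ℝ)+1) ≤ 2*Real.sqrt N := by
  intro N
  induction N with
  | zero => simp
  | succ n ihn =>
    rw [sum_range_succ]
    have h1 : 1/((n:ℝ)+1) ≤ 2*Real.sqrt (n+1) - 2*Real.sqrt n := by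
      have hu : Real.sqrt n ^ 2 = (n:ℝ) := Real.sq_sqrt (by positivity)
      have hv : Real.sqrt ((n:ℝ)+1) ^ 2 = (n:ℝ)+1 := Real.sq_sqrt (by positivity)
      have hun : (0:ℝ) ≤ Real.sqrt n := Real.sqrt_nonneg _
      have hvn : (0:ℝ) < Real.sqrt ((n:ℝ)+1) := Real.sqrt_pos.mpr (by positivity)
      have huv : Real.sqrt n ≤ Real.sqrt ((n:ℝ)+1) := Real.sqrt_le_sqrt (by linarith)
      have hv1 : 1 ≤ Real.sqrt ((n:ℝ)+1) := by nlinarith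
      have hprod : (Real.sqrt ((n:ℝ)+1) - Real.sqrt n)*(Real.sqrt ((n:ℝ)+1) + Real.sqrt n) = 1 := by
        nlinarith
      have h2v : 1 ≤ 2*Real.sqrt ((n:ℝ)+1)*(Real.sqrt ((n:ℝ)+1) - Real.sqrt n) := by
        nlinarith
      rw [div_le_iff₀ (by positivity)]
      nlinarith [sub_nonneg.mpr huv]
    have h2 : Real.sqrt ((n:ℝ)+1) = Real.sqrt ((n+1:ℕ):ℝ) := by push_cast; ring_nf
    calc ∑ a ∈ range n, 1/((a:ℝ)+1) + 1/((n:ℝ)+1)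
        ≤ 2*Real.sqrt n + (2*Real.sqrt ((n:ℝ)+1) - 2*Real.sqrt n) := by linarith
      _ = 2*Real.sqrt ((n+1:ℕ):ℝ) := by rw [← h2]; ring

lemma sum_D1 (N : ℕ) :
    ∑ x ∈ (range N ×ˢ range N).filter (fun x => ¬ x.1 + x.2 < N), 1/((x.1:ℝ)+1)^2
      ≤ 2*Real.sqrt N := by
  calc ∑ x ∈ (range N ×ˢ range N).filter (fun x => ¬ x.1 + x.2 < N), 1/((x.1:ℝ)+1)^2
      = ∑ a ∈ range N, ∑ b ∈ range N, (if ¬ a + b < N then 1/((a:ℝ)+1)^2 else 0) := by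
        rw [sum_filter, sum_product]
    _ ≤ ∑ a ∈ range N, 1/((a:ℝ)+1) := by
        apply sum_le_sum
        intro a ha
        rw [mem_range] at ha
        have : ∑ b ∈ range N, (if ¬ a + b < N then 1/((a:ℝ)+1)^2 else 0)
            = ∑ b ∈ (range N).filter (fun b => ¬ a + b < N), 1/((a:ℝ)+1)^2 := by
          rw [sum_filter]
        rw [this]
        have hfc : (range N).filter (fun b => ¬ a + b < N) = Ico (N - a) N := by
          ext b; simp only [mem_filter, mem_range, mem_Ico]; omega
        rw [hfc, sum_const, Nat.card_Ico, nsmul_eq_mul]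
        have hcard : N - (N - a) = a := by omega
        rw [hcard]
        have h1 : ((a:ℝ)) * (1/((a:ℝ)+1)^2) ≤ ((a:ℝ)+1) * (1/((a:ℝ)+1)^2) := by
          apply mul_le_mul_of_nonneg_right (by linarith) (by positivity)
        calc ((a:ℝ)) * (1/((a:ℝ)+1)^2) ≤ ((a:ℝ)+1) * (1/((a:ℝ)+1)^2) := h1
          _ = 1/((a:ℝ)+1) := by field_simp
    _ ≤ 2*Real.sqrt N := harmonic_sqrt N

lemma sum_D2 (N : ℕ) :
    ∑ x ∈ (range N ×ˢ range N).filter (fun x => ¬ x.1 + x.2 < N), 1/((x.2:ℝ)+1)^2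
      ≤ 2*Real.sqrt N := by
  have hswap : ∑ x ∈ (range N ×ˢ range N).filter (fun x => ¬ x.1 + x.2 < N), 1/((x.2:ℝ)+1)^2
      = ∑ x ∈ (range N ×ˢ range N).filter (fun x => ¬ x.1 + x.2 < N), 1/((x.1:ℝ)+1)^2 := by
    refine sum_nbij' (fun x => (x.2, x.1)) (fun x => (x.2, x.1)) ?_ ?_ ?_ ?_ ?_ <;>
      rintro ⟨a, b⟩ h <;>
      simp only [mem_filter, mem_product, mem_range] at * <;> first | omega | rfl
  rw [hswap]
  exact sum_D1 N

lemma base_tendsto (p : ℕ) (hp : 1 ≤ p) :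
    Tendsto (fun i : ℕ => 1/((i:ℝ)+1)^p) atTop (nhds 0) := by
  have h1 : Tendsto (fun i : ℕ => (i:ℝ)+1) atTop atTop :=
    tendsto_atTop_add_const_right _ 1 tendsto_natCast_atTop_atTop
  have h2 : Tendsto (fun i : ℕ => ((i:ℝ)+1)^p) atTop atTop :=
    (tendsto_pow_atTop (show p ≠ 0 by omega)).comp h1
  simp only [one_div]; exact h2.inv_tendsto_atTop

lemma base_anti (p : ℕ) : ∀ i : ℕ, 1/(((i+1:ℕ):ℝ)+1)^p ≤ 1/((i:ℝ)+1)^p := by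
  intro i
  apply one_div_le_one_div_of_le (by positivity)
  apply pow_le_pow_left₀ (by positivity)
  push_cast; linarith

lemma base_nonneg (p : ℕ) : ∀ i : ℕ, (0:ℝ) ≤ 1/((i:ℝ)+1)^p := fun i => by positivity

lemma inner_abs (p n : ℕ) : |∑ i ∈ range n, (-1:ℝ)^(i+1)/((i:ℝ)+1)^p| ≤ 1 := by
  have hcongr : ∀ i ∈ range n, (-1:ℝ)^(i+1)/((i:ℝ)+1)^p = -((-1:ℝ)^i * (1/((i:ℝ)+1)^p)) := by
    intro i _; rw [pow_succ]; ring
  rw [sum_congr rfl hcongr, Finset.sum_neg_distrib, abs_neg]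
  have := alt_abs_le (fun i => 1/((i:ℝ)+1)^p) (base_anti p) (base_nonneg p) n
  simpa using this

lemma summable_sq : Summable (fun m : ℕ => 1/(((m:ℝ)+2))^2) := by
  have h := Real.summable_one_div_nat_pow.mpr (by norm_num : 1 < 2)
  have h2 := (_root_.summable_nat_add_iff 2).mpr h
  exact h2.congr (fun n => by push_cast; ring)

lemma conv_S (c : ℕ → ℝ) (hc : ∀ m, |c m| ≤ 1) (p q : ℕ) (hq : 2 ≤ q) :
    ∃ L, Tendsto (fun N => ∑ m ∈ range N,
      (c m/((m:ℝ)+2)^q) * ∑ i ∈ range (m+1), (-1:ℝ)^(i+1)/((i:ℝ)+1)^p) atTop (nhds L) := by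
  have hsum : Summable (fun m : ℕ =>
      (c m/((m:ℝ)+2)^q) * ∑ i ∈ range (m+1), (-1:ℝ)^(i+1)/((i:ℝ)+1)^p) := by
    apply Summable.of_norm_bounded (g := fun m : ℕ => 1/((m:ℝ)+2)^2) summable_sq
    intro m
    rw [Real.norm_eq_abs, abs_mul, abs_div]
    have h2 := inner_abs p (m+1)
    have h3 : |((m:ℝ)+2)^q| = ((m:ℝ)+2)^q := abs_of_nonneg (by positivity)
    rw [h3]
    have h4 : ((m:ℝ)+2)^2 ≤ ((m:ℝ)+2)^q := pow_le_pow_right₀ (by linarith [Nat.cast_nonneg (α := ℝ) m]) hq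
    calc |c m| / ((m:ℝ)+2)^q * |∑ i ∈ range (m+1), (-1:ℝ)^(i+1)/((i:ℝ)+1)^p|
        ≤ 1 / ((m:ℝ)+2)^2 * 1 := by
          apply mul_le_mul _ h2 (abs_nonneg _) (by positivity)
          exact div_le_div₀ (by norm_num) (hc m) (by positivity) h4
      _ = 1/((m:ℝ)+2)^2 := mul_one _
  exact ⟨_, hsum.hasSum.tendsto_sum_nat⟩

lemma conv_inner (p : ℕ) (hp : 1 ≤ p) :
    ∃ L, Tendsto (fun n => ∑ i ∈ range n, (-1:ℝ)^(i+1)/((i:ℝ)+1)^p) atTop (nhds L) ∧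
      ∀ m, |L - ∑ i ∈ range m, (-1:ℝ)^(i+1)/((i:ℝ)+1)^p| ≤ 1/((m:ℝ)+1)^p := by
  obtain ⟨L0, hL0, hrem⟩ := alt_conv (fun i => 1/((i:ℝ)+1)^p) (base_anti p) (base_nonneg p)
    (base_tendsto p hp)
  have heq : ∀ n, ∑ i ∈ range n, (-1:ℝ)^(i+1)/((i:ℝ)+1)^p
      = -∑ i ∈ range n, (-1:ℝ)^i * (1/((i:ℝ)+1)^p) := by
    intro n
    rw [← Finset.sum_neg_distrib]
    apply sum_congr rfl
    intro i _; rw [pow_succ]; ring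
  refine ⟨-L0, ?_, ?_⟩
  · exact hL0.neg.congr (fun n => (heq n).symm)
  · intro m
    rw [heq m, show -L0 - -∑ i ∈ range m, (-1:ℝ)^i * (1/((i:ℝ)+1)^p)
      = -(L0 - ∑ i ∈ range m, (-1:ℝ)^i * (1/((i:ℝ)+1)^p)) from by ring, abs_neg]
    exact hrem m

lemma conv_S3_one (p : ℕ) (hp : 2 ≤ p) :
    ∃ L, Tendsto (fun N => ∑ m ∈ range N,
      ((-1:ℝ)^(m+2)/((m:ℝ)+2)^1) * ∑ i ∈ range (m+1), (-1:ℝ)^(i+1)/((i:ℝ)+1)^p)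
      atTop (nhds L) := by
  obtain ⟨LI, hLI, hrem⟩ := conv_inner p (by omega)
  have hU : ∃ LU, Tendsto (fun N => ∑ m ∈ range N, (-1:ℝ)^m * (1/((m:ℝ)+2))) atTop (nhds LU) := by
    apply Antitone.tendsto_alternating_series_of_tendsto_zero
    · apply antitone_nat_of_succ_le
      intro n
      apply one_div_le_one_div_of_le (by positivity)
      push_cast; linarith
    · have h1 : Tendsto (fun i : ℕ => (i:ℝ)+2) atTop atTop :=
        tendsto_atTop_add_const_right _ 2 tendsto_natCast_atTop_atTop
      simp only [one_div]; exact h1.inv_tendsto_atTop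
  obtain ⟨LU, hLU⟩ := hU
  have hV : Summable (fun m : ℕ => ((-1:ℝ)^m/((m:ℝ)+2)) *
      ((∑ i ∈ range (m+1), (-1:ℝ)^(i+1)/((i:ℝ)+1)^p) - LI)) := by
    apply Summable.of_norm_bounded (g := fun m : ℕ => 1/((m:ℝ)+2)^2) summable_sq
    intro m
    rw [Real.norm_eq_abs, abs_mul, abs_div, abs_pow, abs_neg, abs_one, one_pow]
    have h1 : |(∑ i ∈ range (m+1), (-1:ℝ)^(i+1)/((i:ℝ)+1)^p) - LI| ≤ 1/((m:ℝ)+2)^p := by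
      rw [abs_sub_comm]
      have := hrem (m+1)
      have hc : (((m+1:ℕ)):ℝ)+1 = (m:ℝ)+2 := by push_cast; ring
      rwa [hc] at this
    have h2 : 1/((m:ℝ)+2)^p ≤ 1/((m:ℝ)+2) := by
      apply one_div_le_one_div_of_le (by positivity)
      calc (m:ℝ)+2 = ((m:ℝ)+2)^1 := (pow_one _).symm
        _ ≤ ((m:ℝ)+2)^p := pow_le_pow_right₀ (by linarith [Nat.cast_nonneg (α := ℝ) m]) (by omega)
    have h3 : |(m:ℝ)+2| = (m:ℝ)+2 := abs_of_nonneg (by positivity)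
    rw [h3]
    have hm2 : (0:ℝ) < (m:ℝ)+2 := by positivity
    calc 1/((m:ℝ)+2) * |(∑ i ∈ range (m+1), (-1:ℝ)^(i+1)/((i:ℝ)+1)^p) - LI|
        ≤ 1/((m:ℝ)+2) * (1/((m:ℝ)+2)) := by
          apply mul_le_mul_of_nonneg_left (le_trans h1 h2) (by positivity)
      _ = 1/((m:ℝ)+2)^2 := by field_simp
  have key : ∀ N, ∑ m ∈ range N,
      ((-1:ℝ)^(m+2)/((m:ℝ)+2)^1) * ∑ i ∈ range (m+1), (-1:ℝ)^(i+1)/((i:ℝ)+1)^p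
      = LI * (∑ m ∈ range N, (-1:ℝ)^m * (1/((m:ℝ)+2)))
        + ∑ m ∈ range N, ((-1:ℝ)^m/((m:ℝ)+2)) *
            ((∑ i ∈ range (m+1), (-1:ℝ)^(i+1)/((i:ℝ)+1)^p) - LI) := by
    intro N
    rw [mul_sum, ← sum_add_distrib]
    apply sum_congr rfl
    intro m _
    have hs : (-1:ℝ)^(m+2) = (-1:ℝ)^m := by rw [pow_add]; norm_num
    rw [hs, pow_one]
    ring
  refine ⟨LI * LU + ∑' m : ℕ, ((-1:ℝ)^m/((m:ℝ)+2)) *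
      ((∑ i ∈ range (m+1), (-1:ℝ)^(i+1)/((i:ℝ)+1)^p) - LI), ?_⟩
  exact ((hLU.const_mul LI).add hV.hasSum.tendsto_sum_nat).congr (fun N => (key N).symm)

lemma conv_B (s : ℕ) (hs : 2 ≤ s) :
    ∃ L, Tendsto (fun N => ∑ m ∈ range N, 1/((m:ℝ)+1)^s) atTop (nhds L) := by
  have h := Real.summable_one_div_nat_pow.mpr (show 1 < s by omega)
  have h2 := (_root_.summable_nat_add_iff 1).mpr h
  have h3 : Summable (fun m : ℕ => 1/((m:ℝ)+1)^s) := h2.congr (fun n => by push_cast; ring)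
  exact ⟨_, h3.hasSum.tendsto_sum_nat⟩

lemma sqrt_nat_tendsto : Tendsto (fun n : ℕ => Real.sqrt n) atTop atTop := by
  refine tendsto_atTop_atTop.mpr (fun b => ⟨(⌈b⌉₊)^2, fun n hn => ?_⟩)
  have h1 : (((⌈b⌉₊)^2 : ℕ):ℝ) ≤ (n:ℝ) := Nat.cast_le.mpr hn
  calc b ≤ (⌈b⌉₊ : ℝ) := Nat.le_ceil b
    _ = Real.sqrt (((⌈b⌉₊:ℝ))^2) := (Real.sqrt_sq (by positivity)).symm
    _ ≤ Real.sqrt n := Real.sqrt_le_sqrt (by push_cast at h1 ⊢; linarith)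

lemma pointwise_pf (r s k : ℕ) (hr : 1 ≤ r) (hs : 1 ≤ s) (hk : r + s = k) (a b : ℕ) :
    ((-1:ℝ)^(a+1)/((a:ℝ)+1)^r) * (1/((b:ℝ)+1)^s)
    = ∑ i ∈ range (k-1), (((i.choose (r-1)):ℝ) * auxG3 (k-1-i) (i+1) (a,b)
        + ((i.choose (s-1)):ℝ) * auxG1 (k-1-i) (i+1) (a,b)) := by
  have hpf := pfrac k r s hk hr hs ((a:ℝ)+1) ((b:ℝ)+1) (by positivity) (by positivity)
  have hstep : ((-1:ℝ)^(a+1)/((a:ℝ)+1)^r) * (1/((b:ℝ)+1)^s)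
      = (-1:ℝ)^(a+1) * (1/(((a:ℝ)+1)^r * ((b:ℝ)+1)^s)) := by
    rw [div_mul_div_comm, mul_one, mul_one_div]
  rw [hstep, hpf, mul_sum]
  apply sum_congr rfl
  intro i _
  simp only [auxG3, auxG1]
  have hxy : (a:ℝ) + 1 + ((b:ℝ) + 1) = (a:ℝ) + (b:ℝ) + 2 := by ring
  rw [hxy]
  ring

lemma G3_bound (p q N : ℕ) (hq : 1 ≤ q) (hpq : 3 ≤ p + q) (x : ℕ × ℕ)
    (hx : x ∈ (range N ×ˢ range N).filter (fun x => ¬ x.1 + x.2 < N)) :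
    |auxG3 p q x| ≤ (1/(N:ℝ)) * (1/((x.2:ℝ)+1)^2) := by
  obtain ⟨a, b⟩ := x
  simp only [mem_filter, mem_product, mem_range] at hx
  obtain ⟨⟨ha, hb⟩, hab⟩ := hx
  have hNpos : (0:ℝ) < (N:ℝ) := by
    have : 0 < N := by omega
    exact_mod_cast this
  have hbound : (N:ℝ) * ((b:ℝ)+1)^2 ≤ ((a:ℝ)+(b:ℝ)+2)^q * ((b:ℝ)+1)^p := by
    have h4 : (N:ℝ) ≤ (a:ℝ)+(b:ℝ)+2 := by
      have : (N:ℝ) ≤ (a:ℝ)+(b:ℝ) := by exact_mod_cast (by omega : N ≤ a + b)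
      linarith
    have h3 : ((b:ℝ)+1)^2 ≤ ((b:ℝ)+1)^((q-1)+p) :=
      pow_le_pow_right₀ (by linarith [Nat.cast_nonneg (α := ℝ) b]) (by omega)
    have h2 : ((b:ℝ)+1)^(q-1) ≤ ((a:ℝ)+(b:ℝ)+2)^(q-1) :=
      pow_le_pow_left₀ (by positivity) (by linarith [Nat.cast_nonneg (α := ℝ) a]) _
    have h1 : ((a:ℝ)+(b:ℝ)+2)^q = ((a:ℝ)+(b:ℝ)+2) * ((a:ℝ)+(b:ℝ)+2)^(q-1) := by
      rw [← pow_succ']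
      congr 1
      omega
    calc (N:ℝ) * ((b:ℝ)+1)^2
        ≤ ((a:ℝ)+(b:ℝ)+2) * ((b:ℝ)+1)^((q-1)+p) := by
          apply mul_le_mul h4 h3 (by positivity) (by positivity)
      _ = ((a:ℝ)+(b:ℝ)+2) * (((b:ℝ)+1)^(q-1) * ((b:ℝ)+1)^p) := by rw [pow_add]
      _ ≤ ((a:ℝ)+(b:ℝ)+2) * (((a:ℝ)+(b:ℝ)+2)^(q-1) * ((b:ℝ)+1)^p) := by
          apply mul_le_mul_of_nonneg_left _ (by positivity)
          exact mul_le_mul_of_nonneg_right h2 (by positivity)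
      _ = ((a:ℝ)+(b:ℝ)+2)^q * ((b:ℝ)+1)^p := by rw [h1]; ring
  simp only [auxG3]
  rw [abs_div, abs_pow, abs_neg, abs_one, one_pow,
    abs_of_nonneg (show (0:ℝ) ≤ ((a:ℝ)+(b:ℝ)+2)^q * ((b:ℝ)+1)^p by positivity),
    one_div_mul_one_div]
  exact one_div_le_one_div_of_le (by positivity) hbound

lemma G1_bound (p q N : ℕ) (hq : 1 ≤ q) (hpq : 3 ≤ p + q) (x : ℕ × ℕ)
    (hx : x ∈ (range N ×ˢ range N).filter (fun x => ¬ x.1 + x.2 < N)) :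
    |auxG1 p q x| ≤ (1/(N:ℝ)) * (1/((x.1:ℝ)+1)^2) := by
  obtain ⟨a, b⟩ := x
  simp only [mem_filter, mem_product, mem_range] at hx
  obtain ⟨⟨ha, hb⟩, hab⟩ := hx
  have hNpos : (0:ℝ) < (N:ℝ) := by
    have : 0 < N := by omega
    exact_mod_cast this
  have hbound : (N:ℝ) * ((a:ℝ)+1)^2 ≤ ((a:ℝ)+(b:ℝ)+2)^q * ((a:ℝ)+1)^p := by
    have h4 : (N:ℝ) ≤ (a:ℝ)+(b:ℝ)+2 := by
      have : (N:ℝ) ≤ (a:ℝ)+(b:ℝ) := by exact_mod_cast (by omega : N ≤ a + b)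
      linarith
    have h3 : ((a:ℝ)+1)^2 ≤ ((a:ℝ)+1)^((q-1)+p) :=
      pow_le_pow_right₀ (by linarith [Nat.cast_nonneg (α := ℝ) a]) (by omega)
    have h2 : ((a:ℝ)+1)^(q-1) ≤ ((a:ℝ)+(b:ℝ)+2)^(q-1) :=
      pow_le_pow_left₀ (by positivity) (by linarith [Nat.cast_nonneg (α := ℝ) b]) _
    have h1 : ((a:ℝ)+(b:ℝ)+2)^q = ((a:ℝ)+(b:ℝ)+2) * ((a:ℝ)+(b:ℝ)+2)^(q-1) := by
      rw [← pow_succ']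
      congr 1
      omega
    calc (N:ℝ) * ((a:ℝ)+1)^2
        ≤ ((a:ℝ)+(b:ℝ)+2) * ((a:ℝ)+1)^((q-1)+p) := by
          apply mul_le_mul h4 h3 (by positivity) (by positivity)
      _ = ((a:ℝ)+(b:ℝ)+2) * (((a:ℝ)+1)^(q-1) * ((a:ℝ)+1)^p) := by rw [pow_add]
      _ ≤ ((a:ℝ)+(b:ℝ)+2) * (((a:ℝ)+(b:ℝ)+2)^(q-1) * ((a:ℝ)+1)^p) := by
          apply mul_le_mul_of_nonneg_left _ (by positivity)
          exact mul_le_mul_of_nonneg_right h2 (by positivity)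
      _ = ((a:ℝ)+(b:ℝ)+2)^q * ((a:ℝ)+1)^p := by rw [h1]; ring
  simp only [auxG1]
  rw [abs_div, abs_pow, abs_neg, abs_one, one_pow,
    abs_of_nonneg (show (0:ℝ) ≤ ((a:ℝ)+(b:ℝ)+2)^q * ((a:ℝ)+1)^p by positivity),
    one_div_mul_one_div]
  exact one_div_le_one_div_of_le (by positivity) hbound

lemma errsum3 (p q N : ℕ) (hq : 1 ≤ q) (hpq : 3 ≤ p + q) :
    |∑ x ∈ (range N ×ˢ range N).filter (fun x => ¬ x.1 + x.2 < N), auxG3 p q x|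
      ≤ (1/(N:ℝ)) * (2*Real.sqrt N) := by
  calc |∑ x ∈ (range N ×ˢ range N).filter (fun x => ¬ x.1 + x.2 < N), auxG3 p q x|
      ≤ ∑ x ∈ (range N ×ˢ range N).filter (fun x => ¬ x.1 + x.2 < N), |auxG3 p q x| :=
        abs_sum_le_sum_abs _ _
    _ ≤ ∑ x ∈ (range N ×ˢ range N).filter (fun x => ¬ x.1 + x.2 < N),
          (1/(N:ℝ)) * (1/((x.2:ℝ)+1)^2) :=
        sum_le_sum (fun x hx => G3_bound p q N hq hpq x hx)
    _ = (1/(N:ℝ)) * ∑ x ∈ (range N ×ˢ range N).filter (fun x => ¬ x.1 + x.2 < N),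
          1/((x.2:ℝ)+1)^2 := by rw [mul_sum]
    _ ≤ (1/(N:ℝ)) * (2*Real.sqrt N) :=
        mul_le_mul_of_nonneg_left (sum_D2 N) (by positivity)

lemma errsum1 (p q N : ℕ) (hq : 1 ≤ q) (hpq : 3 ≤ p + q) :
    |∑ x ∈ (range N ×ˢ range N).filter (fun x => ¬ x.1 + x.2 < N), auxG1 p q x|
      ≤ (1/(N:ℝ)) * (2*Real.sqrt N) := by
  calc |∑ x ∈ (range N ×ˢ range N).filter (fun x => ¬ x.1 + x.2 < N), auxG1 p q x|
      ≤ ∑ x ∈ (range N ×ˢ range N).filter (fun x => ¬ x.1 + x.2 < N), |auxG1 p q x| :=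
        abs_sum_le_sum_abs _ _
    _ ≤ ∑ x ∈ (range N ×ˢ range N).filter (fun x => ¬ x.1 + x.2 < N),
          (1/(N:ℝ)) * (1/((x.1:ℝ)+1)^2) :=
        sum_le_sum (fun x hx => G1_bound p q N hq hpq x hx)
    _ = (1/(N:ℝ)) * ∑ x ∈ (range N ×ˢ range N).filter (fun x => ¬ x.1 + x.2 < N),
          1/((x.1:ℝ)+1)^2 := by rw [mul_sum]
    _ ≤ (1/(N:ℝ)) * (2*Real.sqrt N) :=
        mul_le_mul_of_nonneg_left (sum_D1 N) (by positivity)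

lemma main_range (r s k : ℕ) (hr : 1 ≤ r) (hs : 2 ≤ s) (hk : r + s = k) :
    zetaA r * zeta s
      = (∑ i ∈ Finset.range (k-1), ((i.choose (r-1) : ℝ) * dzetaA3 (k-1-i) (i+1)))
        + ∑ i ∈ Finset.range (k-1), ((i.choose (s-1) : ℝ) * dzetaA1 (k-1-i) (i+1)) := by
  have hk3 : 3 ≤ k := by omega
  obtain ⟨LA, hLA, _⟩ := conv_inner r hr
  have hzetaA : zetaA r = LA := by
    rw [zetaA, if_neg (show ¬ r = 0 by omega)]
    exact hLA.limUnder_eq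
  obtain ⟨LB, hLB⟩ := conv_B s hs
  have hzeta : zeta s = LB := by
    rw [zeta, if_neg (show ¬ s = 0 by omega)]
    exact hLB.limUnder_eq
  -- convergence of the RHS partial sums
  have hterm3 : ∀ i ∈ range (k-1), Tendsto (fun N => (i.choose (r-1) : ℝ) *
      ∑ m ∈ range N, ((-1:ℝ)^(m+2)/((m:ℝ)+2)^(i+1)) *
        ∑ j ∈ range (m+1), (-1:ℝ)^(j+1)/((j:ℝ)+1)^(k-1-i))
      atTop (nhds ((i.choose (r-1) : ℝ) * dzetaA3 (k-1-i) (i+1))) := by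
    intro i hi
    rw [mem_range] at hi
    by_cases hzero : (i.choose (r-1) : ℝ) = 0
    · rw [hzero]
      simpa using tendsto_const_nhds
    · have hconv : ∃ L, Tendsto (fun N => ∑ m ∈ range N, ((-1:ℝ)^(m+2)/((m:ℝ)+2)^(i+1)) *
          ∑ j ∈ range (m+1), (-1:ℝ)^(j+1)/((j:ℝ)+1)^(k-1-i)) atTop (nhds L) := by
        rcases Nat.eq_zero_or_pos i with hi0 | hip
        · subst hi0
          have hr1 : r = 1 := by
            by_contra hne
            rw [Nat.choose_eq_zero_of_lt (show 0 < r - 1 by omega)] at hzero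
            simp at hzero
          have hks : k - 1 - 0 = s := by omega
          rw [hks]
          simpa using conv_S3_one s hs
        · exact conv_S (fun m => (-1:ℝ)^(m+2))
            (fun m => by rw [abs_pow, abs_neg, abs_one, one_pow]) (k-1-i) (i+1) (by omega)
      obtain ⟨L, hL⟩ := hconv
      have hdz : dzetaA3 (k-1-i) (i+1) = L := by
        rw [dzetaA3]
        exact hL.limUnder_eq
      rw [hdz]
      exact hL.const_mul _
  have hterm1 : ∀ i ∈ range (k-1), Tendsto (fun N => (i.choose (s-1) : ℝ) *
      ∑ m ∈ range N, (1/((m:ℝ)+2)^(i+1)) *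
        ∑ j ∈ range (m+1), (-1:ℝ)^(j+1)/((j:ℝ)+1)^(k-1-i))
      atTop (nhds ((i.choose (s-1) : ℝ) * dzetaA1 (k-1-i) (i+1))) := by
    intro i hi
    rw [mem_range] at hi
    by_cases hzero : (i.choose (s-1) : ℝ) = 0
    · rw [hzero]
      simpa using tendsto_const_nhds
    · have hip : 1 ≤ i := by
        by_contra hne
        have : i = 0 := by omega
        subst this
        rw [Nat.choose_eq_zero_of_lt (show 0 < s - 1 by omega)] at hzero
        simp at hzero
      have hconv := conv_S (fun _ => (1:ℝ)) (fun m => by norm_num) (k-1-i) (i+1) (by omega)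
      obtain ⟨L, hL⟩ := hconv
      have hL' : Tendsto (fun N => ∑ m ∈ range N, (1/((m:ℝ)+2)^(i+1)) *
          ∑ j ∈ range (m+1), (-1:ℝ)^(j+1)/((j:ℝ)+1)^(k-1-i)) atTop (nhds L) := hL
      have hdz : dzetaA1 (k-1-i) (i+1) = L := by
        rw [dzetaA1]
        exact hL'.limUnder_eq
      rw [hdz]
      exact hL'.const_mul _
  have hRHS3 := tendsto_finset_sum (range (k-1)) hterm3
  have hRHS1 := tendsto_finset_sum (range (k-1)) hterm1
  -- the finite key identity
  have key : ∀ N : ℕ,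
      (∑ m ∈ range N, (-1:ℝ)^(m+1)/((m:ℝ)+1)^r) * (∑ m ∈ range N, 1/((m:ℝ)+1)^s)
      = ((∑ i ∈ range (k-1), (i.choose (r-1) : ℝ) *
            ∑ m ∈ range N, ((-1:ℝ)^(m+2)/((m:ℝ)+2)^(i+1)) *
              ∑ j ∈ range (m+1), (-1:ℝ)^(j+1)/((j:ℝ)+1)^(k-1-i))
          + ∑ i ∈ range (k-1), (i.choose (s-1) : ℝ) *
              ∑ m ∈ range N, (1/((m:ℝ)+2)^(i+1)) *
                ∑ j ∈ range (m+1), (-1:ℝ)^(j+1)/((j:ℝ)+1)^(k-1-i))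
        + ∑ i ∈ range (k-1), ((i.choose (r-1) : ℝ) *
              (∑ x ∈ (range N ×ˢ range N).filter (fun x => ¬ x.1 + x.2 < N),
                auxG3 (k-1-i) (i+1) x)
            + (i.choose (s-1) : ℝ) *
              (∑ x ∈ (range N ×ˢ range N).filter (fun x => ¬ x.1 + x.2 < N),
                auxG1 (k-1-i) (i+1) x)) := by
    intro N
    rw [Finset.sum_mul_sum, ← Finset.sum_product']
    rw [sum_congr rfl (fun x _ => pointwise_pf r s k hr (by omega) hk x.1 x.2), sum_comm]
    have hper : ∀ i ∈ range (k-1),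
        (∑ x ∈ range N ×ˢ range N, ((i.choose (r-1) : ℝ) * auxG3 (k-1-i) (i+1) x
          + (i.choose (s-1) : ℝ) * auxG1 (k-1-i) (i+1) x))
        = (((i.choose (r-1) : ℝ) *
            ∑ m ∈ range N, ((-1:ℝ)^(m+2)/((m:ℝ)+2)^(i+1)) *
              ∑ j ∈ range (m+1), (-1:ℝ)^(j+1)/((j:ℝ)+1)^(k-1-i))
          + ((i.choose (s-1) : ℝ) *
            ∑ m ∈ range N, (1/((m:ℝ)+2)^(i+1)) *
              ∑ j ∈ range (m+1), (-1:ℝ)^(j+1)/((j:ℝ)+1)^(k-1-i)))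
          + ((i.choose (r-1) : ℝ) *
              (∑ x ∈ (range N ×ˢ range N).filter (fun x => ¬ x.1 + x.2 < N),
                auxG3 (k-1-i) (i+1) x)
            + (i.choose (s-1) : ℝ) *
              (∑ x ∈ (range N ×ˢ range N).filter (fun x => ¬ x.1 + x.2 < N),
                auxG1 (k-1-i) (i+1) x)) := by
      intro i _
      rw [sum_add_distrib, ← mul_sum, ← mul_sum,
        ← sum_filter_add_sum_filter_not (range N ×ˢ range N) (fun x => x.1 + x.2 < N)
          (auxG3 (k-1-i) (i+1)),
        ← sum_filter_add_sum_filter_not (range N ×ˢ range N) (fun x => x.1 + x.2 < N)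
          (auxG1 (k-1-i) (i+1)),
        ← tri3 (k-1-i) (i+1) N, ← tri1 (k-1-i) (i+1) N]
      ring
    rw [sum_congr rfl hper, sum_add_distrib, sum_add_distrib]
  -- the error term tends to zero
  have hE : Tendsto (fun N => ∑ i ∈ range (k-1), ((i.choose (r-1) : ℝ) *
        (∑ x ∈ (range N ×ˢ range N).filter (fun x => ¬ x.1 + x.2 < N),
          auxG3 (k-1-i) (i+1) x)
      + (i.choose (s-1) : ℝ) *
        (∑ x ∈ (range N ×ˢ range N).filter (fun x => ¬ x.1 + x.2 < N),
          auxG1 (k-1-i) (i+1) x))) atTop (nhds 0) := by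
    have hEb : ∀ N : ℕ, |∑ i ∈ range (k-1), ((i.choose (r-1) : ℝ) *
          (∑ x ∈ (range N ×ˢ range N).filter (fun x => ¬ x.1 + x.2 < N),
            auxG3 (k-1-i) (i+1) x)
        + (i.choose (s-1) : ℝ) *
          (∑ x ∈ (range N ×ˢ range N).filter (fun x => ¬ x.1 + x.2 < N),
            auxG1 (k-1-i) (i+1) x))|
        ≤ (∑ i ∈ range (k-1), ((i.choose (r-1) : ℝ) + (i.choose (s-1) : ℝ)))
            * ((1/(N:ℝ)) * (2*Real.sqrt N)) := by
      intro N
      calc |∑ i ∈ range (k-1), ((i.choose (r-1) : ℝ) *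
            (∑ x ∈ (range N ×ˢ range N).filter (fun x => ¬ x.1 + x.2 < N),
              auxG3 (k-1-i) (i+1) x)
          + (i.choose (s-1) : ℝ) *
            (∑ x ∈ (range N ×ˢ range N).filter (fun x => ¬ x.1 + x.2 < N),
              auxG1 (k-1-i) (i+1) x))|
          ≤ ∑ i ∈ range (k-1), |((i.choose (r-1) : ℝ) *
            (∑ x ∈ (range N ×ˢ range N).filter (fun x => ¬ x.1 + x.2 < N),
              auxG3 (k-1-i) (i+1) x)
          + (i.choose (s-1) : ℝ) *
            (∑ x ∈ (range N ×ˢ range N).filter (fun x => ¬ x.1 + x.2 < N),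
              auxG1 (k-1-i) (i+1) x))| := abs_sum_le_sum_abs _ _
        _ ≤ ∑ i ∈ range (k-1), ((i.choose (r-1) : ℝ) * ((1/(N:ℝ)) * (2*Real.sqrt N))
              + (i.choose (s-1) : ℝ) * ((1/(N:ℝ)) * (2*Real.sqrt N))) := by
            apply sum_le_sum
            intro i hi
            rw [mem_range] at hi
            have hq1 : 1 ≤ i + 1 := by omega
            have hpq : 3 ≤ (k-1-i) + (i+1) := by omega
            calc |(i.choose (r-1) : ℝ) *
                (∑ x ∈ (range N ×ˢ range N).filter (fun x => ¬ x.1 + x.2 < N),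
                  auxG3 (k-1-i) (i+1) x)
              + (i.choose (s-1) : ℝ) *
                (∑ x ∈ (range N ×ˢ range N).filter (fun x => ¬ x.1 + x.2 < N),
                  auxG1 (k-1-i) (i+1) x)|
                ≤ |(i.choose (r-1) : ℝ) *
                  (∑ x ∈ (range N ×ˢ range N).filter (fun x => ¬ x.1 + x.2 < N),
                    auxG3 (k-1-i) (i+1) x)|
                + |(i.choose (s-1) : ℝ) *
                  (∑ x ∈ (range N ×ˢ range N).filter (fun x => ¬ x.1 + x.2 < N),
                    auxG1 (k-1-i) (i+1) x)| := abs_add_le _ _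
              _ ≤ (i.choose (r-1) : ℝ) * ((1/(N:ℝ)) * (2*Real.sqrt N))
                  + (i.choose (s-1) : ℝ) * ((1/(N:ℝ)) * (2*Real.sqrt N)) := by
                  have b3 : |(i.choose (r-1) : ℝ) *
                      (∑ x ∈ (range N ×ˢ range N).filter (fun x => ¬ x.1 + x.2 < N),
                        auxG3 (k-1-i) (i+1) x)|
                      ≤ (i.choose (r-1) : ℝ) * ((1/(N:ℝ)) * (2*Real.sqrt N)) := by
                    rw [abs_mul, abs_of_nonneg (Nat.cast_nonneg _)]
                    exact mul_le_mul_of_nonneg_left (errsum3 (k-1-i) (i+1) N hq1 hpq)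
                      (Nat.cast_nonneg _)
                  have b1 : |(i.choose (s-1) : ℝ) *
                      (∑ x ∈ (range N ×ˢ range N).filter (fun x => ¬ x.1 + x.2 < N),
                        auxG1 (k-1-i) (i+1) x)|
                      ≤ (i.choose (s-1) : ℝ) * ((1/(N:ℝ)) * (2*Real.sqrt N)) := by
                    rw [abs_mul, abs_of_nonneg (Nat.cast_nonneg _)]
                    exact mul_le_mul_of_nonneg_left (errsum1 (k-1-i) (i+1) N hq1 hpq)
                      (Nat.cast_nonneg _)
                  exact add_le_add b3 b1
        _ = (∑ i ∈ range (k-1), ((i.choose (r-1) : ℝ) + (i.choose (s-1) : ℝ)))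
              * ((1/(N:ℝ)) * (2*Real.sqrt N)) := by
            rw [sum_mul]
            apply sum_congr rfl
            intro i _
            ring
    have hg : Tendsto (fun N : ℕ =>
        (∑ i ∈ range (k-1), ((i.choose (r-1) : ℝ) + (i.choose (s-1) : ℝ)))
          * ((1/(N:ℝ)) * (2*Real.sqrt N))) atTop (nhds 0) := by
      have h1 : Tendsto (fun N : ℕ =>
          ((∑ i ∈ range (k-1), ((i.choose (r-1) : ℝ) + (i.choose (s-1) : ℝ))) * 2)
            / Real.sqrt N) atTop (nhds 0) :=
        Tendsto.div_atTop tendsto_const_nhds sqrt_nat_tendsto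
      apply h1.congr'
      filter_upwards [eventually_ge_atTop 1] with N hN
      have hNpos : (0:ℝ) < (N:ℝ) := by exact_mod_cast (show 0 < N by omega)
      have hsq : Real.sqrt N * Real.sqrt N = (N:ℝ) := Real.mul_self_sqrt (by positivity)
      have hsqpos : (0:ℝ) < Real.sqrt N := Real.sqrt_pos.mpr hNpos
      have haux : (1/(N:ℝ)) * (2*Real.sqrt N) = 2/Real.sqrt N := by
        rw [eq_div_iff (ne_of_gt hsqpos)]
        field_simp
        nlinarith [hsq]
      rw [haux]
      field_simp
    exact squeeze_zero_norm (fun N => by simpa using hEb N) (hg)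
  -- conclude
  have h1 : Tendsto (fun N => (∑ m ∈ range N, (-1:ℝ)^(m+1)/((m:ℝ)+1)^r)
      * (∑ m ∈ range N, 1/((m:ℝ)+1)^s)) atTop (nhds (LA * LB)) := hLA.mul hLB
  have h2 : Tendsto (fun N => (∑ m ∈ range N, (-1:ℝ)^(m+1)/((m:ℝ)+1)^r)
      * (∑ m ∈ range N, 1/((m:ℝ)+1)^s)) atTop
      (nhds (((∑ i ∈ range (k-1), (i.choose (r-1) : ℝ) * dzetaA3 (k-1-i) (i+1))
        + ∑ i ∈ range (k-1), (i.choose (s-1) : ℝ) * dzetaA1 (k-1-i) (i+1)) + 0)) :=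
    ((hRHS3.add hRHS1).add hE).congr (fun N => (key N).symm)
  rw [hzetaA, hzeta, tendsto_nhds_unique h1 h2, add_zero]

theorem shuffle_alt (r s k : ℕ) (hr : 1 ≤ r) (hs : 2 ≤ s) (hk : r + s = k) :
    zetaA r * zeta s =
      (∑ j ∈ Finset.Icc 1 (k-1), ((j-1).choose (r-1) : ℝ) * dzetaA3 (k-j) j)
      + ∑ j ∈ Finset.Icc 1 (k-1), ((j-1).choose (s-1) : ℝ) * dzetaA1 (k-j) j := by
  rw [← Finset.Ico_add_one_right_eq_Icc, show k - 1 + 1 = k from by omega,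
    Finset.sum_Ico_eq_sum_range, Finset.sum_Ico_eq_sum_range,
    main_range r s k hr hs hk]
  congr 1
  · apply sum_congr rfl
    intro i _
    rw [show 1 + i - 1 = i from by omega, show k - (1 + i) = k - 1 - i from by omega,
      show 1 + i = i + 1 from by omega]
  · apply sum_congr rfl
    intro i _
    rw [show 1 + i - 1 = i from by omega, show k - (1 + i) = k - 1 - i from by omega,
      show 1 + i = i + 1 from by omega]
end

section
/- For integers r, s ≥ 1 with r + s = k ≥ 3, the shuffle relation ζ(r̄)ζ(s̄) = Σ_{j=1}^{k-1} C(j-1, r-1) ζ(k-j, j̄) + Σ_{j=1}^{k-1} C(j-1, s-1) ζ(k-j, j̄) holds. -/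
open Filter Finset Real Topology

lemma sum_Icc_one (f : ℕ → ℝ) (n : ℕ) : ∑ j ∈ Icc 1 n, f j = ∑ i ∈ range n, f (i+1) := by
  induction n with
  | zero => simp
  | succ n ih =>
    rw [Finset.sum_range_succ, ← ih, ← Finset.sum_Icc_succ_top (by omega : 1 ≤ n+1)]

lemma pf_base (x y : ℝ) (hx : x ≠ 0) (hy : y ≠ 0) (hxy : x + y ≠ 0) :
    ∀ r : ℕ, 1 ≤ r →
    1/(x^r * y) = (∑ j ∈ Icc 1 r, 1/((x+y)^j * x^(r+1-j))) + 1/((x+y)^r * y) := by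
  intro r hr
  induction r, hr using Nat.le_induction with
  | base =>
    rw [Finset.Icc_self, Finset.sum_singleton]
    field_simp
    ring
  | succ r hr ih =>
    have key : 1/(x^(r+1) * y) = (1/(x+y)) * (1/(x^r * y)) + 1/((x+y) * x^(r+1)) := by
      field_simp
      ring
    have h1 : (1/(x+y)) * ((∑ j ∈ Icc 1 r, 1/((x+y)^j * x^(r+1-j))) + 1/((x+y)^r * y))
        = (∑ j ∈ Icc 1 r, 1/((x+y)^(j+1) * x^(r+1-j))) + 1/((x+y)^(r+1) * y) := by
      rw [mul_add, Finset.mul_sum]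
      congr 1
      · refine Finset.sum_congr rfl fun j hj => ?_
        rw [pow_succ]
        field_simp
      · rw [pow_succ]
        field_simp
    rw [key, ih, h1, sum_Icc_one, sum_Icc_one (fun j => 1/((x+y)^j * x^(r+2-j))) (r+1),
      Finset.sum_range_succ']
    have h2 : ∀ i ∈ range r, 1/((x+y)^(i+1+1) * x^(r+1-(i+1)))
        = 1/((x+y)^(i+1+1) * x^(r+2-(i+1+1))) := by
      intro i hi
      have : r+1-(i+1) = r+2-(i+1+1) := by omega
      rw [this]
    rw [Finset.sum_congr rfl h2]
    have : r + 2 - (0+1) = r + 1 := by omega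
    rw [this]
    ring

lemma choose_collapse (r : ℕ) (hr : 1 ≤ r) (h : ℕ → ℝ) :
    ∑ j ∈ Icc 1 r, ((j-1).choose (r-1) : ℝ) * h j = h r := by
  rw [Finset.sum_eq_single r]
  · rw [Nat.choose_self, Nat.cast_one, one_mul]
  · intro j hj hjr
    simp only [Finset.mem_Icc] at hj
    rw [Nat.choose_eq_zero_of_lt (by omega), Nat.cast_zero, zero_mul]
  · intro h'
    simp only [Finset.mem_Icc] at h'
    omega

lemma pf (x y : ℝ) (hx : x ≠ 0) (hy : y ≠ 0) (hxy : x + y ≠ 0) :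
    ∀ n r s : ℕ, 1 ≤ r → 1 ≤ s → r + s = n →
    1/(x^r * y^s) = ∑ j ∈ Icc 1 (n-1),
      (((j-1).choose (r-1) : ℝ)/((x+y)^j * y^(n-j))
        + ((j-1).choose (s-1) : ℝ)/((x+y)^j * x^(n-j))) := by
  intro n
  induction n using Nat.strong_induction_on with
  | _ n IH =>
    intro r s hr hs hn
    rcases eq_or_lt_of_le hs with hs1 | hs2
    · -- s = 1
      subst hn
      rw [← hs1]
      rw [Finset.sum_add_distrib]
      have e1 : r + 1 - 1 = r := by omega
      rw [e1]
      have c1 : ∑ j ∈ Icc 1 r, ((j-1).choose (r-1) : ℝ)/((x+y)^j * y^(r+1-j))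
          = 1/((x+y)^r * y) := by
        have := choose_collapse r hr (fun j => 1/((x+y)^j * y^(r+1-j)))
        simp only [mul_one_div] at this
        rw [this]
        have e : r+1-r = 1 := by omega
        rw [e, pow_one]
      have c2 : ∑ j ∈ Icc 1 r, ((j-1).choose (1-1) : ℝ)/((x+y)^j * x^(r+1-j))
          = ∑ j ∈ Icc 1 r, 1/((x+y)^j * x^(r+1-j)) := by
        refine Finset.sum_congr rfl fun j hj => ?_
        simp
      rw [c1, c2, pow_one, pf_base x y hx hy hxy r hr]
      ring
    · rcases eq_or_lt_of_le hr with hr1 | hr2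
      · -- r = 1, s ≥ 2
        subst hn
        rw [← hr1]
        rw [Finset.sum_add_distrib]
        have e1 : 1 + s - 1 = s := by omega
        rw [e1]
        have c1 : ∑ j ∈ Icc 1 s, ((j-1).choose (s-1) : ℝ)/((x+y)^j * x^(1+s-j))
            = 1/((x+y)^s * x) := by
          have := choose_collapse s hs (fun j => 1/((x+y)^j * x^(1+s-j)))
          simp only [mul_one_div] at this
          rw [this]
          have e : 1+s-s = 1 := by omega
          rw [e, pow_one]
        have c2 : ∑ j ∈ Icc 1 s, ((j-1).choose (1-1) : ℝ)/((x+y)^j * y^(1+s-j))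
            = ∑ j ∈ Icc 1 s, 1/((x+y)^j * y^(1+s-j)) := by
          refine Finset.sum_congr rfl fun j hj => ?_
          simp
        have base := pf_base y x hy hx (by rwa [add_comm]) s hs
        rw [add_comm y x] at base
        have sc : ∑ j ∈ Icc 1 s, 1/((x+y)^j * y^(s+1-j))
            = ∑ j ∈ Icc 1 s, 1/((x+y)^j * y^(1+s-j)) := by
          rw [Nat.add_comm s 1]
        rw [c1, c2, pow_one, ← sc]
        rw [mul_comm (y^s) x] at base
        rw [base]
      · -- r ≥ 2, s ≥ 2
        obtain ⟨a, rfl⟩ : ∃ a, r = a + 2 := ⟨r - 2, by omega⟩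
        obtain ⟨b, rfl⟩ : ∃ b, s = b + 2 := ⟨s - 2, by omega⟩
        subst hn
        have key : 1/(x^(a+2) * y^(b+2))
            = (1/(x+y)) * (1/(x^(a+1) * y^(b+2)) + 1/(x^(a+2) * y^(b+1))) := by
          field_simp
          ring
        have IH1 := IH (a+1+(b+2)) (by omega) (a+1) (b+2) (by omega) (by omega) rfl
        have IH2 := IH (a+2+(b+1)) (by omega) (a+2) (b+1) (by omega) (by omega) rfl
        rw [key, IH1, IH2]
        have hb1 : a+1+(b+2)-1 = a+b+2 := by omega
        have hb2 : a+2+(b+1)-1 = a+b+2 := by omega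
        have hb3 : a+2+(b+2)-1 = a+b+3 := by omega
        rw [hb1, hb2, hb3, ← Finset.sum_add_distrib, Finset.mul_sum]
        set M := x + y with hM
        set g : ℕ → ℝ := fun j => ((j-1).choose (a+2-1) : ℝ)/(M^j * y^(a+2+(b+2)-j))
            + ((j-1).choose (b+2-1) : ℝ)/(M^j * x^(a+2+(b+2)-j)) with hg
        have step : ∀ j ∈ Icc 1 (a+b+2),
            (1/M) * ((((j-1).choose (a+1-1) : ℝ)/(M^j * y^(a+1+(b+2)-j))
              + ((j-1).choose (b+2-1) : ℝ)/(M^j * x^(a+1+(b+2)-j)))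
            + (((j-1).choose (a+2-1) : ℝ)/(M^j * y^(a+2+(b+1)-j))
              + ((j-1).choose (b+1-1) : ℝ)/(M^j * x^(a+2+(b+1)-j))))
            = g (j+1) := by
          intro j hj
          simp only [Finset.mem_Icc] at hj
          obtain ⟨hj1, hj2⟩ := hj
          obtain ⟨i, rfl⟩ : ∃ i, j = i + 1 := ⟨j - 1, by omega⟩
          simp only [hg]
          have e1 : a+1+(b+2)-(i+1) = a+b+2-i := by omega
          have e2 : a+2+(b+1)-(i+1) = a+b+2-i := by omega
          have e3 : a+2+(b+2)-(i+1+1) = a+b+2-i := by omega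
          have e4 : a+1-1 = a := by omega
          have e5 : b+2-1 = b+1 := by omega
          have e6 : a+2-1 = a+1 := by omega
          have e7 : b+1-1 = b := by omega
          have e8 : i+1-1 = i := by omega
          have e9 : i+1+1-1 = i+1 := by omega
          rw [e1, e2, e3, e4, e5, e6, e7, e8, e9]
          have p1 : ((i+1).choose (a+1) : ℝ) = (i.choose a : ℝ) + (i.choose (a+1) : ℝ) := by
            rw [Nat.choose_succ_succ]
            push_cast
            ring
          have p2 : ((i+1).choose (b+1) : ℝ) = (i.choose b : ℝ) + (i.choose (b+1) : ℝ) := by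
            rw [Nat.choose_succ_succ]
            push_cast
            ring
          rw [p1, p2, pow_succ]
          have hMne : M ≠ 0 := hxy
          field_simp
          ring
        rw [Finset.sum_congr rfl step]
        rw [sum_Icc_one g (a+b+3), sum_Icc_one (fun j => g (j+1)) (a+b+2)]
        have : a+b+3 = (a+b+2)+1 := by omega
        conv_rhs => rw [this, Finset.sum_range_succ']
        have hg1 : g (0+1) = 0 := by
          simp only [hg]
          rw [Nat.choose_eq_zero_of_lt (by omega), Nat.choose_eq_zero_of_lt (by omega)]
          simp
        rw [hg1, add_zero]

lemma perm_identity (r s : ℕ) (hr : 1 ≤ r) (hs : 1 ≤ s) (m : ℕ) :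
    ∑ i ∈ range (m+1), 1/(((i:ℝ)+1)^r * ((m:ℝ)+1-(i:ℝ))^s)
      = ∑ j ∈ Icc 1 (r+s-1), (((j-1).choose (r-1) : ℝ) + ((j-1).choose (s-1) : ℝ))
          * (1/((m:ℝ)+2)^j * ∑ i ∈ range (m+1), 1/((i:ℝ)+1)^(r+s-j)) := by
  have hpf : ∀ i ∈ range (m+1), 1/(((i:ℝ)+1)^r * ((m:ℝ)+1-(i:ℝ))^s)
      = ∑ j ∈ Icc 1 (r+s-1), (((j-1).choose (r-1) : ℝ)/(((m:ℝ)+2)^j * ((m:ℝ)+1-(i:ℝ))^(r+s-j))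
          + ((j-1).choose (s-1) : ℝ)/(((m:ℝ)+2)^j * ((i:ℝ)+1)^(r+s-j))) := by
    intro i hi
    simp only [Finset.mem_range] at hi
    have him : (i:ℝ) ≤ (m:ℝ) := by exact_mod_cast Nat.lt_succ_iff.mp hi
    have hx : ((i:ℝ)+1) ≠ 0 := by positivity
    have hy : ((m:ℝ)+1-(i:ℝ)) ≠ 0 := by
      have : (0:ℝ) < (m:ℝ)+1-(i:ℝ) := by linarith
      linarith
    have hxy : ((i:ℝ)+1) + ((m:ℝ)+1-(i:ℝ)) ≠ 0 := by
      have : ((i:ℝ)+1) + ((m:ℝ)+1-(i:ℝ)) = (m:ℝ)+2 := by ring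
      rw [this]
      positivity
    have := pf ((i:ℝ)+1) ((m:ℝ)+1-(i:ℝ)) hx hy hxy (r+s) r s hr hs rfl
    have hsum : ((i:ℝ)+1) + ((m:ℝ)+1-(i:ℝ)) = (m:ℝ)+2 := by ring
    rw [hsum] at this
    exact this
  rw [Finset.sum_congr rfl hpf, Finset.sum_comm]
  refine Finset.sum_congr rfl fun j hj => ?_
  rw [Finset.sum_add_distrib]
  set E : ℕ := r + s - j with hE
  have hrefl : ∑ i ∈ range (m+1), 1/((m:ℝ)+1-(i:ℝ))^E
      = ∑ i ∈ range (m+1), 1/((i:ℝ)+1)^E := by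
    rw [← Finset.sum_range_reflect (fun i => 1/((i:ℝ)+1)^E) (m+1)]
    refine Finset.sum_congr rfl fun i hi => ?_
    simp only [Finset.mem_range] at hi
    have hi' : i ≤ m := Nat.lt_succ_iff.mp hi
    have e1 : m + 1 - 1 - i = m - i := by omega
    rw [e1]
    have e2 : ((m - i : ℕ):ℝ) = (m:ℝ) - (i:ℝ) := by
      rw [Nat.cast_sub hi']
    rw [e2]
    congr 2
    ring
  have h1 : ∑ i ∈ range (m+1), ((j-1).choose (r-1) : ℝ)/(((m:ℝ)+2)^j * ((m:ℝ)+1-(i:ℝ))^E)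
      = ((j-1).choose (r-1) : ℝ) * (1/((m:ℝ)+2)^j * ∑ i ∈ range (m+1), 1/((i:ℝ)+1)^E) := by
    rw [← hrefl, Finset.mul_sum, Finset.mul_sum]
    refine Finset.sum_congr rfl fun i hi => ?_
    field_simp
  have h2 : ∑ i ∈ range (m+1), ((j-1).choose (s-1) : ℝ)/(((m:ℝ)+2)^j * ((i:ℝ)+1)^E)
      = ((j-1).choose (s-1) : ℝ) * (1/((m:ℝ)+2)^j * ∑ i ∈ range (m+1), 1/((i:ℝ)+1)^E) := by
    rw [Finset.mul_sum, Finset.mul_sum]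
    refine Finset.sum_congr rfl fun i hi => ?_
    field_simp
  rw [h1, h2]
  ring

lemma cauchy_term (r s : ℕ) (hr : 1 ≤ r) (hs : 1 ≤ s) (m : ℕ) :
    ∑ i ∈ range (m+1), ((-1:ℝ)^(i+1)/((i:ℝ)+1)^r) * ((-1:ℝ)^((m-i)+1)/(((m-i:ℕ):ℝ)+1)^s)
      = ∑ j ∈ Icc 1 (r+s-1), (((j-1).choose (r-1) : ℝ) + ((j-1).choose (s-1) : ℝ))
          * (((-1:ℝ)^(m+2)/((m:ℝ)+2)^j) * ∑ i ∈ range (m+1), 1/((i:ℝ)+1)^(r+s-j)) := by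
  have h1 : ∀ i ∈ range (m+1), ((-1:ℝ)^(i+1)/((i:ℝ)+1)^r) * ((-1:ℝ)^((m-i)+1)/(((m-i:ℕ):ℝ)+1)^s)
      = (-1:ℝ)^(m+2) * (1/(((i:ℝ)+1)^r * ((m:ℝ)+1-(i:ℝ))^s)) := by
    intro i hi
    simp only [Finset.mem_range] at hi
    have hi' : i ≤ m := Nat.lt_succ_iff.mp hi
    have e2 : ((m - i : ℕ):ℝ) = (m:ℝ) - (i:ℝ) := by rw [Nat.cast_sub hi']
    rw [e2]
    have hsgn : (-1:ℝ)^(i+1) * (-1:ℝ)^((m-i)+1) = (-1:ℝ)^(m+2) := by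
      rw [← pow_add]
      congr 1
      omega
    rw [div_mul_div_comm, hsgn]
    have e3 : (m:ℝ) - (i:ℝ) + 1 = (m:ℝ)+1-(i:ℝ) := by ring
    rw [e3]
    ring
  rw [Finset.sum_congr rfl h1, ← Finset.mul_sum, perm_identity r s hr hs m, Finset.mul_sum]
  refine Finset.sum_congr rfl fun j hj => ?_
  ring

lemma cauchy_partial_eq (a b : ℕ → ℝ) (N : ℕ) :
    ∑ m ∈ range N, ∑ i ∈ range (m+1), a i * b (m - i)
      = ∑ j ∈ range N, b j * (∑ i ∈ range (N-j), a i) := by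
  induction N with
  | zero => simp
  | succ N ih =>
    rw [Finset.sum_range_succ, ih]
    have hc : ∑ i ∈ range (N+1), a i * b (N - i)
        = ∑ j ∈ range (N+1), a (N - j) * b j := by
      have := Finset.sum_range_reflect (fun i => a i * b (N - i)) (N+1)
      rw [← this]
      refine Finset.sum_congr rfl fun j hj => ?_
      simp only [Finset.mem_range] at hj
      have e1 : N + 1 - 1 - j = N - j := by omega
      have e2 : N - (N - j) = j := by omega
      rw [e1, e2]
    rw [hc]
    rw [Finset.sum_range_succ (fun j => b j * ∑ i ∈ range (N+1-j), a i)]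
    have e3 : N + 1 - N = 1 := by omega
    rw [e3]
    have hsplit : ∀ j ∈ range N, b j * (∑ i ∈ range (N+1-j), a i)
        = b j * (∑ i ∈ range (N-j), a i) + a (N-j) * b j := by
      intro j hj
      simp only [Finset.mem_range] at hj
      have e4 : N + 1 - j = (N - j) + 1 := by omega
      rw [e4, Finset.sum_range_succ]
      ring
    rw [Finset.sum_congr rfl hsplit, Finset.sum_add_distrib,
      Finset.sum_range_succ (fun j => a (N-j) * b j)]
    simp only [Finset.sum_range_one, Nat.sub_self]
    ring

lemma conv_tendsto_zero {b e : ℕ → ℝ} (hb : Summable fun n => |b n|)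
    (he : Tendsto e atTop (𝓝 0)) :
    Tendsto (fun N => ∑ j ∈ range N, |b j| * |e (N - j)|) atTop (𝓝 0) := by
  -- bound K on |e|
  obtain ⟨n1, hn1⟩ : ∃ n1, ∀ n ≥ n1, |e n| ≤ 1 := by
    have := (Metric.tendsto_atTop.mp he) 1 one_pos
    obtain ⟨n1, h⟩ := this
    exact ⟨n1, fun n hn => by
      have := h n hn
      rw [Real.dist_eq, sub_zero] at this
      linarith⟩
  set K : ℝ := 1 + ∑ i ∈ range n1, |e i| with hK
  have hKpos : 0 < K := by
    have : (0:ℝ) ≤ ∑ i ∈ range n1, |e i| := Finset.sum_nonneg fun i _ => abs_nonneg _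
    linarith
  have hKb : ∀ n, |e n| ≤ K := by
    intro n
    rcases le_or_gt n1 n with h | h
    · have : (0:ℝ) ≤ ∑ i ∈ range n1, |e i| := Finset.sum_nonneg fun i _ => abs_nonneg _
      have := hn1 n h
      linarith
    · have : |e n| ≤ ∑ i ∈ range n1, |e i| :=
        Finset.single_le_sum (fun i _ => abs_nonneg (e i)) (Finset.mem_range.mpr h)
      linarith
  set T : ℝ := ∑' n, |b n| with hT
  have hTnn : 0 ≤ T := tsum_nonneg fun n => abs_nonneg _
  have hpartial : ∀ N, ∑ j ∈ range N, |b j| ≤ T := fun N => Summable.sum_le_tsum (range N) (fun i _ => abs_nonneg _) hb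
  have hptend : Tendsto (fun N => ∑ j ∈ range N, |b j|) atTop (𝓝 T) :=
    hb.hasSum.tendsto_sum_nat
  rw [Metric.tendsto_atTop]
  intro ε hε
  set ε1 : ℝ := ε / (4 * (T + 1)) with hε1
  have hε1pos : 0 < ε1 := by positivity
  set ε2 : ℝ := ε / (2 * (K + 1)) with hε2
  have hε2pos : 0 < ε2 := by positivity
  obtain ⟨n0, hn0⟩ : ∃ n0, ∀ n ≥ n0, |e n| ≤ ε1 := by
    obtain ⟨n0, h⟩ := (Metric.tendsto_atTop.mp he) ε1 hε1pos
    exact ⟨n0, fun n hn => by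
      have := h n hn
      rw [Real.dist_eq, sub_zero] at this
      linarith⟩
  obtain ⟨N1, hN1⟩ : ∃ N1, ∀ N ≥ N1, T - ∑ j ∈ range N, |b j| < ε2 := by
    obtain ⟨N1, h⟩ := (Metric.tendsto_atTop.mp hptend) ε2 hε2pos
    exact ⟨N1, fun N hN => by
      have := h N hN
      rw [Real.dist_eq] at this
      have := abs_lt.mp this
      linarith [this.1]⟩
  refine ⟨N1 + n0 + 1, fun N hN => ?_⟩
  rw [Real.dist_eq, sub_zero]
  have hnn : (0:ℝ) ≤ ∑ j ∈ range N, |b j| * |e (N - j)| :=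
    Finset.sum_nonneg fun j _ => mul_nonneg (abs_nonneg _) (abs_nonneg _)
  rw [abs_of_nonneg hnn]
  -- split
  have hsplit : ∑ j ∈ range N, |b j| * |e (N - j)|
      = (∑ j ∈ Ico 0 (N - n0), |b j| * |e (N - j)|)
        + ∑ j ∈ Ico (N - n0) N, |b j| * |e (N - j)| := by
    rw [Finset.range_eq_Ico]
    rw [Finset.sum_Ico_consecutive _ (Nat.zero_le _) (Nat.sub_le N n0)]
  rw [hsplit]
  have h1 : ∑ j ∈ Ico 0 (N - n0), |b j| * |e (N - j)| ≤ ε1 * T := by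
    calc ∑ j ∈ Ico 0 (N - n0), |b j| * |e (N - j)|
        ≤ ∑ j ∈ Ico 0 (N - n0), |b j| * ε1 := by
          refine Finset.sum_le_sum fun j hj => ?_
          simp only [Finset.mem_Ico] at hj
          exact mul_le_mul_of_nonneg_left (hn0 _ (by omega)) (abs_nonneg _)
      _ = ε1 * ∑ j ∈ Ico 0 (N - n0), |b j| := by rw [← Finset.sum_mul]; ring
      _ ≤ ε1 * T := by
          refine mul_le_mul_of_nonneg_left ?_ (le_of_lt hε1pos)
          rw [← Finset.range_eq_Ico]
          exact hpartial _
  have h2 : ∑ j ∈ Ico (N - n0) N, |b j| * |e (N - j)| ≤ K * ε2 := by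
    calc ∑ j ∈ Ico (N - n0) N, |b j| * |e (N - j)|
        ≤ ∑ j ∈ Ico (N - n0) N, |b j| * K := by
          refine Finset.sum_le_sum fun j hj => ?_
          exact mul_le_mul_of_nonneg_left (hKb _) (abs_nonneg _)
      _ = K * ∑ j ∈ Ico (N - n0) N, |b j| := by rw [← Finset.sum_mul]; ring
      _ ≤ K * ε2 := by
          refine mul_le_mul_of_nonneg_left ?_ (le_of_lt hKpos)
          have : ∑ j ∈ Ico (N - n0) N, |b j|
              = (∑ j ∈ range N, |b j|) - ∑ j ∈ range (N - n0), |b j| := by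
            rw [Finset.range_eq_Ico,
              ← Finset.sum_Ico_consecutive (fun j => |b j|) (Nat.zero_le (N - n0)) (Nat.sub_le N n0), ← Finset.range_eq_Ico]
            ring
          rw [this]
          have htail := hN1 (N - n0) (by omega)
          have := hpartial N
          linarith
  have hfinal1 : ε1 * T < ε / 2 := by
    rw [hε1]
    rw [div_mul_eq_mul_div]
    rw [div_lt_iff₀ (by positivity)]
    nlinarith
  have hfinal2 : K * ε2 < ε / 2 := by
    rw [hε2]
    rw [mul_div_assoc']
    rw [div_lt_iff₀ (by positivity)]
    nlinarith
  calc ∑ j ∈ Ico 0 (N - n0), |b j| * |e (N - j)| + ∑ j ∈ Ico (N - n0) N, |b j| * |e (N - j)|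
      ≤ ε1 * T + K * ε2 := add_le_add h1 h2
    _ < ε / 2 + ε / 2 := add_lt_add hfinal1 hfinal2
    _ = ε := by ring

lemma mertens {a b : ℕ → ℝ} {A B : ℝ}
    (hA : Tendsto (fun N => ∑ i ∈ range N, a i) atTop (𝓝 A))
    (hb : Summable fun n => |b n|)
    (hB : Tendsto (fun N => ∑ i ∈ range N, b i) atTop (𝓝 B)) :
    Tendsto (fun N => ∑ m ∈ range N, ∑ i ∈ range (m+1), a i * b (m - i)) atTop (𝓝 (A * B)) := by
  have key : ∀ N, ∑ m ∈ range N, ∑ i ∈ range (m+1), a i * b (m - i)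
      = (∑ j ∈ range N, b j * ((∑ i ∈ range (N-j), a i) - A)) + (∑ j ∈ range N, b j) * A := by
    intro N
    rw [cauchy_partial_eq]
    rw [Finset.sum_mul]
    rw [← Finset.sum_add_distrib]
    refine Finset.sum_congr rfl fun j hj => ?_
    ring
  have hz : Tendsto (fun N => ∑ j ∈ range N, b j * ((∑ i ∈ range (N-j), a i) - A)) atTop (𝓝 0) := by
    have he : Tendsto (fun n => (∑ i ∈ range n, a i) - A) atTop (𝓝 0) := by
      have := hA.sub_const A
      simpa using this
    have hub := conv_tendsto_zero hb he
    refine squeeze_zero_norm (fun N => ?_) hub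
    rw [Real.norm_eq_abs]
    calc |∑ j ∈ range N, b j * ((∑ i ∈ range (N-j), a i) - A)|
        ≤ ∑ j ∈ range N, |b j * ((∑ i ∈ range (N-j), a i) - A)| := Finset.abs_sum_le_sum_abs _ _
      _ = ∑ j ∈ range N, |b j| * |(∑ i ∈ range (N-j), a i) - A| := by
          refine Finset.sum_congr rfl fun j hj => abs_mul _ _
  have : Tendsto (fun N => (∑ j ∈ range N, b j * ((∑ i ∈ range (N-j), a i) - A))
      + (∑ j ∈ range N, b j) * A) atTop (𝓝 (0 + B * A)) :=
    hz.add (hB.mul_const A)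
  rw [zero_add] at this
  have := this.congr (fun N => (key N).symm)
  rw [mul_comm B A] at this
  exact this

lemma tendsto_two_div : Tendsto (fun m : ℕ => 2/((m:ℝ)+2)) atTop (𝓝 0) := by
  have h1 : Tendsto (fun m : ℕ => ((m:ℝ)+2)) atTop atTop :=
    tendsto_atTop_add_const_right atTop 2 tendsto_natCast_atTop_atTop
  have h2 : Tendsto (fun m : ℕ => ((m:ℝ)+2)⁻¹) atTop (𝓝 0) :=
    tendsto_inv_atTop_zero.comp h1
  have := h2.const_mul (2:ℝ)
  simp only [mul_zero] at this
  refine this.congr fun m => ?_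
  rw [div_eq_mul_inv]

lemma zetaA_conv (r : ℕ) (hr : 1 ≤ r) :
    ∃ l, Tendsto (fun N => ∑ m ∈ range N, (-1 : ℝ)^(m+1)/((m+1 : ℝ))^r) atTop (𝓝 l) := by
  set f : ℕ → ℝ := fun m => 1/((m+1 : ℝ))^r with hf
  have hanti : Antitone f := by
    refine antitone_nat_of_succ_le fun m => ?_
    simp only [hf]
    gcongr
    linarith [Nat.cast_nonneg (α := ℝ) m]
  have h0 : Tendsto f atTop (𝓝 0) := by
    refine squeeze_zero (g := fun m : ℕ => 2/((m:ℝ)+2)) (fun m => by positivity) (fun m => ?_) ?_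
    · simp only [hf]
      rw [div_le_div_iff₀ (by positivity) (by positivity)]
      have h1 : ((m:ℝ)+1)^1 ≤ ((m:ℝ)+1)^r := by
        apply pow_le_pow_right₀ (by linarith [Nat.cast_nonneg (α := ℝ) m]) hr
      rw [pow_one] at h1
      nlinarith [Nat.cast_nonneg (α := ℝ) m]
    · exact tendsto_two_div
  obtain ⟨l, hl⟩ := hanti.tendsto_alternating_series_of_tendsto_zero h0
  refine ⟨-l, ?_⟩
  refine hl.neg.congr fun N => ?_
  rw [← Finset.sum_neg_distrib]
  refine Finset.sum_congr rfl fun m _ => ?_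
  simp only [hf]
  rw [pow_succ]
  ring

lemma sq_sum_bound : ∀ m : ℕ, ∑ i ∈ range m, 1/((i:ℝ)+1)^2 ≤ 2 - 1/(m:ℝ) := by
  intro m
  induction m with
  | zero => norm_num
  | succ m ih =>
    rcases Nat.eq_zero_or_pos m with rfl | hm
    · norm_num
    rw [Finset.sum_range_succ]
    push_cast
    have h1 : ((m:ℝ)) > 0 := by exact_mod_cast hm
    have key : 1/((m:ℝ)+1)^2 ≤ 1/(m:ℝ) - 1/((m:ℝ)+1) := by
      rw [div_sub_div _ _ (by positivity) (by positivity)]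
      rw [div_le_div_iff₀ (by positivity) (by positivity)]
      nlinarith
    linarith

lemma dzetaA2_conv (k j : ℕ) (hj : 1 ≤ j) (hjk : j ≤ k-1) (hk3 : 3 ≤ k) :
    ∃ l, Tendsto (fun N => ∑ m ∈ range N,
      ((-1 : ℝ)^(m+2)/((m+2 : ℝ))^j) * ∑ i ∈ range (m+1), 1/((i+1 : ℝ))^(k-j))
      atTop (𝓝 l) := by
  set e : ℕ := k - j with he
  have hje : j - 1 + e = k - 1 := by omega
  have he1 : 1 ≤ e := by omega
  set c : ℕ → ℝ := fun m => ∑ i ∈ range (m+1), 1/((i:ℝ)+1)^e with hc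
  have hc1 : ∀ m, 1 ≤ c m := by
    intro m
    have h0 : (0:ℕ) ∈ range (m+1) := Finset.mem_range.mpr (by omega)
    have := Finset.single_le_sum (f := fun i : ℕ => 1/((i:ℝ)+1)^e)
      (fun i _ => by positivity) h0
    simp only [hc]
    refine le_trans ?_ this
    norm_num
  have hcub : ∀ m, c m ≤ (m:ℝ)+1 := by
    intro m
    have : ∀ i ∈ range (m+1), 1/((i:ℝ)+1)^e ≤ 1 := by
      intro i _
      rw [div_le_one (by positivity)]
      apply one_le_pow₀
      linarith [Nat.cast_nonneg (α := ℝ) i]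
    calc c m ≤ ∑ i ∈ range (m+1), (1:ℝ) := Finset.sum_le_sum this
      _ = (m:ℝ)+1 := by simp
  set g : ℕ → ℝ := fun m => c m / ((m:ℝ)+2)^j with hg
  have hP : ∀ m : ℕ, (0:ℝ) < (m:ℝ)+2 := fun m => by positivity
  have hganti : Antitone g := by
    refine antitone_nat_of_succ_le fun m => ?_
    simp only [hg]
    have hcast : ((m+1:ℕ):ℝ)+2 = (m:ℝ)+3 := by push_cast; ring
    rw [hcast]
    rw [div_le_div_iff₀ (by positivity) (by positivity)]
    have hsucc : c (m+1) = c m + 1/((m:ℝ)+2)^e := by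
      simp only [hc]
      rw [Finset.sum_range_succ]
      push_cast
      norm_num
      congr 1
      ring
    rw [hsucc]
    set P : ℝ := (m:ℝ)+2 with hPdef
    have hP1 : (1:ℝ) ≤ P := by simp only [hPdef]; linarith [Nat.cast_nonneg (α := ℝ) m]
    have hP0 : (0:ℝ) < P := by linarith
    have hA : (1/P^e) * P^j ≤ P^(j-1) := by
      rw [div_mul_eq_mul_div, one_mul, div_le_iff₀ (by positivity)]
      calc P^j ≤ P^(k-1) := pow_le_pow_right₀ hP1 hjk
        _ = P^(j-1+e) := by rw [hje]
        _ = P^(j-1) * P^e := pow_add P (j-1) e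
    have hB : P^j + P^(j-1) ≤ (P+1)^j := by
      obtain ⟨t, rfl⟩ : ∃ t, j = t + 1 := ⟨j - 1, by omega⟩
      have ht : t + 1 - 1 = t := by omega
      rw [ht]
      have h1 : P^t ≤ (P+1)^t := pow_le_pow_left₀ (by linarith) (by linarith) t
      have h2 : (0:ℝ) < P^t := by positivity
      calc P^(t+1) + P^t = P^t * (P+1) := by ring
        _ ≤ (P+1)^t * (P+1) := by nlinarith
        _ = (P+1)^(t+1) := by ring
    have hPj : (0:ℝ) < P^(j-1) := by positivity
    have hgoal : (c m + 1/P^e) * P^j ≤ c m * (P+1)^j := by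
      have hcm := hc1 m
      calc (c m + 1/P^e) * P^j = c m * P^j + (1/P^e) * P^j := by ring
        _ ≤ c m * P^j + P^(j-1) := by linarith
        _ ≤ c m * P^j + c m * P^(j-1) := by nlinarith
        _ = c m * (P^j + P^(j-1)) := by ring
        _ ≤ c m * (P+1)^j := by nlinarith
    have hP3 : P + 1 = (m:ℝ)+3 := by rw [hPdef]; ring
    calc (c m + 1/P^e) * P^j ≤ c m * (P+1)^j := hgoal
      _ = c m * ((m:ℝ)+3)^j := by rw [hP3]
  have hg0 : Tendsto g atTop (𝓝 0) := by
    refine squeeze_zero (g := fun m : ℕ => 2/((m:ℝ)+2)) (fun m => ?_) (fun m => ?_) tendsto_two_div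
    · simp only [hg]
      have := hc1 m
      positivity
    · simp only [hg]
      rcases le_or_gt 2 e with h2e | h2e
      · -- c m ≤ 2
        have hcb : c m ≤ 2 := by
          have hterm : ∀ i ∈ range (m+1), 1/((i:ℝ)+1)^e ≤ 1/((i:ℝ)+1)^2 := by
            intro i _
            have hb1 : (1:ℝ) ≤ (i:ℝ)+1 := by linarith [Nat.cast_nonneg (α := ℝ) i]
            exact one_div_le_one_div_of_le (by positivity) (pow_le_pow_right₀ hb1 h2e)
          calc c m ≤ ∑ i ∈ range (m+1), 1/((i:ℝ)+1)^2 := Finset.sum_le_sum hterm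
            _ ≤ 2 - 1/((m+1:ℕ):ℝ) := sq_sum_bound (m+1)
            _ ≤ 2 := by
                have : (0:ℝ) ≤ 1/((m+1:ℕ):ℝ) := by positivity
                linarith
        have hpw : ((m:ℝ)+2)^1 ≤ ((m:ℝ)+2)^j :=
          pow_le_pow_right₀ (by linarith [Nat.cast_nonneg (α := ℝ) m]) hj
        rw [pow_one] at hpw
        rw [div_le_div_iff₀ (by positivity) (by positivity)]
        nlinarith [hc1 m, hP m]
      · -- e = 1, j ≥ 2
        have hj2 : 2 ≤ j := by omega
        have hpw : ((m:ℝ)+2)^2 ≤ ((m:ℝ)+2)^j :=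
          pow_le_pow_right₀ (by linarith [Nat.cast_nonneg (α := ℝ) m]) hj2
        have hcb := hcub m
        rw [div_le_div_iff₀ (by positivity) (by positivity)]
        have hsq : ((m:ℝ)+2)^2 = ((m:ℝ)+2)*((m:ℝ)+2) := sq ((m:ℝ)+2)
        nlinarith [hc1 m, hP m, Nat.cast_nonneg (α := ℝ) m]
  obtain ⟨l, hl⟩ := hganti.tendsto_alternating_series_of_tendsto_zero hg0
  refine ⟨l, hl.congr fun N => ?_⟩
  refine Finset.sum_congr rfl fun m _ => ?_
  simp only [hg, hc]
  rw [pow_add]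
  have : ∑ i ∈ range (m+1), 1/((i+1:ℝ))^(k-j) = ∑ i ∈ range (m+1), 1/((i:ℝ)+1)^e := rfl
  rw [this]
  ring

lemma shuffle_aux (r s k : ℕ) (hr : 1 ≤ r) (hs2 : 2 ≤ s) (hk : r + s = k)
    (hk3 : 3 ≤ k) :
    zetaA r * zetaA s =
      ∑ j ∈ Finset.Icc 1 (k-1), (((j-1).choose (r-1) : ℝ) + ((j-1).choose (s-1) : ℝ))
        * dzetaA2 (k-j) j := by
  subst hk
  have hs : 1 ≤ s := by omega
  set a : ℕ → ℝ := fun n => (-1:ℝ)^(n+1)/((n:ℝ)+1)^r with ha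
  set b : ℕ → ℝ := fun n => (-1:ℝ)^(n+1)/((n:ℝ)+1)^s with hb
  obtain ⟨A, hA⟩ := zetaA_conv r hr
  have hzr : zetaA r = A := by
    rw [zetaA, if_neg (by omega)]
    exact hA.limUnder_eq
  have hbabs : Summable (fun n => |b n|) := by
    have habs : ∀ n : ℕ, |b n| = 1/((n:ℝ)+1)^s := by
      intro n
      simp only [hb]
      rw [abs_div, abs_pow, abs_neg, abs_one, one_pow, abs_pow]
      congr 2
      rw [abs_of_pos (by positivity)]
    have base : Summable (fun n : ℕ => 1/((n:ℝ))^s) :=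
      Real.summable_one_div_nat_pow.mpr (by omega)
    have shifted := (_root_.summable_nat_add_iff (f := fun n : ℕ => 1/((n:ℝ))^s) 1).mpr base
    refine shifted.congr fun n => ?_
    rw [habs n]
    push_cast
    ring_nf
  have hbsum : Summable b := hbabs.of_abs
  set B : ℝ := ∑' n, b n with hBdef
  have hB : Tendsto (fun N => ∑ i ∈ range N, b i) atTop (𝓝 B) :=
    hbsum.hasSum.tendsto_sum_nat
  have hzs : zetaA s = B := by
    rw [zetaA, if_neg (by omega)]
    exact hB.limUnder_eq
  have hmer : Tendsto (fun N => ∑ m ∈ range N, ∑ i ∈ range (m+1), a i * b (m - i))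
      atTop (𝓝 (A * B)) := mertens hA hbabs hB
  have hEq : ∀ N, ∑ m ∈ range N, ∑ i ∈ range (m+1), a i * b (m - i)
      = ∑ j ∈ Icc 1 (r+s-1), (((j-1).choose (r-1) : ℝ) + ((j-1).choose (s-1) : ℝ))
          * ∑ m ∈ range N, ((-1:ℝ)^(m+2)/((m:ℝ)+2)^j) * ∑ i ∈ range (m+1), 1/((i:ℝ)+1)^(r+s-j) := by
    intro N
    have hper : ∀ m ∈ range N, ∑ i ∈ range (m+1), a i * b (m - i)
        = ∑ j ∈ Icc 1 (r+s-1), (((j-1).choose (r-1) : ℝ) + ((j-1).choose (s-1) : ℝ))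
            * (((-1:ℝ)^(m+2)/((m:ℝ)+2)^j) * ∑ i ∈ range (m+1), 1/((i:ℝ)+1)^(r+s-j)) := by
      intro m _
      exact cauchy_term r s hr hs m
    rw [Finset.sum_congr rfl hper, Finset.sum_comm]
    refine Finset.sum_congr rfl fun j hj => ?_
    rw [Finset.mul_sum]
  have hjconv : ∀ j ∈ Icc 1 (r+s-1),
      Tendsto (fun N => ∑ m ∈ range N,
        ((-1:ℝ)^(m+2)/((m:ℝ)+2)^j) * ∑ i ∈ range (m+1), 1/((i:ℝ)+1)^(r+s-j))
        atTop (𝓝 (dzetaA2 (r+s-j) j)) := by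
    intro j hj
    simp only [Finset.mem_Icc] at hj
    obtain ⟨l, hl⟩ := dzetaA2_conv (r+s) j hj.1 hj.2 hk3
    have : dzetaA2 (r+s-j) j = l := by
      rw [dzetaA2]
      exact hl.limUnder_eq
    rw [this]
    exact hl
  have hrhs : Tendsto (fun N => ∑ j ∈ Icc 1 (r+s-1),
      (((j-1).choose (r-1) : ℝ) + ((j-1).choose (s-1) : ℝ))
        * ∑ m ∈ range N, ((-1:ℝ)^(m+2)/((m:ℝ)+2)^j) * ∑ i ∈ range (m+1), 1/((i:ℝ)+1)^(r+s-j))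
      atTop (𝓝 (∑ j ∈ Icc 1 (r+s-1),
        (((j-1).choose (r-1) : ℝ) + ((j-1).choose (s-1) : ℝ)) * dzetaA2 (r+s-j) j)) := by
    refine tendsto_finset_sum _ fun j hj => ?_
    exact (hjconv j hj).const_mul _
  have hfin : A * B = ∑ j ∈ Icc 1 (r+s-1),
      (((j-1).choose (r-1) : ℝ) + ((j-1).choose (s-1) : ℝ)) * dzetaA2 (r+s-j) j :=
    tendsto_nhds_unique (hmer.congr hEq) hrhs
  rw [hzr, hzs, hfin]

theorem shuffle_altalt (r s k : ℕ) (hr : 1 ≤ r) (hs : 1 ≤ s) (hk : r + s = k)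
    (hk3 : 3 ≤ k) :
    zetaA r * zetaA s =
      (∑ j ∈ Finset.Icc 1 (k-1), ((j-1).choose (r-1) : ℝ) * dzetaA2 (k-j) j)
      + ∑ j ∈ Finset.Icc 1 (k-1), ((j-1).choose (s-1) : ℝ) * dzetaA2 (k-j) j := by
  have split : ∑ j ∈ Finset.Icc 1 (k-1), (((j-1).choose (r-1) : ℝ) + ((j-1).choose (s-1) : ℝ))
      * dzetaA2 (k-j) j
      = (∑ j ∈ Finset.Icc 1 (k-1), ((j-1).choose (r-1) : ℝ) * dzetaA2 (k-j) j)
        + ∑ j ∈ Finset.Icc 1 (k-1), ((j-1).choose (s-1) : ℝ) * dzetaA2 (k-j) j := by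
    rw [← Finset.sum_add_distrib]
    exact Finset.sum_congr rfl fun j _ => by ring
  rcases le_or_gt 2 s with hs2 | hs1
  · rw [← split]
    exact shuffle_aux r s k hr hs2 hk hk3
  · have hs1' : s = 1 := by omega
    have hr2 : 2 ≤ r := by omega
    have := shuffle_aux s r k hs hr2 (by omega) hk3
    rw [mul_comm] at this
    rw [← split, this]
    exact Finset.sum_congr rfl fun j _ => by ring
end

section
/- For an integer k ≥ 3, Σ_{s=2}^{k-1} ζ(k-s, s) = ζ(k), where ζ(r, s) = Σ_{1 ≤ m < n} 1/(m^r n^s) is the double zeta value. -/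
open Filter Finset Real

/-- Harmonic number `H n = ∑_{j=1}^n 1/j`. -/
noncomputable def Hh (n : ℕ) : ℝ := ∑ j ∈ Finset.range n, 1/((j:ℝ)+1)

lemma Hh_nonneg (n : ℕ) : 0 ≤ Hh n := by
  apply Finset.sum_nonneg; intro j _; positivity

lemma Hh_mono : Monotone Hh := by
  apply monotone_nat_of_le_succ
  intro n
  rw [Hh, Hh, Finset.sum_range_succ]
  have : 0 ≤ 1/((n:ℝ)+1) := by positivity
  linarith

lemma Hh_succ (n : ℕ) : Hh (n+1) = Hh n + 1/((n:ℝ)+1) := by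
  rw [Hh, Hh, Finset.sum_range_succ]

lemma Hh_le_sqrt (n : ℕ) : Hh n ≤ 2 * Real.sqrt n := by
  have key : ∀ j : ℕ, 1/((j:ℝ)+1) ≤ 2 * Real.sqrt (j+1) - 2 * Real.sqrt j := by
    intro j
    have h1 : Real.sqrt j ≤ Real.sqrt (j+1) := by
      apply Real.sqrt_le_sqrt; push_cast; linarith
    have h2 : (0:ℝ) < Real.sqrt (j+1) := by
      apply Real.sqrt_pos.2; positivity
    have h3 : Real.sqrt ((j:ℝ)+1) * Real.sqrt ((j:ℝ)+1) = (j:ℝ)+1 :=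
      Real.mul_self_sqrt (by positivity)
    have hj : Real.sqrt (j:ℝ) * Real.sqrt (j:ℝ) = (j:ℝ) :=
      Real.mul_self_sqrt (by positivity)
    have h5 : 0 ≤ Real.sqrt j := Real.sqrt_nonneg _
    have hv1 : 1 ≤ Real.sqrt ((j:ℝ)+1) := by
      nlinarith [h3, h2, (Nat.cast_nonneg j : (0:ℝ) ≤ (j:ℝ))]
    have hj1 : Real.sqrt ((j:ℝ)+1) = Real.sqrt (((j:ℕ):ℝ)+1) := by norm_num
    rw [div_le_iff₀ (by positivity : (0:ℝ) < (j:ℝ)+1)]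
    push_cast
    nlinarith [h3, hj, h1, h5, hv1]
  calc Hh n ≤ ∑ j ∈ Finset.range n, (2 * Real.sqrt (j+1) - 2 * Real.sqrt j) := by
        apply Finset.sum_le_sum; intro j _; exact key j
    _ = 2 * Real.sqrt n - 2 * Real.sqrt 0 := by
        have := Finset.sum_range_sub (fun j => 2 * Real.sqrt j) n
        push_cast at this ⊢
        convert this using 2 <;> norm_num
    _ ≤ 2 * Real.sqrt n := by simp [Real.sqrt_nonneg]

/-- Partial sums of `∑ 1/(m+1)^k` are bounded by 2 for `k ≥ 2`. -/
lemma partial_zeta_le_two (k n : ℕ) (hk : 2 ≤ k) :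
    ∑ m ∈ Finset.range n, 1/((m+1:ℝ))^k ≤ 2 := by
  have step : ∀ m : ℕ, 1/((m+1:ℝ))^k ≤ (-2/((m:ℝ)+2)) - (-2/((m:ℝ)+1)) := by
    intro m
    have h1 : (1:ℝ) ≤ ((m:ℝ)+1) := by push_cast; linarith
    have h2 : ((m+1:ℝ))^2 ≤ ((m+1:ℝ))^k :=
      pow_le_pow_right₀ h1 hk
    have h3 : (0:ℝ) < ((m+1:ℝ))^2 := by positivity
    have h4 : (0:ℝ) < ((m+1:ℝ))^k := by positivity
    have h5 : 1/((m+1:ℝ))^k ≤ 1/((m+1:ℝ))^2 := by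
      apply one_div_le_one_div_of_le h3 h2
    have h6 : 1/((m+1:ℝ))^2 ≤ 2/(((m:ℝ)+1)*((m:ℝ)+2)) := by
      rw [div_le_div_iff₀ (by positivity) (by positivity)]
      push_cast; nlinarith
    have h7 : 2/(((m:ℝ)+1)*((m:ℝ)+2)) = (-2/((m:ℝ)+2)) - (-2/((m:ℝ)+1)) := by
      field_simp; ring
    linarith
  calc ∑ m ∈ Finset.range n, 1/((m+1:ℝ))^k
      ≤ ∑ m ∈ Finset.range n, ((-2/((m:ℝ)+2)) - (-2/((m:ℝ)+1))) := by
        apply Finset.sum_le_sum; intro m _; exact step m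
    _ = (-2/((n:ℝ)+1)) - (-2/((0:ℝ)+1)) := by
        have := Finset.sum_range_sub (fun m => -2/((m:ℝ)+1)) n
        push_cast at this ⊢
        convert this using 2 <;> push_cast <;> ring
    _ ≤ 2 := by
        have : (0:ℝ) < (n:ℝ)+1 := by positivity
        have h : -2/((n:ℝ)+1) ≤ 0 := by
          apply div_nonpos_of_nonpos_of_nonneg <;> linarith
        norm_num; linarith
open Filter Finset Real

/-- One telescoping step. -/
lemma tele_step (a b : ℝ) (ha : 0 < a) (hab : a < b) (t i : ℕ) :
    1/(a^t * b^(i+2)) =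
      (a/(b-a)) * (1/(a^(t+1) * b^(i+1)) - 1/(a^t * b^(i+2))) := by
  have hb : 0 < b := lt_trans ha hab
  have hd : 0 < b - a := by linarith
  have hu : (0:ℝ) < a^t := by positivity
  have hv : (0:ℝ) < b^(i+1) := by positivity
  rw [pow_succ a t, pow_succ b (i+1)]
  field_simp

/-- Per-pair identity: `∑_{s=2}^{k-1} 1/(a^{k-s} b^s)` in closed form, for `0 < a < b`. -/
lemma pair_sum (k : ℕ) (hk : 3 ≤ k) (a b : ℝ) (ha : 0 < a) (hab : a < b) :
    ∑ s ∈ Finset.Icc 2 (k-1), 1/(a^(k-s) * b^s)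
      = 1/(a^(k-1) * (b-a)) - 1/(a^(k-1) * b) - 1/((b-a) * b^(k-1)) := by
  have hb : 0 < b := lt_trans ha hab
  have hd : 0 < b - a := by linarith
  have hIcc : Finset.Icc 2 (k-1) = Finset.Ico 2 k := by
    rw [← Finset.Ico_add_one_right_eq_Icc]
    congr 1
    omega
  rw [hIcc, Finset.sum_Ico_eq_sum_range]
  have hsum : ∑ i ∈ Finset.range (k-2), 1/(a^(k-(2+i)) * b^(2+i))
      = (a/(b-a)) * ∑ i ∈ Finset.range (k-2),
          (1/(a^(k-1-i) * b^(i+1)) - 1/(a^(k-1-(i+1)) * b^(i+1+1))) := by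
    rw [Finset.mul_sum]
    apply Finset.sum_congr rfl
    intro i hi
    rw [Finset.mem_range] at hi
    have h1 : k - (2+i) = k-2-i := by omega
    have h2 : k - 1 - i = (k-2-i) + 1 := by omega
    have h3 : k - 1 - (i+1) = k-2-i := by omega
    have h4 : 2 + i = i + 2 := by omega
    rw [h1, h2, h3, h4]
    exact tele_step a b ha hab (k-2-i) i
  rw [hsum, Finset.sum_range_sub' (fun i => 1/(a^(k-1-i) * b^(i+1))) (k-2)]
  have h5 : k - 1 - 0 = k - 1 := by omega
  have h6 : k - 1 - (k-2) = 1 := by omega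
  have h7 : k - 2 + 1 = k - 1 := by omega
  rw [h5, h6, h7]
  have hA : (0:ℝ) < a^(k-1) := by positivity
  have hB : (0:ℝ) < b^(k-1) := by positivity
  field_simp
  ring
open Filter Finset Real



lemma od (x y : ℝ) : 1/(x*y) = (1/x) * (1/y) := by
  rw [one_div, mul_inv, one_div, one_div]

lemma Hh_zero : Hh 0 = 0 := by simp [Hh]


/-- The triangle swap. -/
lemma tri_swap (N : ℕ) (f : ℕ → ℕ → ℝ) :
    ∑ m ∈ Finset.range N, ∑ j ∈ Finset.range (m+1), f m j
      = ∑ j ∈ Finset.range N, ∑ m ∈ Finset.Ico j N, f m j := by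
  apply Finset.sum_comm'
  intro m j
  simp only [Finset.mem_range, Finset.mem_Ico]
  omega

lemma Ico_harm (j N : ℕ) (hj : j ≤ N) :
    ∑ m ∈ Finset.Ico j N, 1/((m:ℝ)+2) = Hh (N+1) - Hh (j+1) := by
  have h1 : Hh (j+1) + ∑ t ∈ Finset.Ico (j+1) (N+1), 1/((t:ℝ)+1) = Hh (N+1) := by
    rw [Hh, Hh, Finset.range_eq_Ico, Finset.range_eq_Ico]
    exact Finset.sum_Ico_consecutive (fun t : ℕ => 1/((t:ℝ)+1)) (m := 0) (n := j+1) (k := N+1) (by omega) (by omega)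
  have h2 : ∑ t ∈ Finset.Ico (j+1) (N+1), 1/((t:ℝ)+1)
      = ∑ m ∈ Finset.Ico j N, 1/((m:ℝ)+2) := by
    rw [Finset.sum_Ico_eq_sum_range, Finset.sum_Ico_eq_sum_range]
    have : N + 1 - (j+1) = N - j := by omega
    rw [this]
    apply Finset.sum_congr rfl
    intro i _
    push_cast
    ring_nf
  linarith

lemma key_identity (k N : ℕ) (hk : 3 ≤ k) :
    ∑ s ∈ Finset.Icc 2 (k-1), ∑ m ∈ Finset.range N,
        (1/((m+2:ℝ))^s) * ∑ j ∈ Finset.range (m+1), 1/((j+1:ℝ))^(k-s)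
      = ∑ m ∈ Finset.range (N+1), 1/((m+1:ℝ))^k
        - ∑ m ∈ Finset.range (N+1), (Hh (N+1) - Hh (N-m)) * (1/((m+1:ℝ))^(k-1)) := by
  -- step 1 : per-pair identity in triangle coordinates
  have step1 : ∀ m j : ℕ, j ≤ m →
      ∑ s ∈ Finset.Icc 2 (k-1), (1/((m+2:ℝ))^s) * (1/((j+1:ℝ))^(k-s))
        = 1/(((j+1:ℝ))^(k-1) * (((m-j:ℕ):ℝ)+1)) - 1/(((j+1:ℝ))^(k-1) * ((m:ℝ)+2))
          - 1/(((((m-j:ℕ):ℝ))+1) * ((m+2:ℝ))^(k-1)) := by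
    intro m j hjm
    have ha : (0:ℝ) < (j:ℝ)+1 := by positivity
    have hab : (j:ℝ)+1 < (m:ℝ)+2 := by
      have : (j:ℝ) ≤ (m:ℝ) := by exact_mod_cast hjm
      linarith
    have hba : ((m:ℝ)+2) - ((j:ℝ)+1) = ((m-j:ℕ):ℝ)+1 := by
      push_cast [hjm]
      ring
    have hps := pair_sum k hk ((j:ℝ)+1) ((m:ℝ)+2) ha hab
    rw [hba] at hps
    rw [← hps]
    apply Finset.sum_congr rfl
    intro s _
    rw [div_mul_div_comm, one_mul, mul_comm]
  -- step 2 : swap the s-sum inside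
  have step2 : ∑ s ∈ Finset.Icc 2 (k-1), ∑ m ∈ Finset.range N,
        (1/((m+2:ℝ))^s) * ∑ j ∈ Finset.range (m+1), 1/((j+1:ℝ))^(k-s)
      = ∑ m ∈ Finset.range N, ∑ j ∈ Finset.range (m+1),
          ∑ s ∈ Finset.Icc 2 (k-1), (1/((m+2:ℝ))^s) * (1/((j+1:ℝ))^(k-s)) := by
    rw [Finset.sum_comm]
    apply Finset.sum_congr rfl
    intro m _
    simp only [Finset.mul_sum]
    rw [Finset.sum_comm]
  rw [step2]
  have step3 : ∑ m ∈ Finset.range N, ∑ j ∈ Finset.range (m+1),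
        ∑ s ∈ Finset.Icc 2 (k-1), (1/((m+2:ℝ))^s) * (1/((j+1:ℝ))^(k-s))
      = (∑ m ∈ Finset.range N, ∑ j ∈ Finset.range (m+1),
            1/(((j+1:ℝ))^(k-1) * (((m-j:ℕ):ℝ)+1)))
        - (∑ m ∈ Finset.range N, ∑ j ∈ Finset.range (m+1),
            1/(((j+1:ℝ))^(k-1) * ((m:ℝ)+2)))
        - (∑ m ∈ Finset.range N, ∑ j ∈ Finset.range (m+1),
            1/(((((m-j:ℕ):ℝ))+1) * ((m+2:ℝ))^(k-1))) := by
    rw [← Finset.sum_sub_distrib, ← Finset.sum_sub_distrib]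
    apply Finset.sum_congr rfl
    intro m _
    rw [← Finset.sum_sub_distrib, ← Finset.sum_sub_distrib]
    apply Finset.sum_congr rfl
    intro j hj
    rw [Finset.mem_range] at hj
    exact step1 m j (by omega)
  rw [step3]
  -- compute A
  have hA : ∑ m ∈ Finset.range N, ∑ j ∈ Finset.range (m+1),
        1/(((j+1:ℝ))^(k-1) * (((m-j:ℕ):ℝ)+1))
      = ∑ j ∈ Finset.range N, Hh (N-j) * (1/((j+1:ℝ))^(k-1)) := by
    rw [tri_swap]
    apply Finset.sum_congr rfl
    intro j hj
    rw [Finset.sum_Ico_eq_sum_range]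
    rw [Hh, Finset.sum_mul]
    apply Finset.sum_congr rfl
    intro i _
    have : j + i - j = i := by omega
    rw [this]
    rw [one_div_mul_eq_div, div_div, mul_comm, ← div_div, div_eq_mul_one_div, mul_comm]
  -- compute B
  have hB : ∑ m ∈ Finset.range N, ∑ j ∈ Finset.range (m+1),
        1/(((j+1:ℝ))^(k-1) * ((m:ℝ)+2))
      = ∑ j ∈ Finset.range N, (Hh (N+1) - Hh (j+1)) * (1/((j+1:ℝ))^(k-1)) := by
    rw [tri_swap]
    apply Finset.sum_congr rfl
    intro j hj
    rw [Finset.mem_range] at hj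
    rw [← Ico_harm j N (by omega), Finset.sum_mul]
    apply Finset.sum_congr rfl
    intro m _
    rw [one_div_mul_eq_div, div_div, mul_comm, ← div_div, div_eq_mul_one_div, mul_comm]
  -- compute C
  have hC : ∑ m ∈ Finset.range N, ∑ j ∈ Finset.range (m+1),
        1/(((((m-j:ℕ):ℝ))+1) * ((m+2:ℝ))^(k-1))
      = ∑ m ∈ Finset.range (N+1), Hh m * (1/((m+1:ℝ))^(k-1)) := by
    rw [Finset.sum_range_succ' (fun m => Hh m * (1/((m+1:ℝ))^(k-1))) N]
    rw [Hh_zero, zero_mul, add_zero]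
    apply Finset.sum_congr rfl
    intro m _
    have hrefl : ∑ j ∈ Finset.range (m+1), 1/((((m-j:ℕ):ℝ))+1)
        = Hh (m+1) := by
      rw [Hh]
      rw [← Finset.sum_range_reflect (fun j => 1/((j:ℝ)+1)) (m+1)]
      apply Finset.sum_congr rfl
      intro j _
      have : m + 1 - 1 - j = m - j := by omega
      rw [this]
    rw [show (((m+1:ℕ)):ℝ)+1 = (m:ℝ)+2 by push_cast; ring]
    rw [← hrefl, Finset.sum_mul]
    apply Finset.sum_congr rfl
    intro j _
    rw [od]
  rw [hA, hB, hC]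
  have hA' : ∑ m ∈ Finset.range (N+1), Hh (N-m) * (1/((m+1:ℝ))^(k-1))
      = ∑ j ∈ Finset.range N, Hh (N-j) * (1/((j+1:ℝ))^(k-1)) := by
    rw [Finset.sum_range_succ, show N - N = 0 by omega, Hh_zero, zero_mul, add_zero]
  have hB' : ∑ m ∈ Finset.range (N+1), (Hh (N+1) - Hh (m+1)) * (1/((m+1:ℝ))^(k-1))
      = ∑ j ∈ Finset.range N, (Hh (N+1) - Hh (j+1)) * (1/((j+1:ℝ))^(k-1)) := by
    rw [Finset.sum_range_succ, sub_self, zero_mul, add_zero]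
  rw [← hA', ← hB', ← Finset.sum_sub_distrib, ← Finset.sum_sub_distrib,
    ← Finset.sum_sub_distrib]
  apply Finset.sum_congr rfl
  intro m _
  have hk1 : ((m:ℝ)+1)^k = ((m:ℝ)+1)^(k-1) * ((m:ℝ)+1) := by
    rw [← pow_succ]
    congr 1
    omega
  rw [Hh_succ m, hk1, od]
  ring
open Filter Finset Real



noncomputable def Er (k N : ℕ) : ℝ :=
  ∑ m ∈ Finset.range (N+1), (Hh (N+1) - Hh (N-m)) * (1/((m+1:ℝ))^(k-1))

lemma Er_nonneg (k N : ℕ) : 0 ≤ Er k N := by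
  apply Finset.sum_nonneg
  intro m _
  apply mul_nonneg
  · have := Hh_mono (show N - m ≤ N+1 by omega)
    linarith
  · positivity

lemma Er_le (k N : ℕ) (hk : 3 ≤ k) : Er k N ≤ 4 / Real.sqrt ((N:ℝ)+1) := by
  have stepa : ∀ m, m ≤ N → Hh (N+1) - Hh (N-m) ≤ ((m:ℝ)+1)/(((N-m:ℕ):ℝ)+1) := by
    intro m hm
    have hsplit : Hh (N-m) + ∑ t ∈ Finset.Ico (N-m) (N+1), 1/((t:ℝ)+1) = Hh (N+1) := by
      rw [Hh, Hh, Finset.range_eq_Ico, Finset.range_eq_Ico]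
      exact Finset.sum_Ico_consecutive (fun t : ℕ => 1/((t:ℝ)+1)) (m := 0) (n := N-m) (k := N+1) (by omega) (by omega)
    have hbound : ∑ t ∈ Finset.Ico (N-m) (N+1), 1/((t:ℝ)+1)
        ≤ ((m:ℝ)+1)/(((N-m:ℕ):ℝ)+1) := by
      calc ∑ t ∈ Finset.Ico (N-m) (N+1), 1/((t:ℝ)+1)
          ≤ ∑ t ∈ Finset.Ico (N-m) (N+1), 1/(((N-m:ℕ):ℝ)+1) := by
            apply Finset.sum_le_sum
            intro t ht
            rw [Finset.mem_Ico] at ht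
            apply one_div_le_one_div_of_le (by positivity)
            have : ((N-m:ℕ):ℝ) ≤ (t:ℝ) := by exact_mod_cast ht.1
            linarith
        _ = ((m:ℝ)+1)/(((N-m:ℕ):ℝ)+1) := by
            rw [Finset.sum_const, Nat.card_Ico]
            have : N + 1 - (N-m) = m+1 := by omega
            rw [this, nsmul_eq_mul]
            push_cast
            ring
    linarith
  have stepb : ∀ m, m ≤ N → (Hh (N+1) - Hh (N-m)) * (1/((m+1:ℝ))^(k-1))
      ≤ (1/((m:ℝ)+1)) * (1/(((N-m:ℕ):ℝ)+1)) := by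
    intro m hm
    have hXnn : 0 ≤ Hh (N+1) - Hh (N-m) := by
      have := Hh_mono (show N - m ≤ N+1 by omega)
      linarith
    have hA2 : ((m:ℝ)+1)^2 ≤ ((m:ℝ)+1)^(k-1) := by
      apply pow_le_pow_right₀ (by push_cast; linarith [Nat.cast_nonneg (α := ℝ) m]) (by omega)
    have hApos : (0:ℝ) < ((m:ℝ)+1)^(k-1) := by positivity
    have hd : (0:ℝ) < ((N-m:ℕ):ℝ)+1 := by positivity
    have hm1 : (0:ℝ) < (m:ℝ)+1 := by positivity
    calc (Hh (N+1) - Hh (N-m)) * (1/((m+1:ℝ))^(k-1))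
        ≤ (((m:ℝ)+1)/(((N-m:ℕ):ℝ)+1)) * (1/((m+1:ℝ))^(k-1)) := by
          apply mul_le_mul_of_nonneg_right (stepa m hm) (by positivity)
      _ ≤ (1/((m:ℝ)+1)) * (1/(((N-m:ℕ):ℝ)+1)) := by
          rw [div_mul_div_comm, mul_one, one_div_mul_one_div,
            div_le_div_iff₀ (by positivity) (by positivity)]
          nlinarith [hA2, hd, hm1]
  have stepc : ∑ m ∈ Finset.range (N+1), (1/((m:ℝ)+1)) * (1/(((N-m:ℕ):ℝ)+1))
      = (1/((N:ℝ)+2)) * (2 * Hh (N+1)) := by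
    have hterm : ∀ m ∈ Finset.range (N+1),
        (1/((m:ℝ)+1)) * (1/(((N-m:ℕ):ℝ)+1))
          = (1/((N:ℝ)+2)) * (1/((m:ℝ)+1) + 1/(((N-m:ℕ):ℝ)+1)) := by
      intro m hm
      rw [Finset.mem_range] at hm
      have hc : ((N-m:ℕ):ℝ) = (N:ℝ) - (m:ℝ) := by
        push_cast [Nat.cast_sub (show m ≤ N by omega)]
        ring
      rw [hc]
      have h1 : (0:ℝ) < (m:ℝ)+1 := by positivity
      have h2 : (0:ℝ) < (N:ℝ) - (m:ℝ) + 1 := by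
        have : (m:ℝ) ≤ (N:ℝ) := by exact_mod_cast (show m ≤ N by omega)
        linarith
      have h3 : (0:ℝ) < (N:ℝ)+2 := by positivity
      field_simp
      ring
    rw [Finset.sum_congr rfl hterm, ← Finset.mul_sum, Finset.sum_add_distrib]
    have hrefl : ∑ m ∈ Finset.range (N+1), 1/(((N-m:ℕ):ℝ)+1) = Hh (N+1) := by
      rw [Hh, ← Finset.sum_range_reflect (fun j => 1/((j:ℝ)+1)) (N+1)]
      apply Finset.sum_congr rfl
      intro j _
      have : N + 1 - 1 - j = N - j := by omega
      rw [this]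
    rw [hrefl]
    rw [show ∑ m ∈ Finset.range (N+1), 1/((m:ℝ)+1) = Hh (N+1) from rfl]
    ring
  have hEle : Er k N ≤ (1/((N:ℝ)+2)) * (2 * Hh (N+1)) := by
    rw [Er, ← stepc]
    apply Finset.sum_le_sum
    intro m hm
    rw [Finset.mem_range] at hm
    exact stepb m (by omega)
  have hsq : Real.sqrt ((N:ℝ)+1) * Real.sqrt ((N:ℝ)+1) = (N:ℝ)+1 :=
    Real.mul_self_sqrt (by positivity)
  have hsqpos : (0:ℝ) < Real.sqrt ((N:ℝ)+1) := by
    rw [Real.sqrt_pos]; positivity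
  have hH : Hh (N+1) ≤ 2 * Real.sqrt ((N:ℝ)+1) := by
    have := Hh_le_sqrt (N+1)
    have hc : (((N+1:ℕ)):ℝ) = (N:ℝ)+1 := by push_cast; ring
    rwa [hc] at this
  have hfinal : (1/((N:ℝ)+2)) * (2 * Hh (N+1)) ≤ 4 / Real.sqrt ((N:ℝ)+1) := by
    rw [one_div_mul_eq_div, div_le_div_iff₀ (by positivity) hsqpos]
    have hHnn := Hh_nonneg (N+1)
    nlinarith [hsq, hsqpos, hH]
  linarith

lemma Er_tendsto (k : ℕ) (hk : 3 ≤ k) :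
    Tendsto (fun N => Er k N) atTop (nhds 0) := by
  apply squeeze_zero (fun N => Er_nonneg k N) (fun N => Er_le k N hk)
  have h1 : Tendsto (fun N : ℕ => Real.sqrt ((N:ℝ)+1)) atTop atTop := by
    have hs : Tendsto Real.sqrt atTop atTop := by
      rw [tendsto_atTop_atTop]
      intro b
      refine ⟨max 0 (b^2), fun a ha => ?_⟩
      rcases le_or_gt b 0 with h|h
      · exact le_trans h (Real.sqrt_nonneg a)
      · have hba : b^2 ≤ a := le_trans (le_max_right _ _) ha
        calc b = Real.sqrt (b^2) := (Real.sqrt_sq h.le).symm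
          _ ≤ Real.sqrt a := Real.sqrt_le_sqrt hba
    apply hs.comp
    apply tendsto_atTop_add_const_right
    exact tendsto_natCast_atTop_atTop
  have h2 : Tendsto (fun N : ℕ => 4 / Real.sqrt ((N:ℝ)+1)) atTop (nhds 0) := by
    apply Tendsto.div_atTop tendsto_const_nhds h1
  exact h2

theorem euler_sum_formula (k : ℕ) (hk : 3 ≤ k) :
    ∑ s ∈ Finset.Icc 2 (k-1), dzeta (k-s) s = zeta k := by
  classical
  set f : ℕ → ℕ → ℝ := fun s N => ∑ m ∈ Finset.range N,
    (1/((m+2:ℝ))^s) * ∑ j ∈ Finset.range (m+1), 1/((j+1:ℝ))^(k-s) with hf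
  set P : ℕ → ℝ := fun N => ∑ m ∈ Finset.range N, 1/((m+1:ℝ))^k with hP
  have hPmono : Monotone P := by
    apply monotone_nat_of_le_succ
    intro n
    rw [hP]
    simp only
    rw [Finset.sum_range_succ]
    have : (0:ℝ) ≤ 1/((n+1:ℝ))^k := by positivity
    linarith
  have hPbdd : BddAbove (Set.range P) := by
    refine ⟨2, ?_⟩
    rintro x ⟨N, rfl⟩
    exact partial_zeta_le_two k N (by omega)
  have hPlim : Tendsto P atTop (nhds (⨆ N, P N)) := tendsto_atTop_ciSup hPmono hPbdd
  have hzeta : zeta k = ⨆ N, P N := by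
    rw [zeta, if_neg (by omega)]
    exact hPlim.limUnder_eq
  have hkey : ∀ N, ∑ s ∈ Finset.Icc 2 (k-1), f s N = P (N+1) - Er k N := by
    intro N
    rw [hf, hP, Er]
    exact key_identity k N hk
  have hfnonneg : ∀ s N, 0 ≤ f s N := by
    intro s N
    apply Finset.sum_nonneg
    intro m _
    apply mul_nonneg (by positivity)
    apply Finset.sum_nonneg
    intro j _
    positivity
  have hfbdd : ∀ s ∈ Finset.Icc 2 (k-1), ∀ N, f s N ≤ 2 := by
    intro s hs N
    have h1 : f s N ≤ ∑ t ∈ Finset.Icc 2 (k-1), f t N :=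
      Finset.single_le_sum (fun t _ => hfnonneg t N) hs
    have h2 := hkey N
    have h3 := Er_nonneg k N
    have h4 : P (N+1) ≤ 2 := partial_zeta_le_two k (N+1) (by omega)
    linarith
  have hfmono : ∀ s, Monotone (f s) := by
    intro s
    apply monotone_nat_of_le_succ
    intro n
    rw [hf]
    simp only
    rw [Finset.sum_range_succ]
    have h5 : (0:ℝ) ≤ (1/((n+2:ℝ))^s) * ∑ j ∈ Finset.range (n+1), 1/((j+1:ℝ))^(k-s) := by
      apply mul_nonneg (by positivity)
      apply Finset.sum_nonneg
      intro j _
      positivity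
    linarith
  have hflim : ∀ s ∈ Finset.Icc 2 (k-1),
      Tendsto (f s) atTop (nhds (⨆ N, f s N)) := by
    intro s hs
    apply tendsto_atTop_ciSup (hfmono s)
    refine ⟨2, ?_⟩
    rintro x ⟨N, rfl⟩
    exact hfbdd s hs N
  have hdz : ∀ s ∈ Finset.Icc 2 (k-1), dzeta (k-s) s = ⨆ N, f s N := by
    intro s hs
    rw [dzeta]
    exact (hflim s hs).limUnder_eq
  have h1 : Tendsto (fun N => ∑ s ∈ Finset.Icc 2 (k-1), f s N) atTop
      (nhds (∑ s ∈ Finset.Icc 2 (k-1), ⨆ N, f s N)) := by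
    apply tendsto_finset_sum
    intro s hs
    exact hflim s hs
  have h2 : Tendsto (fun N => P (N+1) - Er k N) atTop (nhds ((⨆ N, P N) - 0)) := by
    apply Tendsto.sub _ (Er_tendsto k hk)
    exact hPlim.comp (tendsto_add_atTop_nat 1)
  rw [funext hkey] at h1
  have huniq := tendsto_nhds_unique h1 h2
  rw [Finset.sum_congr rfl hdz, huniq, hzeta, sub_zero]
end
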